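/- arXiv:1512.02174 — 9 statements merged into one kernel-verified Lean document; each statement's English description precedes it below -/
import Mathlib

section
/- Let f: [-1,1] → ℝ and g: [-1,1] × [-1,1] → ℝ be k times continuously differentiable functions such that g(t,t) = 0 for every t ∈ [-1,1], and such that for every t ∈ [-1,1] and every j = 1,…,k the j-th derivative of f at t equals the j-th partial derivative of the map s ↦ g(s,t) evaluated at s = t. Then for every u ∈ (-1,1) and every j = 1,…,k, the j-th partial derivative of the map t ↦ g(u,t) evaluated at t = u equals minus the j-th partial derivative of the map s ↦ g(s,u) evaluated at s = u. -/
open Set Filter Topology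

/-! Auxiliary theory: iterated directional partial derivatives of a function on `ℝ × ℝ`,
indexed by words (lists) of direction vectors. -/

/-- Directional partial derivative in direction `v`. -/
noncomputable def pd (v : ℝ × ℝ) (h : ℝ × ℝ → ℝ) : ℝ × ℝ → ℝ :=
  fun p => fderiv ℝ h p v

/-- Iterated directional partial derivatives along a word of directions
(head is the outermost/last-applied derivative). -/
noncomputable def pdw : List (ℝ × ℝ) → (ℝ × ℝ → ℝ) → ℝ × ℝ → ℝ
  | [], h => h
  | v :: w, h => pd v (pdw w h)

lemma pd_contDiffOn {U : Set (ℝ × ℝ)} (hU : IsOpen U) {h : ℝ × ℝ → ℝ} {m : ℕ}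
    (hh : ContDiffOn ℝ (m + 1 : ℕ) h U) (v : ℝ × ℝ) :
    ContDiffOn ℝ (m : ℕ) (pd v h) U := by
  have h1 : ContDiffOn ℝ (m : ℕ) (fderiv ℝ h) U :=
    hh.fderiv_of_isOpen hU (by push_cast; exact le_rfl)
  exact h1.clm_apply contDiffOn_const

lemma pdw_contDiffOn {U : Set (ℝ × ℝ)} (hU : IsOpen U) {h : ℝ × ℝ → ℝ} {k : ℕ}
    (hh : ContDiffOn ℝ (k : ℕ) h U) :
    ∀ w : List (ℝ × ℝ), w.length ≤ k → ContDiffOn ℝ ((k - w.length : ℕ)) (pdw w h) U := by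
  intro w
  induction w with
  | nil => intro _; simpa [pdw] using hh
  | cons v w ih =>
    intro hlen
    have hlen' : w.length ≤ k := by simp at hlen; omega
    have h1 := ih hlen'
    have heq : k - w.length = (k - (v :: w).length) + 1 := by
      simp only [List.length_cons] at hlen ⊢; omega
    rw [heq] at h1
    exact pd_contDiffOn hU h1 v

lemma pdw_differentiableAt {U : Set (ℝ × ℝ)} (hU : IsOpen U) {h : ℝ × ℝ → ℝ} {k : ℕ}
    (hh : ContDiffOn ℝ (k : ℕ) h U) {w : List (ℝ × ℝ)} (hw : w.length < k)
    {p : ℝ × ℝ} (hp : p ∈ U) : DifferentiableAt ℝ (pdw w h) p := by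
  have h1 := pdw_contDiffOn hU hh w hw.le
  have h2 : (1 : WithTop ℕ∞) ≤ ((k - w.length : ℕ) : WithTop ℕ∞) := by
    have h3 : 1 ≤ k - w.length := by omega
    exact_mod_cast h3
  exact ((h1.of_le h2).differentiableOn one_ne_zero).differentiableAt (hU.mem_nhds hp)

lemma hasDerivAt_slice1 {h : ℝ × ℝ → ℝ} {a b : ℝ} (hd : DifferentiableAt ℝ h (a, b)) :
    HasDerivAt (fun s => h (s, b)) (pd (1, 0) h (a, b)) a := by
  have H1 : HasFDerivAt (fun s : ℝ => (s, b))
      ((ContinuousLinearMap.id ℝ ℝ).prod (0 : ℝ →L[ℝ] ℝ)) a :=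
    HasFDerivAt.prodMk (hasFDerivAt_id a) (hasFDerivAt_const b a)
  have H := (hd.hasFDerivAt.comp a H1).hasDerivAt
  simpa [pd, Function.comp_def] using H

lemma hasDerivAt_slice2 {h : ℝ × ℝ → ℝ} {a b : ℝ} (hd : DifferentiableAt ℝ h (a, b)) :
    HasDerivAt (fun t => h (a, t)) (pd (0, 1) h (a, b)) b := by
  have H1 : HasFDerivAt (fun t : ℝ => (a, t))
      ((0 : ℝ →L[ℝ] ℝ).prod (ContinuousLinearMap.id ℝ ℝ)) b :=
    HasFDerivAt.prodMk (hasFDerivAt_const a b) (hasFDerivAt_id b)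
  have H := (hd.hasFDerivAt.comp b H1).hasDerivAt
  simpa [pd, Function.comp_def] using H

lemma hasDerivAt_diag {h : ℝ × ℝ → ℝ} {a : ℝ} (hd : DifferentiableAt ℝ h (a, a)) :
    HasDerivAt (fun t => h (t, t)) (pd (1, 0) h (a, a) + pd (0, 1) h (a, a)) a := by
  have H1 : HasFDerivAt (fun s : ℝ => (s, s))
      ((ContinuousLinearMap.id ℝ ℝ).prod (ContinuousLinearMap.id ℝ ℝ)) a :=
    HasFDerivAt.prodMk (hasFDerivAt_id a) (hasFDerivAt_id a)
  have H := (hd.hasFDerivAt.comp (f := fun s : ℝ => (s, s)) a H1).hasDerivAt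
  have e : fderiv ℝ h (a, a) (1, 1) = pd (1, 0) h (a, a) + pd (0, 1) h (a, a) := by
    rw [show ((1 : ℝ), (1 : ℝ)) = ((1 : ℝ), (0 : ℝ)) + ((0 : ℝ), (1 : ℝ)) by norm_num]
    rw [map_add]; rfl
  rw [← e]
  simpa [Function.comp_def] using H

/-- Schwarz symmetry for the scalar directional partial derivatives. -/
lemma pd_comm {U : Set (ℝ × ℝ)} (hU : IsOpen U) {h : ℝ × ℝ → ℝ}
    (hh : ContDiffOn ℝ 2 h U) {p : ℝ × ℝ} (hp : p ∈ U) (v w : ℝ × ℝ) :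
    pd v (pd w h) p = pd w (pd v h) p := by
  have hd : DifferentiableAt ℝ (fderiv ℝ h) p := by
    have h1 : ContDiffOn ℝ 1 (fderiv ℝ h) U := hh.fderiv_of_isOpen hU (by norm_num)
    exact (h1.differentiableOn one_ne_zero).differentiableAt (hU.mem_nhds hp)
  have key : ∀ z : ℝ × ℝ, fderiv ℝ (fun q => fderiv ℝ h q z) p
      = (fderiv ℝ (fderiv ℝ h) p).flip z := by
    intro z
    rw [fderiv_clm_apply hd (differentiableAt_const z)]
    simp
  have hsymm : IsSymmSndFDerivAt ℝ h p :=
    (hh.contDiffAt (hU.mem_nhds hp)).isSymmSndFDerivAt (by simp)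
  show fderiv ℝ (fun q => fderiv ℝ h q w) p v = fderiv ℝ (fun q => fderiv ℝ h q v) p w
  rw [key w, key v]
  exact hsymm v w

lemma pdw_congr {U : Set (ℝ × ℝ)} (hU : IsOpen U) {h1 h2 : ℝ × ℝ → ℝ}
    (hE : ∀ p ∈ U, h1 p = h2 p) :
    ∀ w : List (ℝ × ℝ), ∀ p ∈ U, pdw w h1 p = pdw w h2 p := by
  intro w
  induction w with
  | nil => exact hE
  | cons v w ih =>
    intro p hp
    show fderiv ℝ (pdw w h1) p v = fderiv ℝ (pdw w h2) p v
    have hev : pdw w h1 =ᶠ[𝓝 p] pdw w h2 := by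
      filter_upwards [hU.mem_nhds hp] with q hq
      exact ih q hq
    rw [hev.fderiv_eq]

/-- Permuting the word of directions does not change the iterated partial derivative. -/
lemma pdw_perm {U : Set (ℝ × ℝ)} (hU : IsOpen U) {h : ℝ × ℝ → ℝ} {k : ℕ}
    (hh : ContDiffOn ℝ (k : ℕ) h U) :
    ∀ {w w' : List (ℝ × ℝ)}, w.Perm w' → w.length ≤ k →
      ∀ p ∈ U, pdw w h p = pdw w' h p := by
  intro w w' hperm
  induction hperm with
  | nil => intro _ p _; rfl
  | @cons x l₁ l₂ hl ih =>
    intro hlen p hp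
    have hlen' : l₁.length ≤ k := by simp at hlen; omega
    show fderiv ℝ (pdw l₁ h) p x = fderiv ℝ (pdw l₂ h) p x
    have hev : pdw l₁ h =ᶠ[𝓝 p] pdw l₂ h := by
      filter_upwards [hU.mem_nhds hp] with q hq
      exact ih hlen' q hq
    rw [hev.fderiv_eq]
  | swap x y l =>
    intro hlen p hp
    have hlen' : l.length + 2 ≤ k := by simp at hlen; omega
    have h2 : ContDiffOn ℝ 2 (pdw l h) U := by
      have h3 := pdw_contDiffOn hU hh l (by omega)
      refine h3.of_le ?_
      have h4 : 2 ≤ k - l.length := by omega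
      exact_mod_cast h4
    exact pd_comm hU h2 hp y x
  | trans hab hbc ih1 ih2 =>
    intro hlen p hp
    rw [ih1 hlen p hp, ih2 (by rw [← hab.length_eq]; exact hlen) p hp]

lemma iteratedDeriv_slice1 {U : Set (ℝ × ℝ)} (hU : IsOpen U) {h : ℝ × ℝ → ℝ} {k : ℕ}
    (hh : ContDiffOn ℝ (k : ℕ) h U) :
    ∀ n : ℕ, n ≤ k → ∀ a b : ℝ, (a, b) ∈ U →
      iteratedDeriv n (fun s => h (s, b)) a
        = pdw (List.replicate n ((1 : ℝ), (0 : ℝ))) h (a, b) := by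
  intro n
  induction n with
  | zero => intro _ a b _; simp [pdw]
  | succ n ih =>
    intro hn a b hab
    rw [iteratedDeriv_succ]
    have hO : IsOpen ((fun s : ℝ => (s, b)) ⁻¹' U) :=
      hU.preimage (continuous_id.prodMk continuous_const)
    have hev : iteratedDeriv n (fun s => h (s, b)) =ᶠ[𝓝 a]
        fun s => pdw (List.replicate n ((1 : ℝ), (0 : ℝ))) h (s, b) := by
      filter_upwards [hO.mem_nhds hab] with s hs
      exact ih (by omega) s b hs
    rw [hev.deriv_eq]
    have hdiff : DifferentiableAt ℝ (pdw (List.replicate n ((1 : ℝ), (0 : ℝ))) h) (a, b) :=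
      pdw_differentiableAt hU hh (by simp; omega) hab
    rw [List.replicate_succ]
    exact (hasDerivAt_slice1 hdiff).deriv

lemma iteratedDeriv_slice2 {U : Set (ℝ × ℝ)} (hU : IsOpen U) {h : ℝ × ℝ → ℝ} {k : ℕ}
    (hh : ContDiffOn ℝ (k : ℕ) h U) :
    ∀ n : ℕ, n ≤ k → ∀ a b : ℝ, (a, b) ∈ U →
      iteratedDeriv n (fun t => h (a, t)) b
        = pdw (List.replicate n ((0 : ℝ), (1 : ℝ))) h (a, b) := by
  intro n
  induction n with
  | zero => intro _ a b _; simp [pdw]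
  | succ n ih =>
    intro hn a b hab
    rw [iteratedDeriv_succ]
    have hO : IsOpen ((fun t : ℝ => (a, t)) ⁻¹' U) :=
      hU.preimage (continuous_const.prodMk continuous_id)
    have hev : iteratedDeriv n (fun t => h (a, t)) =ᶠ[𝓝 b]
        fun t => pdw (List.replicate n ((0 : ℝ), (1 : ℝ))) h (a, t) := by
      filter_upwards [hO.mem_nhds hab] with t ht
      exact ih (by omega) a t ht
    rw [hev.deriv_eq]
    have hdiff : DifferentiableAt ℝ (pdw (List.replicate n ((0 : ℝ), (1 : ℝ))) h) (a, b) :=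
      pdw_differentiableAt hU hh (by simp; omega) hab
    rw [List.replicate_succ]
    exact (hasDerivAt_slice2 hdiff).deriv

/-- Differentiating an iterated partial derivative along the diagonal. -/
lemma deriv_diag {U : Set (ℝ × ℝ)} (hU : IsOpen U) {k : ℕ} {h : ℝ × ℝ → ℝ}
    (hh : ContDiffOn ℝ (k : ℕ) h U) {w : List (ℝ × ℝ)} (hw : w.length < k)
    {ψ : ℝ → ℝ} {V : Set ℝ} (hV : IsOpen V) (hdV : ∀ s ∈ V, ((s, s) : ℝ × ℝ) ∈ U)
    (hψ : ∀ s ∈ V, pdw w h (s, s) = ψ s) {t : ℝ} (ht : t ∈ V) :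
    deriv ψ t = pdw (((1 : ℝ), (0 : ℝ)) :: w) h (t, t)
      + pdw (((0 : ℝ), (1 : ℝ)) :: w) h (t, t) := by
  have hev : ψ =ᶠ[𝓝 t] fun s => pdw w h (s, s) := by
    filter_upwards [hV.mem_nhds ht] with s hs
    exact (hψ s hs).symm
  rw [hev.deriv_eq]
  exact (hasDerivAt_diag (pdw_differentiableAt hU hh hw (hdV t ht))).deriv

lemma iteratedDerivWithin_Icc_of_mem_Ioo (φ : ℝ → ℝ) {t : ℝ} (ht : t ∈ Ioo (-1 : ℝ) 1)
    (j : ℕ) : iteratedDerivWithin j φ (Icc (-1) 1) t = iteratedDeriv j φ t := by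
  rw [← iteratedDerivWithin_univ]
  simp only [iteratedDerivWithin_eq_iteratedFDerivWithin]
  congr 1
  exact iteratedFDerivWithin_congr_set
    (Filter.eventuallyEq_univ.mpr (Icc_mem_nhds ht.1 ht.2)) j

/-- **Lemma (Taylor expansion / influence function identity).**
If `f : [-1,1] → ℝ` and `g : [-1,1]² → ℝ` are `k` times continuously differentiable,
`g(t,t) = 0` for all `t`, and for every `t ∈ [-1,1]` and `j = 1,…,k` the `j`-th derivative
of `f` at `t` equals the `j`-th partial derivative of `s ↦ g(s,t)` at `s = t`, then for
every `u ∈ (-1,1)` and `j = 1,…,k` the `j`-th partial derivative of `t ↦ g(u,t)` at `t = u`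
equals minus the `j`-th partial derivative of `s ↦ g(s,u)` at `s = u`. -/
theorem higher_order_derivative_antisymmetry
    (k : ℕ) (f : ℝ → ℝ) (g : ℝ → ℝ → ℝ)
    (hf : ContDiffOn ℝ k f (Icc (-1) 1))
    (hg : ContDiffOn ℝ k (fun p : ℝ × ℝ => g p.1 p.2) (Icc (-1) 1 ×ˢ Icc (-1) 1))
    (hdiag : ∀ t ∈ Icc (-1 : ℝ) 1, g t t = 0)
    (hder : ∀ t ∈ Icc (-1 : ℝ) 1, ∀ j : ℕ, 1 ≤ j → j ≤ k →
      iteratedDerivWithin j f (Icc (-1) 1) t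
        = iteratedDerivWithin j (fun s => g s t) (Icc (-1) 1) t) :
    ∀ u ∈ Ioo (-1 : ℝ) 1, ∀ j : ℕ, 1 ≤ j → j ≤ k →
      iteratedDerivWithin j (fun t => g u t) (Icc (-1) 1) u
        = - iteratedDerivWithin j (fun s => g s u) (Icc (-1) 1) u := by
  intro u hu j hj1 hjk
  have hUopen : IsOpen (Ioo (-1 : ℝ) 1 ×ˢ Ioo (-1 : ℝ) 1) := isOpen_Ioo.prod isOpen_Ioo
  have hsub : Ioo (-1 : ℝ) 1 ×ˢ Ioo (-1 : ℝ) 1 ⊆ Icc (-1 : ℝ) 1 ×ˢ Icc (-1 : ℝ) 1 :=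
    prod_mono Ioo_subset_Icc_self Ioo_subset_Icc_self
  have hG : ContDiffOn ℝ (k : ℕ) (fun p : ℝ × ℝ => g p.1 p.2)
      (Ioo (-1 : ℝ) 1 ×ˢ Ioo (-1 : ℝ) 1) := hg.mono hsub
  have hmem : ∀ t ∈ Ioo (-1 : ℝ) 1, ((t, t) : ℝ × ℝ) ∈ Ioo (-1 : ℝ) 1 ×ˢ Ioo (-1 : ℝ) 1 :=
    fun t ht => ⟨ht, ht⟩
  -- Fact A : pure first-variable partials on the diagonal are derivatives of f
  have A : ∀ n : ℕ, 1 ≤ n → n ≤ k → ∀ t ∈ Ioo (-1 : ℝ) 1,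
      pdw (List.replicate n ((1 : ℝ), (0 : ℝ))) (fun p : ℝ × ℝ => g p.1 p.2) (t, t) = iteratedDeriv n f t := by
    intro n h1 hn t ht
    have h2 := hder t (Ioo_subset_Icc_self ht) n h1 hn
    rw [iteratedDerivWithin_Icc_of_mem_Ioo f ht n,
      iteratedDerivWithin_Icc_of_mem_Ioo _ ht n] at h2
    have h3 := iteratedDeriv_slice1 hUopen hG n hn t t (hmem t ht)
    rw [← h3, ← h2]
  -- Fact Z : the diagonal vanishes
  have Z : ∀ t ∈ Ioo (-1 : ℝ) 1,
      pdw [] (fun p : ℝ × ℝ => g p.1 p.2) (t, t) = (0 : ℝ) := by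
    intro t ht
    exact hdiag t (Ioo_subset_Icc_self ht)
  -- Claim C : mixed partials (with at least one of each direction) vanish on the diagonal
  have C : ∀ m : ℕ, ∀ n : ℕ, 1 ≤ n → (m + 1) + n ≤ k → ∀ t ∈ Ioo (-1 : ℝ) 1,
      pdw (List.replicate (m + 1) ((0 : ℝ), (1 : ℝ)) ++ List.replicate n ((1 : ℝ), (0 : ℝ)))
        (fun p : ℝ × ℝ => g p.1 p.2) (t, t) = 0 := by
    intro m
    induction m with
    | zero =>
      intro n h1 hnk t ht
      have hd := deriv_diag hUopen hG (w := List.replicate n ((1 : ℝ), (0 : ℝ)))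
        (by simp; omega) isOpen_Ioo hmem (fun s hs => A n h1 (by omega) s hs) ht
      have hd2 : deriv (iteratedDeriv n f) t = iteratedDeriv (n + 1) f t := by
        rw [iteratedDeriv_succ]
      have hA := A (n + 1) (by omega) (by omega) t ht
      rw [List.replicate_succ] at hA
      simp only [zero_add, List.replicate_one, List.singleton_append]
      linarith [hd, hd2, hA]
    | succ m ih =>
      intro n h1 hnk t ht
      have hw0 : ∀ s ∈ Ioo (-1 : ℝ) 1,
          pdw (List.replicate (m + 1) ((0 : ℝ), (1 : ℝ)) ++ List.replicate n ((1 : ℝ), (0 : ℝ)))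
            (fun p : ℝ × ℝ => g p.1 p.2) (s, s) = (fun _ : ℝ => (0 : ℝ)) s :=
        fun s hs => ih n h1 (by omega) s hs
      have hd := deriv_diag hUopen hG
        (w := List.replicate (m + 1) ((0 : ℝ), (1 : ℝ)) ++ List.replicate n ((1 : ℝ), (0 : ℝ)))
        (by simp; omega) isOpen_Ioo hmem hw0 ht
      rw [deriv_const] at hd
      -- the term with a leading ((1 : ℝ), (0 : ℝ)) vanishes, by permuting it past the ((0 : ℝ), (1 : ℝ))'s
      have hperm : (((1 : ℝ), (0 : ℝ)) :: (List.replicate (m + 1) ((0 : ℝ), (1 : ℝ)) ++ List.replicate n ((1 : ℝ), (0 : ℝ)))).Perm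
          (List.replicate (m + 1) ((0 : ℝ), (1 : ℝ)) ++ List.replicate (n + 1) ((1 : ℝ), (0 : ℝ))) := by
        rw [List.replicate_succ (n := n)]
        exact List.perm_middle.symm
      have hlen : (((1 : ℝ), (0 : ℝ)) :: (List.replicate (m + 1) ((0 : ℝ), (1 : ℝ)) ++ List.replicate n ((1 : ℝ), (0 : ℝ)))).length ≤ k := by
        simp; omega
      have h5 := pdw_perm hUopen hG hperm hlen (t, t) (hmem t ht)
      have h6 := ih (n + 1) (by omega) (by omega) t ht
      rw [h5, h6] at hd
      -- now hd : 0 = 0 + pdw (e2 :: (replicate (m+1) ((0 : ℝ), (1 : ℝ)) ++ replicate n ((1 : ℝ), (0 : ℝ)))) ...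
      have h7 : (List.replicate (m + 1 + 1) ((0 : ℝ), (1 : ℝ)) ++ List.replicate n ((1 : ℝ), (0 : ℝ)))
          = ((0 : ℝ), (1 : ℝ)) :: (List.replicate (m + 1) ((0 : ℝ), (1 : ℝ)) ++ List.replicate n ((1 : ℝ), (0 : ℝ))) := by
        rw [List.replicate_succ (n := m + 1)]; simp
      rw [h7]
      linarith [hd]
  -- Claim D : pure second-variable partials on the diagonal are minus derivatives of f
  have D : ∀ m : ℕ, m + 1 ≤ k → ∀ t ∈ Ioo (-1 : ℝ) 1,
      pdw (List.replicate (m + 1) ((0 : ℝ), (1 : ℝ))) (fun p : ℝ × ℝ => g p.1 p.2) (t, t)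
        = - iteratedDeriv (m + 1) f t := by
    intro m
    induction m with
    | zero =>
      intro hk t ht
      have hw0 : ∀ s ∈ Ioo (-1 : ℝ) 1,
          pdw [] (fun p : ℝ × ℝ => g p.1 p.2) (s, s) = (fun _ : ℝ => (0 : ℝ)) s :=
        fun s hs => Z s hs
      have hd := deriv_diag hUopen hG (w := ([] : List (ℝ × ℝ)))
        (by simp; omega) isOpen_Ioo hmem hw0 ht
      rw [deriv_const] at hd
      have hA := A 1 le_rfl hk t ht
      simp only [zero_add, List.replicate_one] at hA ⊢
      linarith [hd, hA]
    | succ m ih =>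
      intro hk t ht
      have hψ : ∀ s ∈ Ioo (-1 : ℝ) 1,
          pdw (List.replicate (m + 1) ((0 : ℝ), (1 : ℝ))) (fun p : ℝ × ℝ => g p.1 p.2) (s, s)
            = (fun r : ℝ => - iteratedDeriv (m + 1) f r) s :=
        fun s hs => ih (by omega) s hs
      have hd := deriv_diag hUopen hG (w := List.replicate (m + 1) ((0 : ℝ), (1 : ℝ)))
        (by simp; omega) isOpen_Ioo hmem hψ ht
      have hd2 : deriv (fun r : ℝ => - iteratedDeriv (m + 1) f r) t
          = - iteratedDeriv (m + 2) f t := by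
        rw [deriv.fun_neg, ← iteratedDeriv_succ]
      -- the term with a leading ((1 : ℝ), (0 : ℝ)) vanishes
      have hperm : (((1 : ℝ), (0 : ℝ)) :: List.replicate (m + 1) ((0 : ℝ), (1 : ℝ))).Perm
          (List.replicate (m + 1) ((0 : ℝ), (1 : ℝ)) ++ List.replicate 1 ((1 : ℝ), (0 : ℝ))) := by
        have := (List.perm_middle (a := ((1 : ℝ), (0 : ℝ))) (l₁ := List.replicate (m + 1) ((0 : ℝ), (1 : ℝ)))
          (l₂ := ([] : List (ℝ × ℝ)))).symm
        simpa using this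
      have hlen : (((1 : ℝ), (0 : ℝ)) :: List.replicate (m + 1) ((0 : ℝ), (1 : ℝ))).length ≤ k := by simp; omega
      have h5 := pdw_perm hUopen hG hperm hlen (t, t) (hmem t ht)
      have h6 := C m 1 le_rfl (by omega) t ht
      rw [h5, h6] at hd
      rw [hd2] at hd
      have h7 : (List.replicate (m + 1 + 1) ((0 : ℝ), (1 : ℝ)))
          = ((0 : ℝ), (1 : ℝ)) :: List.replicate (m + 1) ((0 : ℝ), (1 : ℝ)) := by
        rw [List.replicate_succ]
      rw [h7, show m + 1 + 1 = m + 2 from rfl]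
      linarith [hd]
  -- Assemble the final statement
  obtain ⟨m, rfl⟩ : ∃ m, j = m + 1 := ⟨j - 1, by omega⟩
  have hL : iteratedDerivWithin (m + 1) (fun t => g u t) (Icc (-1) 1) u
      = - iteratedDeriv (m + 1) f u := by
    rw [iteratedDerivWithin_Icc_of_mem_Ioo _ hu]
    have h8 := iteratedDeriv_slice2 hUopen hG (m + 1) hjk u u (hmem u hu)
    rw [show (fun t => g u t) = (fun t => (fun p : ℝ × ℝ => g p.1 p.2) (u, t)) from rfl]
    rw [h8]
    exact D m hjk u hu
  have hR : iteratedDerivWithin (m + 1) (fun s => g s u) (Icc (-1) 1) u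
      = iteratedDeriv (m + 1) f u := by
    rw [iteratedDerivWithin_Icc_of_mem_Ioo _ hu]
    have h9 := iteratedDeriv_slice1 hUopen hG (m + 1) hjk u u (hmem u hu)
    rw [show (fun s => g s u) = (fun s => (fun p : ℝ × ℝ => g p.1 p.2) (s, u)) from rfl]
    rw [h9]
    exact A (m + 1) hj1 hjk u hu
  rw [hL, hR]
end

section
/- Let μ be a σ-finite measure on a measurable space X, let L be a finite-dimensional subspace of L_2(μ) with basis e_1,…,e_k, and let v and w be measurable weight functions bounded away from 0 and ∞. Let Π_v and Π_w be the kernels of the weighted projections in L_2(μ) onto L with weights v and w respectively, given by Π_v(x,y) = Σ_{i,j} (C_v^{-1})_{ij} e_i(x) e_j(y) with (C_v)_{ij} = ∫ e_i e_j v dμ, and analogously for Π_w. Then for every x, Π_v(x,x) ≤ ‖w/v‖_∞ · Π_w(x,x), where ‖w/v‖_∞ = sup_x (w/v)(x). -/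
open MeasureTheory Matrix

section Aux

variable {X : Type*} [MeasurableSpace X] {μ : Measure X} {k : ℕ} {e : Fin k → X → ℝ}

private lemma aux_int (hem : ∀ i, Measurable (e i)) (heL2 : ∀ i, MemLp (e i) 2 μ)
    {u : X → ℝ} (hum : Measurable u) {C : ℝ} (hub : ∀ x, |u x| ≤ C) (i j : Fin k) :
    Integrable (fun x => e i x * e j x * u x) μ := by
  have h1 : Integrable (fun x => e i x * e j x) μ := by
    refine Integrable.mono' (((heL2 i).integrable_sq.add (heL2 j).integrable_sq).div_const 2)
      (((hem i).mul (hem j)).aestronglyMeasurable) ?_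
    filter_upwards with x
    simp only [Pi.add_apply, Pi.div_apply]
    rw [Real.norm_eq_abs, abs_mul]
    nlinarith [sq_nonneg (|e i x| - |e j x|), sq_abs (e i x), sq_abs (e j x),
      abs_nonneg (e i x), abs_nonneg (e j x)]
  have h2 := h1.bdd_mul hum.aestronglyMeasurable
    (Filter.Eventually.of_forall fun x => by rw [Real.norm_eq_abs]; exact hub x)
  exact h2.congr (Filter.Eventually.of_forall fun x => mul_comm _ _)

private lemma aux_int2 (hem : ∀ i, Measurable (e i)) (heL2 : ∀ i, MemLp (e i) 2 μ)
    {u : X → ℝ} (hum : Measurable u) {C : ℝ} (hub : ∀ x, |u x| ≤ C) (c : Fin k → ℝ) :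
    Integrable (fun x => (∑ i, c i * e i x) ^ 2 * u x) μ := by
  have hf2 : MemLp (fun x => ∑ i, c i * e i x) 2 μ :=
    memLp_finset_sum _ fun i _ => (heL2 i).const_mul (c i)
  have h2 := hf2.integrable_sq.bdd_mul hum.aestronglyMeasurable
    (Filter.Eventually.of_forall fun x => by rw [Real.norm_eq_abs]; exact hub x)
  exact h2.congr (Filter.Eventually.of_forall fun x => mul_comm _ _)

private lemma aux_quad (hem : ∀ i, Measurable (e i)) (heL2 : ∀ i, MemLp (e i) 2 μ)
    {u : X → ℝ} (hum : Measurable u) {C : ℝ} (hub : ∀ x, |u x| ≤ C)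
    (M : Matrix (Fin k) (Fin k) ℝ) (hM : ∀ i j, M i j = ∫ x, e i x * e j x * u x ∂μ)
    (c : Fin k → ℝ) :
    c ⬝ᵥ (M *ᵥ c) = ∫ x, (∑ i, c i * e i x) ^ 2 * u x ∂μ := by
  have hint : ∀ i j : Fin k, Integrable (fun x => c i * c j * (e i x * e j x * u x)) μ :=
    fun i j => (aux_int hem heL2 hum hub i j).const_mul _
  have key : c ⬝ᵥ (M *ᵥ c) = ∑ i, ∑ j, ∫ x, c i * c j * (e i x * e j x * u x) ∂μ := by
    simp only [dotProduct, Matrix.mulVec, Finset.mul_sum]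
    refine Finset.sum_congr rfl fun i _ => Finset.sum_congr rfl fun j _ => ?_
    rw [integral_const_mul, hM]
    ring
  rw [key]
  have swap : (∑ i, ∑ j, ∫ x, c i * c j * (e i x * e j x * u x) ∂μ)
      = ∫ x, ∑ i, ∑ j, c i * c j * (e i x * e j x * u x) ∂μ := by
    rw [integral_finset_sum _ fun i _ => integrable_finset_sum _ fun j _ => hint i j]
    exact Finset.sum_congr rfl fun i _ =>
      (integral_finset_sum _ fun j _ => hint i j).symm
  rw [swap]
  congr 1
  funext x
  rw [sq, Finset.sum_mul_sum, Finset.sum_mul]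
  refine Finset.sum_congr rfl fun i _ => ?_
  rw [Finset.sum_mul]
  exact Finset.sum_congr rfl fun j _ => by ring

private lemma aux_posdef (hem : ∀ i, Measurable (e i)) (heL2 : ∀ i, MemLp (e i) 2 μ)
    (hind : ∀ c : Fin k → ℝ, (∀ᵐ x ∂μ, ∑ i, c i * e i x = 0) → c = 0)
    {u : X → ℝ} (hum : Measurable u) {c0 C0 : ℝ} (hc0 : 0 < c0)
    (hub : ∀ x, c0 ≤ u x ∧ u x ≤ C0)
    (M : Matrix (Fin k) (Fin k) ℝ) (hM : ∀ i j, M i j = ∫ x, e i x * e j x * u x ∂μ) :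
    M.PosDef := by
  have habs : ∀ x, |u x| ≤ C0 := fun x =>
    abs_le.mpr ⟨by linarith [(hub x).1, (hub x).2], (hub x).2⟩
  refine Matrix.PosDef.of_dotProduct_mulVec_pos ?_ ?_
  · ext i j
    simp only [Matrix.conjTranspose_apply, star_trivial]
    rw [hM j i, hM i j]
    exact integral_congr_ae (Filter.Eventually.of_forall fun x => by ring)
  · intro c hc
    have hsc : star c = c := funext fun i => star_trivial _
    rw [hsc, aux_quad hem heL2 hum habs M hM c]
    have hnn : ∀ x, 0 ≤ (∑ i, c i * e i x) ^ 2 * u x := fun x =>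
      mul_nonneg (sq_nonneg _) (le_trans hc0.le (hub x).1)
    rcases lt_or_eq_of_le (integral_nonneg (f := fun x => (∑ i, c i * e i x) ^ 2 * u x) hnn) with h | h
    · exact h
    exfalso
    have h0 := (integral_eq_zero_iff_of_nonneg hnn
      (aux_int2 hem heL2 hum habs c)).mp h.symm
    have hz : ∀ᵐ x ∂μ, ∑ i, c i * e i x = 0 := by
      filter_upwards [h0] with x hx
      simp only [Pi.zero_apply] at hx
      have hu : u x ≠ 0 := ne_of_gt (lt_of_lt_of_le hc0 (hub x).1)
      rcases mul_eq_zero.mp hx with h' | h'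
      · exact pow_eq_zero_iff (two_ne_zero) |>.mp h'
      · exact absurd h' hu
    exact hc (hind c hz)

end Aux

/-- **Lemma (comparison of diagonals of weighted projection kernels).**
Let `L` be spanned by linearly independent `e 1, …, e k ∈ L₂(μ)` and let `v, w` be weights
bounded away from `0` and `∞`. Then the Gram matrices `Cv, Cw` are invertible and the
kernels `Π_v(x,y) = Σᵢⱼ (Cv⁻¹)ᵢⱼ eᵢ(x) eⱼ(y)` and `Π_w` of the weighted projections onto
`L` satisfy `Π_v(x,x) ≤ ‖w/v‖_∞ · Π_w(x,x)` for every `x` (`B` being any bound on `w/v`). -/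
theorem weighted_projection_kernels_diagonal_comparison
    {X : Type*} [MeasurableSpace X] (μ : Measure X) [SigmaFinite μ]
    (k : ℕ) (e : Fin k → X → ℝ)
    (hem : ∀ i, Measurable (e i)) (heL2 : ∀ i, MemLp (e i) 2 μ)
    (hind : ∀ c : Fin k → ℝ, (∀ᵐ x ∂μ, ∑ i, c i * e i x = 0) → c = 0)
    (v w : X → ℝ) (hvm : Measurable v) (hwm : Measurable w)
    (hv : ∃ c C : ℝ, 0 < c ∧ ∀ x, c ≤ v x ∧ v x ≤ C)
    (hw : ∃ c C : ℝ, 0 < c ∧ ∀ x, c ≤ w x ∧ w x ≤ C)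
    (Cv Cw : Matrix (Fin k) (Fin k) ℝ)
    (hCv : ∀ i j, Cv i j = ∫ x, e i x * e j x * v x ∂μ)
    (hCw : ∀ i j, Cw i j = ∫ x, e i x * e j x * w x ∂μ)
    (B : ℝ) (hB : ∀ x, w x / v x ≤ B) :
    Cv.det ≠ 0 ∧ Cw.det ≠ 0 ∧
      ∀ x, (∑ i, ∑ j, Cv⁻¹ i j * e i x * e j x)
        ≤ B * ∑ i, ∑ j, Cw⁻¹ i j * e i x * e j x := by
  obtain ⟨cv, Cvb, hcv, hvb⟩ := hv
  obtain ⟨cw, Cwb, hcw, hwb⟩ := hw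
  have hvabs : ∀ x, |v x| ≤ Cvb := fun x =>
    abs_le.mpr ⟨by linarith [(hvb x).1, (hvb x).2], (hvb x).2⟩
  have hwabs : ∀ x, |w x| ≤ Cwb := fun x =>
    abs_le.mpr ⟨by linarith [(hwb x).1, (hwb x).2], (hwb x).2⟩
  have hCvpd : Cv.PosDef := aux_posdef hem heL2 hind hvm hcv hvb Cv hCv
  have hCwpd : Cw.PosDef := aux_posdef hem heL2 hind hwm hcw hwb Cw hCw
  refine ⟨hCvpd.det_pos.ne', hCwpd.det_pos.ne', ?_⟩
  rcases Nat.eq_zero_or_pos k with hk | hk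
  · subst hk
    intro x
    simp
  -- B is positive
  have hBpos : 0 < B := by
    have hX : Nonempty X := by
      by_contra hX
      have hE : IsEmpty X := not_nonempty_iff.mp hX
      have hμ : μ = 0 := μ.eq_zero_of_isEmpty
      have h0 : (fun _ : Fin k => (1 : ℝ)) = 0 := by
        refine hind _ ?_
        rw [hμ]
        simp
      have := congrFun h0 ⟨0, hk⟩
      norm_num at this
    obtain ⟨x⟩ := hX
    have h1 : 0 < w x / v x :=
      div_pos (lt_of_lt_of_le hcw (hwb x).1) (lt_of_lt_of_le hcv (hvb x).1)
    exact lt_of_lt_of_le h1 (hB x)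
  intro x
  set a : Fin k → ℝ := fun i => e i x with ha
  have hdv : IsUnit Cv.det := isUnit_iff_ne_zero.mpr hCvpd.det_pos.ne'
  have hdw : IsUnit Cw.det := isUnit_iff_ne_zero.mpr hCwpd.det_pos.ne'
  set q : Fin k → ℝ := Cv⁻¹ *ᵥ a with hq
  set qw : Fin k → ℝ := Cw⁻¹ *ᵥ a with hqw
  have hCvq : Cv *ᵥ q = a := by
    rw [hq, Matrix.mulVec_mulVec, Matrix.mul_nonsing_inv _ hdv, Matrix.one_mulVec]
  have hCwqw : Cw *ᵥ qw = a := by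
    rw [hqw, Matrix.mulVec_mulVec, Matrix.mul_nonsing_inv _ hdw, Matrix.one_mulVec]
  have hCwsymm : Cwᵀ = Cw := by
    ext i j
    have h := congr_fun (congr_fun hCwpd.1 i) j
    simpa [Matrix.conjTranspose_apply, Matrix.transpose_apply] using h
  -- goal sums equal dot products
  have hgv : (∑ i, ∑ j, Cv⁻¹ i j * e i x * e j x) = a ⬝ᵥ q := by
    rw [hq]
    simp only [dotProduct, Matrix.mulVec, Finset.mul_sum]
    exact Finset.sum_congr rfl fun i _ => Finset.sum_congr rfl fun j _ => by ring
  have hgw : (∑ i, ∑ j, Cw⁻¹ i j * e i x * e j x) = a ⬝ᵥ qw := by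
    rw [hqw]
    simp only [dotProduct, Matrix.mulVec, Finset.mul_sum]
    exact Finset.sum_congr rfl fun i _ => Finset.sum_congr rfl fun j _ => by ring
  rw [hgv, hgw]
  -- key scalar quantities
  have hs : q ⬝ᵥ (Cv *ᵥ q) = a ⬝ᵥ q := by rw [hCvq, dotProduct_comm]
  -- quadratic form identities
  have hquadv := aux_quad hem heL2 hvm hvabs Cv hCv q
  have hquadw := aux_quad hem heL2 hwm hwabs Cw hCw q
  -- comparison of quadratic forms: q ⬝ᵥ Cw q ≤ B * (q ⬝ᵥ Cv q)
  have hcomp : q ⬝ᵥ (Cw *ᵥ q) ≤ B * (a ⬝ᵥ q) := by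
    rw [hquadw, ← hs, hquadv]
    have hmono : (∫ y, (∑ i, q i * e i y) ^ 2 * w y ∂μ)
        ≤ ∫ y, B * ((∑ i, q i * e i y) ^ 2 * v y) ∂μ := by
      refine integral_mono (aux_int2 hem heL2 hwm hwabs q)
        ((aux_int2 hem heL2 hvm hvabs q).const_mul B) fun y => ?_
      have hvpos : 0 < v y := lt_of_lt_of_le hcv (hvb y).1
      have hwle : w y ≤ B * v y := (div_le_iff₀ hvpos).mp (hB y)
      have := mul_le_mul_of_nonneg_left hwle (sq_nonneg (∑ i, q i * e i y))
      calc (∑ i, q i * e i y) ^ 2 * w y ≤ (∑ i, q i * e i y) ^ 2 * (B * v y) := this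
        _ = B * ((∑ i, q i * e i y) ^ 2 * v y) := by ring
    rw [integral_const_mul] at hmono
    exact hmono
  -- positivity of the Cw-quadratic form at d = B⁻¹ • q - qw
  set d : Fin k → ℝ := B⁻¹ • q - qw with hd
  have hquadd := aux_quad hem heL2 hwm hwabs Cw hCw d
  have hdnn : 0 ≤ d ⬝ᵥ (Cw *ᵥ d) := by
    rw [hquadd]
    exact integral_nonneg fun y =>
      mul_nonneg (sq_nonneg _) (le_trans hcw.le (hwb y).1)
  -- expansion of the quadratic form at d
  have h2 : qw ⬝ᵥ (Cw *ᵥ q) = a ⬝ᵥ q := by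
    rw [Matrix.dotProduct_mulVec, ← hCwsymm, Matrix.vecMul_transpose, hCwqw]
  have h3 : qw ⬝ᵥ a = a ⬝ᵥ qw := dotProduct_comm _ _
  have hexp : d ⬝ᵥ (Cw *ᵥ d)
      = B⁻¹ * B⁻¹ * (q ⬝ᵥ (Cw *ᵥ q)) - 2 * B⁻¹ * (a ⬝ᵥ q) + a ⬝ᵥ qw := by
    have h1 : Cw *ᵥ d = B⁻¹ • (Cw *ᵥ q) - a := by
      rw [hd, Matrix.mulVec_sub, Matrix.mulVec_smul, hCwqw]
    rw [h1, hd]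
    simp only [sub_dotProduct, smul_dotProduct, dotProduct_sub,
      dotProduct_smul, smul_eq_mul]
    rw [h2, h3]
    have hqa : q ⬝ᵥ a = a ⬝ᵥ q := dotProduct_comm _ _
    rw [hqa]
    ring
  -- combine
  have hinv : B * B⁻¹ = 1 := mul_inv_cancel₀ hBpos.ne'
  have hQle : B⁻¹ * B⁻¹ * (q ⬝ᵥ (Cw *ᵥ q)) ≤ B⁻¹ * (a ⬝ᵥ q) := by
    calc B⁻¹ * B⁻¹ * (q ⬝ᵥ (Cw *ᵥ q)) ≤ B⁻¹ * B⁻¹ * (B * (a ⬝ᵥ q)) :=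
          mul_le_mul_of_nonneg_left hcomp
            (mul_nonneg (inv_nonneg.mpr hBpos.le) (inv_nonneg.mpr hBpos.le))
      _ = (B * B⁻¹) * (B⁻¹ * (a ⬝ᵥ q)) := by ring
      _ = B⁻¹ * (a ⬝ᵥ q) := by rw [hinv, one_mul]
  have hts : B⁻¹ * (a ⬝ᵥ q) ≤ a ⬝ᵥ qw := by
    rw [hexp] at hdnn
    linarith
  calc a ⬝ᵥ q = B * (B⁻¹ * (a ⬝ᵥ q)) := by rw [← mul_assoc, hinv, one_mul]
    _ ≤ B * (a ⬝ᵥ qw) := mul_le_mul_of_nonneg_left hts hBpos.le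
end

section
/- Let μ be a σ-finite measure on a measurable space X, let r ≥ 2 and m ≥ 3 be given, and let Π_1,…,Π_{m−1}: X×X → ℝ be symmetric measurable kernels whose associated integral operators h ↦ ∫ Π_i(·,y) h(y) dμ(y) are bounded on L_s(μ) with operator norm at most C for every s ∈ [r/(r−1), r]. Then for arbitrary measurable functions w_1,…,w_m, | ∫⋯∫ ∏_{i=1}^{m−1} Π_i(x_i,x_{i+1}) ∏_{i=1}^m w_i(x_i) dμ(x_1)⋯dμ(x_m) | ≤ C^{m−3} ‖Π_1 w_1‖_r ‖Π_{m−1} w_m‖_r ∏_{i=2}^{m−1} ‖w_i‖_{(m−2)r/(r−2)}, where (m−2)r/(r−2) is interpreted as ∞ when r = 2. -/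
open MeasureTheory ENNReal Filter

section Aux

variable {X : Type*} [MeasurableSpace X] {μ : Measure X} [SigmaFinite μ]

private lemma MPK_cons_eq_symm (k : ℕ) (p : X × (Fin (k+1) → X)) :
    (MeasurableEquiv.piFinSuccAbove (fun _ : Fin (k+2) => X) 0).symm p = Fin.cons p.1 p.2 := by
  simp_rw [MeasurableEquiv.piFinSuccAbove_symm_apply, Fin.insertNthEquiv, Fin.insertNth_zero]
  simp [Fin.zero_succAbove, cast_eq]

private lemma MPK_peel_integrable (k : ℕ) (G : (Fin (k+2) → X) → ℝ) :
    Integrable G (Measure.pi fun _ => μ) ↔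
      Integrable (fun p : X × (Fin (k+1) → X) => G (Fin.cons p.1 p.2))
        (μ.prod (Measure.pi fun _ => μ)) := by
  have mp := (measurePreserving_piFinSuccAbove (fun _ : Fin (k+2) => μ) 0).symm
  rw [← mp.integrable_comp_emb (MeasurableEquiv.measurableEmbedding _)]
  refine integrable_congr (Filter.EventuallyEq.of_eq ?_)
  funext p
  simp [Function.comp, MPK_cons_eq_symm]

private lemma MPK_peel_integral (k : ℕ) (G : (Fin (k+2) → X) → ℝ) :
    ∫ y, G y ∂(Measure.pi fun _ : Fin (k+2) => μ) =
      ∫ p : X × (Fin (k+1) → X), G (Fin.cons p.1 p.2) ∂(μ.prod (Measure.pi fun _ => μ)) := by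
  have mp := (measurePreserving_piFinSuccAbove (fun _ : Fin (k+2) => μ) 0).symm
  rw [← mp.integral_comp']
  congr 1; funext p; rw [MPK_cons_eq_symm]

private lemma MPK_integral_funUnique (F : X → ℝ) :
    ∫ ys : Fin 1 → X, F (ys 0) ∂(Measure.pi fun _ => μ) = ∫ z, F z ∂μ := by
  have := (measurePreserving_funUnique μ (Fin 1)).integral_comp' (g := F)
  rw [← this]
  congr 1

/-- strong measurability of the operator image -/
private lemma MPK_opMeas {K : X → X → ℝ} (hK : Measurable (Function.uncurry K))
    {h : X → ℝ} (hh : Measurable h) :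
    StronglyMeasurable (fun x => ∫ y, K x y * h y ∂μ) :=
  StronglyMeasurable.integral_prod_right'
    (f := fun p : X × X => K p.1 p.2 * h p.2)
    ((hK.mul (hh.comp measurable_snd)).stronglyMeasurable)

/-- Hölder pairing in `ofReal`-form. -/
private lemma MPK_pairing {f g : X → ℝ} (hf : AEMeasurable f μ) (hg : AEMeasurable g μ)
    {a b : ℝ} (hab : a.HolderConjugate b) :
    ENNReal.ofReal |∫ x, f x * g x ∂μ|
      ≤ eLpNorm f (ENNReal.ofReal a) μ * eLpNorm g (ENNReal.ofReal b) μ := by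
  have h1 : ENNReal.ofReal |∫ x, f x * g x ∂μ| = (‖∫ x, f x * g x ∂μ‖₊ : ℝ≥0∞) := by
    rw [← Real.enorm_eq_ofReal_abs]; rfl
  rw [h1]
  refine le_trans (enorm_integral_le_lintegral_enorm _) ?_
  have h2 : ∀ x, ‖f x * g x‖ₑ = ‖f x‖ₑ * ‖g x‖ₑ := by
    intro x; rw [enorm_mul]
  simp_rw [h2]
  refine le_trans (ENNReal.lintegral_mul_le_Lp_mul_Lq μ hab hf.enorm hg.enorm) ?_
  rw [eLpNorm_eq_lintegral_rpow_enorm_toReal (ENNReal.ofReal_pos.2 hab.pos).ne' ENNReal.ofReal_ne_top,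
      eLpNorm_eq_lintegral_rpow_enorm_toReal (ENNReal.ofReal_pos.2 hab.symm.pos).ne' ENNReal.ofReal_ne_top,
      ENNReal.toReal_ofReal hab.nonneg, ENNReal.toReal_ofReal hab.symm.nonneg]

/-- Hölder for products of functions, `eLpNorm` version. -/
private lemma MPK_eLpNorm_mul_le {φ f : X → ℝ} (hφ : AEStronglyMeasurable φ μ)
    (hf : AEStronglyMeasurable f μ) {p q s : ℝ≥0∞} (hpqs : 1/p = 1/q + 1/s) :
    eLpNorm (fun x => φ x * f x) p μ ≤ eLpNorm φ q μ * eLpNorm f s μ := by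
  simpa [Pi.smul_apply', smul_eq_mul, Pi.mul_def] using
    eLpNorm_smul_le_mul_eLpNorm (f := f) (φ := φ) hf hφ
      (hpqr := ⟨by simpa [one_div] using hpqs.symm⟩)

private lemma MPK_cancel_helper {r : ℝ} (hr : 2 ≤ r) {a : ℝ≥0∞}
    (ha : a + 1/ENNReal.ofReal r ≤ 1) : a ≤ ENNReal.ofReal ((r-1)/r) := by
  have hr0 : (0:ℝ) < r := by linarith
  have key : ENNReal.ofReal ((r-1)/r) + 1/ENNReal.ofReal r = 1 := by
    rw [one_div, ← ENNReal.ofReal_inv_of_pos hr0, ← ENNReal.ofReal_add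
      (by apply div_nonneg <;> linarith) (by positivity)]
    rw [show (r-1)/r + r⁻¹ = 1 by field_simp; ring]
    exact ENNReal.ofReal_one
  have hne : 1/ENNReal.ofReal r ≠ ∞ := by
    simp [one_div, (ENNReal.ofReal_pos.2 hr0).ne']
  rw [← ENNReal.add_le_add_iff_right hne, key]; exact ha

private lemma MPK_ofReal_inv_conj {r : ℝ} (hr : 2 ≤ r) :
    (ENNReal.ofReal (r/(r-1)))⁻¹ = ENNReal.ofReal ((r-1)/r) := by
  have h1 : (0:ℝ) < r / (r-1) := by
    apply div_pos <;> linarith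
  rw [← ENNReal.ofReal_inv_of_pos h1, inv_div]



/-- If the operator norm bound is `0` at exponent 2, then `K g = 0` a.e. for ANY measurable `g`. -/
private lemma MPK_kernel_zero (K : X → X → ℝ) (hKm : Measurable (Function.uncurry K))
    (hop : ∀ h : X → ℝ, MemLp h (ENNReal.ofReal 2) μ →
      eLpNorm (fun x => ∫ y, K x y * h y ∂μ) (ENNReal.ofReal 2) μ = 0)
    (g : X → ℝ) (hg : Measurable g) :
    (fun x => ∫ y, K x y * g y ∂μ) =ᵐ[μ] 0 := by
  set E : ℕ → Set X := fun M => spanningSets μ M ∩ {y | |g y| ≤ M} with hE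
  have hEmeas : ∀ M, MeasurableSet (E M) := fun M =>
    (measurableSet_spanningSets μ M).inter (measurableSet_le (hg.abs) measurable_const)
  set gM : ℕ → X → ℝ := fun M => (E M).indicator g with hgM
  have hgMmem : ∀ M, MemLp (gM M) (ENNReal.ofReal 2) μ := by
    intro M
    refine ⟨((hg.indicator (hEmeas M)).aestronglyMeasurable), ?_⟩
    have hb : ∀ x, ‖gM M x‖ ≤ ‖(E M).indicator (fun _ => (M : ℝ)) x‖ := by
      intro x
      by_cases hx : x ∈ E M
      · simp only [hgM, Set.indicator_of_mem hx, Real.norm_eq_abs]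
        exact le_trans hx.2 (le_abs_self _)
      · simp [hgM, Set.indicator_of_notMem hx]
    calc eLpNorm (gM M) (ENNReal.ofReal 2) μ
        ≤ eLpNorm ((E M).indicator (fun _ => (M : ℝ))) (ENNReal.ofReal 2) μ :=
          eLpNorm_mono hb
      _ < ⊤ := by
          rw [eLpNorm_indicator_const (hEmeas M) (by simp) (by simp)]
          refine ENNReal.mul_lt_top (by simp) ?_
          refine (ENNReal.rpow_lt_top_of_nonneg (by positivity) ?_)
          exact ((measure_mono Set.inter_subset_left).trans_lt
            (measure_spanningSets_lt_top μ M)).ne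
  have hzero : ∀ M, (fun x => ∫ y, K x y * gM M y ∂μ) =ᵐ[μ] 0 := by
    intro M
    have := hop (gM M) (hgMmem M)
    rwa [eLpNorm_eq_zero_iff ?m1 (by simp)] at this
    case m1 =>
      exact (StronglyMeasurable.integral_prod_right'
        (f := fun p : X × X => K p.1 p.2 * gM M p.2)
        ((hKm.mul ((hg.indicator (hEmeas M)).comp measurable_snd)).stronglyMeasurable)).aestronglyMeasurable
  have hae : ∀ᵐ x ∂μ, ∀ M, ∫ y, K x y * gM M y ∂μ = 0 := by
    rw [ae_all_iff]; intro M; exact hzero M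
  filter_upwards [hae] with x hx
  by_cases hint : Integrable (fun y => K x y * g y) μ
  · have hlim : Tendsto (fun M => ∫ y, K x y * gM M y ∂μ) atTop
        (nhds (∫ y, K x y * g y ∂μ)) := by
      refine tendsto_integral_of_dominated_convergence (fun y => |K x y * g y|)
        (fun M => ?_) hint.abs ?_ ?_
      · exact ((hKm.comp (measurable_prodMk_left)).mul
          (hg.indicator (hEmeas M))).aestronglyMeasurable
      · intro M
        filter_upwards with y
        simp only [hgM, Real.norm_eq_abs, abs_mul]
        refine mul_le_mul_of_nonneg_left ?_ (abs_nonneg _)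
        by_cases hy : y ∈ E M
        · simp [Set.indicator_of_mem hy]
        · simp [Set.indicator_of_notMem hy, abs_nonneg]
      · filter_upwards with y
        have : ∀ᶠ M in atTop, gM M y = g y := by
          obtain ⟨M₀, hM₀⟩ : ∃ M₀, y ∈ spanningSets μ M₀ := by
            have := iUnion_spanningSets μ
            have : y ∈ ⋃ i, spanningSets μ i := by rw [this]; trivial
            exact Set.mem_iUnion.1 this
          obtain ⟨M₁, hM₁⟩ := exists_nat_ge (|g y|)
          filter_upwards [eventually_ge_atTop M₀, eventually_ge_atTop M₁] with M h0 h1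
          have hy : y ∈ E M :=
            ⟨monotone_spanningSets μ h0 hM₀, le_trans hM₁ (by exact_mod_cast h1)⟩
          simp [hgM, Set.indicator_of_mem hy]
        refine tendsto_const_nhds.congr' ?_
        filter_upwards [this] with M hM
        rw [hM]
    have : Tendsto (fun _ : ℕ => (0 : ℝ)) atTop (nhds (∫ y, K x y * g y ∂μ)) := by
      refine hlim.congr fun M => (hx M)
    simpa using tendsto_nhds_unique this tendsto_const_nhds
  · exact integral_undef hint

private lemma MPK_op_all {r : ℝ} (hr : 2 ≤ r) {C : ℝ≥0∞} {K : X → X → ℝ}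
    (hKm : Measurable (Function.uncurry K))
    (hop : ∀ s : ℝ, r/(r-1) ≤ s → s ≤ r → ∀ h : X → ℝ, MemLp h (ENNReal.ofReal s) μ →
      eLpNorm (fun x => ∫ y, K x y * h y ∂μ) (ENNReal.ofReal s) μ
        ≤ C * eLpNorm h (ENNReal.ofReal s) μ)
    {p : ℝ≥0∞} (hp1 : ENNReal.ofReal (r/(r-1)) ≤ p) (hp2 : p ≤ ENNReal.ofReal r)
    {h : X → ℝ} (hh : Measurable h) :
    eLpNorm (fun x => ∫ y, K x y * h y ∂μ) p μ ≤ C * eLpNorm h p μ := by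
  have hr1 : (1:ℝ) < r := by linarith
  have hptop : p ≠ ⊤ := (hp2.trans_lt ENNReal.ofReal_lt_top).ne
  have hps : p = ENNReal.ofReal p.toReal := (ENNReal.ofReal_toReal hptop).symm
  have hs1 : r/(r-1) ≤ p.toReal := by
    rw [hps] at hp1
    exact (ENNReal.ofReal_le_ofReal_iff ENNReal.toReal_nonneg).1 hp1
  have hs2 : p.toReal ≤ r := by
    rw [hps] at hp2
    exact (ENNReal.ofReal_le_ofReal_iff (by linarith)).1 hp2
  by_cases hmem : MemLp h (ENNReal.ofReal p.toReal) μ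
  · rw [hps]; exact hop p.toReal hs1 hs2 h hmem
  · by_cases hC : C = 0
    · have h2le : r/(r-1) ≤ 2 := by rw [div_le_iff₀ (by linarith)]; linarith
      have hz := MPK_kernel_zero K hKm (fun g hg => le_antisymm
        (by simpa [hC] using hop 2 h2le hr g hg) (zero_le)) h hh
      calc eLpNorm (fun x => ∫ y, K x y * h y ∂μ) p μ = 0 := by
            rw [eLpNorm_congr_ae hz, eLpNorm_zero]
        _ ≤ C * eLpNorm h p μ := zero_le
    · have htop : eLpNorm h p μ = ∞ := by
        by_contra hne
        exact hmem (hps ▸ ⟨hh.aestronglyMeasurable, lt_top_iff_ne_top.2 hne⟩)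
      rw [htop, ENNReal.mul_top hC]
      exact le_top

end Aux
section Core

variable {X : Type*} [MeasurableSpace X] {μ : Measure X} [SigmaFinite μ]

private lemma MPK_core {r : ℝ} (hr : 2 ≤ r) (C : ℝ≥0∞) (q : ℝ≥0∞) (hq1 : 1 ≤ q) :
    ∀ (k : ℕ) (t : ℝ≥0∞), ENNReal.ofReal (r/(r-1)) ≤ t → t ≤ ENNReal.ofReal r →
    1/t + (k : ℝ≥0∞) * (1/q) + 1/ENNReal.ofReal r = 1 →
    ∀ (L : Fin (k+1) → X → X → ℝ), (∀ j, Measurable (Function.uncurry (L j))) →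
    (∀ j x y, L j x y = L j y x) →
    (∀ (j : Fin (k+1)) (p : ℝ≥0∞), ENNReal.ofReal (r/(r-1)) ≤ p → p ≤ ENNReal.ofReal r →
      ∀ h : X → ℝ, Measurable h →
        eLpNorm (fun x => ∫ y, L j x y * h y ∂μ) p μ ≤ C * eLpNorm h p μ) →
    ∀ (f : X → ℝ), Measurable f → ∀ (v : Fin (k+1) → X → ℝ), (∀ j, Measurable (v j)) →
    Integrable (fun y : Fin (k+2) → X =>
      f (y 0) * ∏ j : Fin (k+1), (L j (y j.castSucc) (y j.succ) * v j (y j.succ)))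
      (Measure.pi fun _ => μ) →
    ENNReal.ofReal |∫ y : Fin (k+2) → X,
        f (y 0) * ∏ j : Fin (k+1), (L j (y j.castSucc) (y j.succ) * v j (y j.succ))
        ∂(Measure.pi fun _ => μ)|
      ≤ C ^ k * eLpNorm f t μ *
          eLpNorm (fun x => ∫ y, L (Fin.last k) x y * v (Fin.last k) y ∂μ)
            (ENNReal.ofReal r) μ *
          ∏ j : Fin k, eLpNorm (v j.castSucc) q μ := by
  have hr0 : (0:ℝ) < r := by linarith
  have hr1 : (0:ℝ) < r - 1 := by linarith
  have hrr1 : (0:ℝ) < r/(r-1) := div_pos hr0 hr1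
  intro k
  induction k with
  | zero =>
    intro t ht1 ht2 hrel L hLm hLsym hLop f hf v hv hInt
    set G0 : (Fin 2 → X) → ℝ := fun y =>
      f (y 0) * ∏ j : Fin 1, (L j (y j.castSucc) (y j.succ) * v j (y j.succ)) with hG0def
    -- identify t
    have htval : t = ENNReal.ofReal (r/(r-1)) := by
      have h1 : 1/t + 1/ENNReal.ofReal r = 1 := by simpa using hrel
      have h2 : 1/t ≤ ENNReal.ofReal ((r-1)/r) := MPK_cancel_helper hr h1.le
      have h3 : ENNReal.ofReal ((r-1)/r) ≤ 1/t := by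
        have key : ENNReal.ofReal ((r-1)/r) + 1/ENNReal.ofReal r = 1 := by
          rw [one_div, ← ENNReal.ofReal_inv_of_pos hr0, ← ENNReal.ofReal_add
            (by apply div_nonneg <;> linarith) (by positivity)]
          rw [show (r-1)/r + r⁻¹ = 1 by field_simp; ring]
          exact ENNReal.ofReal_one
        have hne : 1/ENNReal.ofReal r ≠ ∞ := by
          simp [one_div, (ENNReal.ofReal_pos.2 hr0).ne']
        rw [← ENNReal.add_le_add_iff_right hne, key, h1]
      have h4 : 1/t = ENNReal.ofReal ((r-1)/r) := le_antisymm h2 h3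
      have h5 : t = (ENNReal.ofReal ((r-1)/r))⁻¹ := by
        rw [← h4, one_div, inv_inv]
      rw [h5, ← MPK_ofReal_inv_conj hr, inv_inv]
    -- reduce the integral
    set Tv : X → ℝ := fun x => ∫ y, L (Fin.last 0) x y * v (Fin.last 0) y ∂μ with hTv
    have hTvm : Measurable Tv := (MPK_opMeas (hLm _) (hv _)).measurable
    have hformF : (fun p : X × (Fin 1 → X) => G0 (Fin.cons p.1 p.2))
        = fun p => f p.1 * (L 0 p.1 (p.2 0) * v 0 (p.2 0)) := by
      funext p
      rw [hG0def]
      simp [Fin.prod_univ_one, Fin.castSucc_zero, Fin.cons_zero, Fin.cons_succ]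
    have hH : Integrable (fun p : X × (Fin 1 → X) =>
        f p.1 * (L 0 p.1 (p.2 0) * v 0 (p.2 0))) (μ.prod (Measure.pi fun _ => μ)) := by
      have := (MPK_peel_integrable 0 G0).1 hInt
      rwa [hformF] at this
    have hred : ∫ y, G0 y ∂(Measure.pi fun _ => μ) = ∫ x, f x * Tv x ∂μ := by
      rw [MPK_peel_integral 0 G0, hformF, MeasureTheory.integral_prod _ hH]
      congr 1; funext x
      have e2 : ∫ ys : Fin 1 → X, f x * (L 0 x (ys 0) * v 0 (ys 0))
          ∂(Measure.pi fun _ => μ)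
          = ∫ z, f x * (L 0 x z * v 0 z) ∂μ :=
        MPK_integral_funUnique (fun z => f x * (L 0 x z * v 0 z))
      rw [e2, integral_const_mul]
      rfl
    rw [hred]
    have hconj : (r/(r-1)).HolderConjugate r := by
      rw [Real.holderConjugate_iff]; constructor
      · rw [lt_div_iff₀ hr1]; linarith
      · rw [inv_div]; field_simp; ring
    calc ENNReal.ofReal |∫ x, f x * Tv x ∂μ|
        ≤ eLpNorm f (ENNReal.ofReal (r/(r-1))) μ * eLpNorm Tv (ENNReal.ofReal r) μ :=
          MPK_pairing (μ := μ) hf.aemeasurable (hTvm.aemeasurable) hconj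
      _ = C ^ 0 * eLpNorm f t μ * eLpNorm Tv (ENNReal.ofReal r) μ *
            ∏ j : Fin 0, eLpNorm (v j.castSucc) q μ := by
          rw [htval]; simp
  | succ k IH =>
    intro t ht1 ht2 hrel L hLm hLsym hLop f hf v hv hInt
    have hofr_pos : (0:ℝ≥0∞) < ENNReal.ofReal r := ENNReal.ofReal_pos.2 hr0
    have hofr_ne_top : ENNReal.ofReal r ≠ ∞ := ENNReal.ofReal_ne_top
    have ht_pos : (0:ℝ≥0∞) < t := lt_of_lt_of_le (ENNReal.ofReal_pos.2 hrr1) ht1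
    have ht_ne_top : t ≠ ∞ := (lt_of_le_of_lt ht2 ENNReal.ofReal_lt_top).ne
    set t' : ℝ≥0∞ := (1/t + 1/q)⁻¹ with ht'def
    have ht'inv : 1/t' = 1/t + 1/q := by rw [ht'def, one_div, inv_inv]
    have hq_pos : (0:ℝ≥0∞) < q := lt_of_lt_of_le one_pos hq1
    -- bounds for t'
    have ht'2 : t' ≤ ENNReal.ofReal r := by
      rw [ht'def, ← ENNReal.inv_le_inv, inv_inv]
      calc (ENNReal.ofReal r)⁻¹ ≤ t⁻¹ := ENNReal.inv_le_inv.2 ht2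
        _ ≤ 1/t + 1/q := by rw [one_div]; exact le_self_add
    have h1q : (1:ℝ≥0∞)/q ≤ ((k+1 : ℕ):ℝ≥0∞) * (1/q) :=
      le_mul_of_one_le_left (zero_le) (by exact_mod_cast Nat.succ_le_succ (Nat.zero_le k))
    have hsub : 1/t + 1/q + 1/ENNReal.ofReal r ≤ 1 :=
      le_trans (add_le_add (add_le_add le_rfl h1q) le_rfl) hrel.le
    have ht'1 : ENNReal.ofReal (r/(r-1)) ≤ t' := by
      rw [ht'def, ← ENNReal.inv_le_inv, inv_inv, MPK_ofReal_inv_conj hr]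
      exact MPK_cancel_helper hr hsub
    have hrel' : 1/t' + (k : ℝ≥0∞) * (1/q) + 1/ENNReal.ofReal r = 1 := by
      rw [ht'inv]
      have heq : 1/t + 1/q + (k:ℝ≥0∞) * (1/q) + 1/ENNReal.ofReal r
          = 1/t + ((k+1:ℕ):ℝ≥0∞) * (1/q) + 1/ENNReal.ofReal r := by
        push_cast; ring
      exact heq.trans hrel
    -- new data
    set Tf : X → ℝ := fun z => ∫ y, L 0 z y * f y ∂μ with hTfdef
    have hTfm : Measurable Tf := (MPK_opMeas (hLm _) hf).measurable
    set f' : X → ℝ := fun z => Tf z * v 0 z with hf'def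
    have hf'm : Measurable f' := hTfm.mul (hv 0)
    set L' : Fin (k+1) → X → X → ℝ := fun j => L j.succ with hL'def
    set v' : Fin (k+1) → X → ℝ := fun j => v j.succ with hv'def
    -- the integrand and its peeled forms
    set G : (Fin (k+3) → X) → ℝ := fun y =>
      f (y 0) * ∏ j : Fin (k+2), (L j (y j.castSucc) (y j.succ) * v j (y j.succ)) with hGdef
    set G' : (Fin (k+2) → X) → ℝ := fun ys =>
      f' (ys 0) * ∏ j : Fin (k+1), (L' j (ys j.castSucc) (ys j.succ) * v' j (ys j.succ))
      with hG'def
    have hform : ∀ (x : X) (ys : Fin (k+2) → X),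
        G (Fin.cons x ys) = f x * ((L 0 x (ys 0) * v 0 (ys 0)) *
          ∏ j : Fin (k+1), (L' j (ys j.castSucc) (ys j.succ) * v' j (ys j.succ))) := by
      intro x ys
      rw [hGdef]
      simp only [hL'def, hv'def, Fin.prod_univ_succ, Fin.cons_zero, Fin.cons_succ,
        Fin.castSucc_zero, ← Fin.succ_castSucc]
    have hH : Integrable (fun p : X × (Fin (k+2) → X) => G (Fin.cons p.1 p.2))
        (μ.prod (Measure.pi fun _ => μ)) := (MPK_peel_integrable (k+1) G).1 hInt
    have hinner : ∀ ys : Fin (k+2) → X, (∫ x, G (Fin.cons x ys) ∂μ) = G' ys := by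
      intro ys
      have e1 : ∀ x, G (Fin.cons x ys) = (f x * L 0 x (ys 0)) *
          (v 0 (ys 0) * ∏ j : Fin (k+1), (L' j (ys j.castSucc) (ys j.succ) *
            v' j (ys j.succ))) := by
        intro x; rw [hform]; ring
      simp_rw [e1]
      rw [MeasureTheory.integral_mul_const]
      have e2 : ∫ x, f x * L 0 x (ys 0) ∂μ = Tf (ys 0) := by
        rw [hTfdef]
        congr 1; funext x
        rw [hLsym 0 x (ys 0)]; ring
      rw [e2, hG'def, hf'def]
      ring
    have hInt' : Integrable G' (Measure.pi fun _ => μ) := by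
      have := hH.integral_prod_right
      refine this.congr (Filter.EventuallyEq.of_eq ?_)
      funext ys; exact hinner ys
    have hredGG' : ∫ y, G y ∂(Measure.pi fun _ : Fin (k+3) => μ)
        = ∫ ys, G' ys ∂(Measure.pi fun _ : Fin (k+2) => μ) := by
      rw [MPK_peel_integral (k+1) G, MeasureTheory.integral_prod_symm _ hH]
      congr 1; funext ys; exact hinner ys
    -- apply the induction hypothesis
    have hIH := IH t' ht'1 ht'2 hrel' L' (fun j => hLm j.succ) (fun j => hLsym j.succ)
      (fun j p hp1 hp2 h hh => hLop j.succ p hp1 hp2 h hh) f' hf'm v' (fun j => hv j.succ)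
      (by exact hInt')
    -- bound the norm of f'
    have hTfle : eLpNorm Tf t μ ≤ C * eLpNorm f t μ := hLop 0 t ht1 ht2 f hf
    have hf'le : eLpNorm f' t' μ ≤ C * eLpNorm f t μ * eLpNorm (v 0) q μ := by
      calc eLpNorm f' t' μ ≤ eLpNorm Tf t μ * eLpNorm (v 0) q μ :=
            MPK_eLpNorm_mul_le hTfm.aestronglyMeasurable (hv 0).aestronglyMeasurable ht'inv
        _ ≤ C * eLpNorm f t μ * eLpNorm (v 0) q μ := mul_le_mul' hTfle le_rfl
    -- index identities
    have hBL : (fun x => ∫ y, L' (Fin.last k) x y * v' (Fin.last k) y ∂μ)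
        = fun x => ∫ y, L (Fin.last (k+1)) x y * v (Fin.last (k+1)) y ∂μ := by
      rw [hL'def, hv'def]; simp [Fin.succ_last]
    have hProd : ∏ j : Fin (k+1), eLpNorm (v j.castSucc) q μ
        = eLpNorm (v 0) q μ * ∏ j : Fin k, eLpNorm (v' j.castSucc) q μ := by
      rw [Fin.prod_univ_succ]
      simp only [hv'def, Fin.castSucc_zero, Fin.succ_castSucc]
    calc ENNReal.ofReal |∫ y, G y ∂(Measure.pi fun _ : Fin (k+3) => μ)|
        = ENNReal.ofReal |∫ ys, G' ys ∂(Measure.pi fun _ : Fin (k+2) => μ)| := by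
          rw [hredGG']
      _ ≤ C ^ k * eLpNorm f' t' μ *
            eLpNorm (fun x => ∫ y, L' (Fin.last k) x y * v' (Fin.last k) y ∂μ)
              (ENNReal.ofReal r) μ *
            ∏ j : Fin k, eLpNorm (v' j.castSucc) q μ := hIH
      _ ≤ C ^ k * (C * eLpNorm f t μ * eLpNorm (v 0) q μ) *
            eLpNorm (fun x => ∫ y, L' (Fin.last k) x y * v' (Fin.last k) y ∂μ)
              (ENNReal.ofReal r) μ *
            ∏ j : Fin k, eLpNorm (v' j.castSucc) q μ :=
          mul_le_mul' (mul_le_mul' (mul_le_mul' le_rfl hf'le) le_rfl) le_rfl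
      _ = C ^ (k+1) * eLpNorm f t μ *
            eLpNorm (fun x => ∫ y, L (Fin.last (k+1)) x y * v (Fin.last (k+1)) y ∂μ)
              (ENNReal.ofReal r) μ *
            ∏ j : Fin (k+1), eLpNorm (v j.castSucc) q μ := by
          rw [hBL, hProd, pow_succ]
          ring

end Core
/-- **Lemma (mean of a product of kernels).**
Let `K 0, …, K (n-1)` (with `n = m - 1 ≥ 2`, i.e. `m ≥ 3`) be symmetric measurable kernels
whose integral operators are bounded on `L_s(μ)` with norm at most `C` for every
`s ∈ [r/(r-1), r]`, where `r ≥ 2`. Then for arbitrary measurable `w 0, …, w n`,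
`|∫⋯∫ ∏ᵢ K i (xᵢ,xᵢ₊₁) ∏ᵢ w i (xᵢ) dμ^{n+1}| ≤
  C^{m-3} ‖K 0 (w 0)‖_r ‖K (n-1) (w n)‖_r ∏_{0<i<n} ‖w i‖_{(m-2)r/(r-2)}`,
with `(m-2)r/(r-2) = ∞` when `r = 2`. -/
theorem mean_product_of_kernels_bound
    {X : Type*} [MeasurableSpace X] (μ : Measure X) [SigmaFinite μ]
    (r : ℝ) (hr : 2 ≤ r) (n : ℕ) (hn : 2 ≤ n)
    (K : Fin n → X → X → ℝ)
    (hKm : ∀ i, Measurable (Function.uncurry (K i)))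
    (hsym : ∀ i x y, K i x y = K i y x)
    (C : ℝ≥0∞)
    (hop : ∀ i, ∀ s : ℝ, r / (r - 1) ≤ s → s ≤ r →
      ∀ h : X → ℝ, MemLp h (ENNReal.ofReal s) μ →
        eLpNorm (fun x => ∫ y, K i x y * h y ∂μ) (ENNReal.ofReal s) μ
          ≤ C * eLpNorm h (ENNReal.ofReal s) μ)
    (w : Fin (n + 1) → X → ℝ) (hwm : ∀ i, Measurable (w i)) :
    ENNReal.ofReal
        |∫ x : Fin (n + 1) → X,
            (∏ i : Fin n, K i (x i.castSucc) (x i.succ)) * ∏ i, w i (x i)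
            ∂(Measure.pi fun _ => μ)|
      ≤ C ^ (n - 2) *
          eLpNorm (fun x => ∫ y, K ⟨0, by omega⟩ x y * w 0 y ∂μ) (ENNReal.ofReal r) μ *
          eLpNorm (fun x => ∫ y, K ⟨n - 1, by omega⟩ x y * w (Fin.last n) y ∂μ)
            (ENNReal.ofReal r) μ *
          ∏ i ∈ (Finset.univ.erase 0).erase (Fin.last n),
            eLpNorm (w i)
              (if r = 2 then ⊤ else ENNReal.ofReal (((n : ℝ) - 1) * r / (r - 2))) μ := by
  obtain ⟨k, rfl⟩ : ∃ k, n = k + 2 := ⟨n - 2, by omega⟩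
  have hr0 : (0:ℝ) < r := by linarith
  have hr1 : (0:ℝ) < r - 1 := by linarith
  have hrr1 : (0:ℝ) < r/(r-1) := div_pos hr0 hr1
  have eidx0 : ∀ (h : 0 < k+2), (⟨0, h⟩ : Fin (k+2)) = 0 := fun h => Fin.ext (by simp)
  have eidx1 : ∀ (h : k+2-1 < k+2), (⟨k+2-1, h⟩ : Fin (k+2)) = Fin.last (k+1) :=
    fun h => Fin.ext (by simp [Fin.val_last])
  simp only [eidx0, eidx1, show k+2-2 = k from by omega] 
  set G : (Fin (k+3) → X) → ℝ := fun x =>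
    (∏ i : Fin (k+2), K i (x i.castSucc) (x i.succ)) * ∏ i, w i (x i) with hGdef
  by_cases hInt : Integrable G (Measure.pi fun _ => μ)
  case neg =>
    rw [integral_undef hInt]
    simp
  -- the exponent q
  set q : ℝ≥0∞ := if r = 2 then ⊤ else ENNReal.ofReal (((k+2 : ℕ) - 1 : ℝ) * r / (r - 2))
    with hqdef
  have hq1 : 1 ≤ q := by
    rw [hqdef]
    split_ifs with h2
    · exact le_top
    · have hrgt : 2 < r := lt_of_le_of_ne hr (Ne.symm h2)
      rw [ENNReal.one_le_ofReal]
      rw [le_div_iff₀ (by linarith)]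
      push_cast
      nlinarith [Nat.cast_nonneg (α := ℝ) k]
  have hq_inv_ne_top : 1/q ≠ ∞ := by
    simp [one_div, (lt_of_lt_of_le one_pos hq1).ne']
  have hmaster : 1/ENNReal.ofReal r + 1/ENNReal.ofReal r + ((k+1 : ℕ) : ℝ≥0∞) * (1/q) = 1 := by
    rw [hqdef]
    split_ifs with h2
    · subst h2
      rw [ENNReal.ofReal_ofNat]
      simp [one_div, ENNReal.inv_two_add_inv_two, one_add_one_eq_two]
    · have hrgt : 2 < r := lt_of_le_of_ne hr (Ne.symm h2)
      have hq0 : (0:ℝ) < ((k+2 : ℕ) - 1 : ℝ) * r / (r - 2) := by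
        apply div_pos
        · push_cast; nlinarith [Nat.cast_nonneg (α := ℝ) k]
        · linarith
      rw [one_div, one_div, ← ENNReal.ofReal_inv_of_pos hr0, ← ENNReal.ofReal_inv_of_pos hq0]
      rw [show ((k+1:ℕ) : ℝ≥0∞) = ENNReal.ofReal ((k+1:ℕ) : ℝ) by
        rw [ENNReal.ofReal_natCast]]
      rw [← ENNReal.ofReal_mul (by positivity), ← ENNReal.ofReal_add (by positivity)
        (by positivity), ← ENNReal.ofReal_add (by positivity) (by positivity)]
      rw [show r⁻¹ + r⁻¹ + ((k+1:ℕ):ℝ) * (((k+2 : ℕ) - 1 : ℝ) * r / (r - 2))⁻¹ = 1 by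
        push_cast
        rw [show ((k:ℝ)+2-1) = (k:ℝ)+1 by ring]
        field_simp
        ring]
      exact ENNReal.ofReal_one
  -- the exponent t
  set t : ℝ≥0∞ := (1/ENNReal.ofReal r + 1/q)⁻¹ with htdef
  have htinv : 1/t = 1/ENNReal.ofReal r + 1/q := by rw [htdef, one_div, inv_inv]
  have h1q : (1:ℝ≥0∞)/q ≤ ((k+1 : ℕ):ℝ≥0∞) * (1/q) :=
    le_mul_of_one_le_left (zero_le) (by exact_mod_cast Nat.succ_le_succ (Nat.zero_le k))
  have hsub : (1/ENNReal.ofReal r + 1/q) + 1/ENNReal.ofReal r ≤ 1 := by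
    calc (1/ENNReal.ofReal r + 1/q) + 1/ENNReal.ofReal r
        ≤ (1/ENNReal.ofReal r + ((k+1 : ℕ):ℝ≥0∞) * (1/q)) + 1/ENNReal.ofReal r :=
          add_le_add (add_le_add le_rfl h1q) le_rfl
      _ = 1/ENNReal.ofReal r + 1/ENNReal.ofReal r + ((k+1 : ℕ) : ℝ≥0∞) * (1/q) := by ring
      _ = 1 := hmaster
  have ht2 : t ≤ ENNReal.ofReal r := by
    rw [htdef, ← ENNReal.inv_le_inv, inv_inv]
    rw [one_div]
    exact le_self_add
  have ht1 : ENNReal.ofReal (r/(r-1)) ≤ t := by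
    rw [htdef, ← ENNReal.inv_le_inv, inv_inv, MPK_ofReal_inv_conj hr]
    exact MPK_cancel_helper hr hsub
  have hrelQ : 1/t + (k : ℝ≥0∞) * (1/q) + 1/ENNReal.ofReal r = 1 := by
    rw [htinv]
    calc 1/ENNReal.ofReal r + 1/q + (k:ℝ≥0∞) * (1/q) + 1/ENNReal.ofReal r
        = 1/ENNReal.ofReal r + 1/ENNReal.ofReal r + ((k+1 : ℕ) : ℝ≥0∞) * (1/q) := by
          push_cast; ring
      _ = 1 := hmaster
  -- unified operator bound
  have hopAll : ∀ (i : Fin (k+2)) (p : ℝ≥0∞), ENNReal.ofReal (r/(r-1)) ≤ p →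
      p ≤ ENNReal.ofReal r → ∀ h : X → ℝ, Measurable h →
      eLpNorm (fun x => ∫ y, K i x y * h y ∂μ) p μ ≤ C * eLpNorm h p μ :=
    fun i p hp1 hp2 h hh =>
      MPK_op_all hr (hKm i) (fun s hs1 hs2 => hop i s hs1 hs2) hp1 hp2 hh
  -- data for the core lemma
  set L : Fin (k+1) → X → X → ℝ := fun j => K j.succ with hLdef
  set v : Fin (k+1) → X → ℝ := fun j => w j.succ.succ with hvdef
  set Tw : X → ℝ := fun z => ∫ y, K 0 z y * w 0 y ∂μ with hTwdef
  have hTwm : Measurable Tw := (MPK_opMeas (hKm 0) (hwm 0)).measurable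
  set f0 : X → ℝ := fun z => Tw z * w 1 z with hf0def
  have hf0m : Measurable f0 := hTwm.mul (hwm 1)
  set G' : (Fin (k+2) → X) → ℝ := fun ys =>
    f0 (ys 0) * ∏ j : Fin (k+1), (L j (ys j.castSucc) (ys j.succ) * v j (ys j.succ))
    with hG'def
  -- peeled form
  have hform : ∀ (x : X) (ys : Fin (k+2) → X),
      G (Fin.cons x ys) =
        (K 0 x (ys 0) * ∏ i : Fin (k+1), K i.succ (ys i.castSucc) (ys i.succ)) *
          (w 0 x * (w 1 (ys 0) * ∏ i : Fin (k+1), w i.succ.succ (ys i.succ))) := by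
    intro x ys
    rw [hGdef]
    simp only [Fin.prod_univ_succ, Fin.cons_zero, Fin.cons_succ, Fin.castSucc_zero,
      ← Fin.succ_castSucc, Fin.succ_zero_eq_one]
  have hH : Integrable (fun p : X × (Fin (k+2) → X) => G (Fin.cons p.1 p.2))
      (μ.prod (Measure.pi fun _ => μ)) := (MPK_peel_integrable (k+1) G).1 hInt
  have hinner : ∀ ys : Fin (k+2) → X, (∫ x, G (Fin.cons x ys) ∂μ) = G' ys := by
    intro ys
    have e1 : ∀ x, G (Fin.cons x ys) = (w 0 x * K 0 x (ys 0)) *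
        ((∏ i : Fin (k+1), K i.succ (ys i.castSucc) (ys i.succ)) *
          (w 1 (ys 0) * ∏ i : Fin (k+1), w i.succ.succ (ys i.succ))) := by
      intro x; rw [hform]; ring
    simp_rw [e1]
    rw [MeasureTheory.integral_mul_const]
    have e2 : ∫ x, w 0 x * K 0 x (ys 0) ∂μ = Tw (ys 0) := by
      rw [hTwdef]
      congr 1; funext x
      rw [hsym 0 x (ys 0)]; ring
    rw [e2, hG'def, hf0def, hLdef, hvdef]
    simp only [Finset.prod_mul_distrib]
    ring
  have hInt' : Integrable G' (Measure.pi fun _ => μ) := by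
    have := hH.integral_prod_right
    refine this.congr (Filter.EventuallyEq.of_eq ?_)
    funext ys; exact hinner ys
  have hred : ∫ y, G y ∂(Measure.pi fun _ : Fin (k+3) => μ)
      = ∫ ys, G' ys ∂(Measure.pi fun _ : Fin (k+2) => μ) := by
    rw [MPK_peel_integral (k+1) G, MeasureTheory.integral_prod_symm _ hH]
    congr 1; funext ys; exact hinner ys
  -- apply the core lemma
  have hcore := MPK_core hr C q hq1 k t ht1 ht2 hrelQ L (fun j => hKm j.succ)
    (fun j => hsym j.succ) (fun j p hp1 hp2 h hh => hopAll j.succ p hp1 hp2 h hh)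
    f0 hf0m v (fun j => hwm j.succ.succ) (by exact hInt')
  -- bound the norm of f0
  have hf0le : eLpNorm f0 t μ ≤ eLpNorm Tw (ENNReal.ofReal r) μ * eLpNorm (w 1) q μ :=
    MPK_eLpNorm_mul_le hTwm.aestronglyMeasurable (hwm 1).aestronglyMeasurable htinv
  -- the product over the erased set
  have hset : ((Finset.univ.erase (0 : Fin (k+3))).erase (Fin.last (k+2)))
      = Finset.image (fun j : Fin (k+1) => (j.succ.castSucc : Fin (k+3))) Finset.univ := by
    ext i
    simp only [Finset.mem_erase, Finset.mem_image, Finset.mem_univ, and_true, true_and, ne_eq]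
    constructor
    · rintro ⟨hlast, h0⟩
      have h0' : i.val ≠ 0 := by intro h; exact h0 (Fin.ext h)
      have hl' : i.val ≠ k+2 := by simpa [Fin.ext_iff, Fin.val_last] using hlast
      have hlt := i.isLt
      refine ⟨⟨i.val - 1, by omega⟩, Fin.ext ?_⟩
      simp only [Fin.coe_castSucc, Fin.val_succ]
      omega
    · rintro ⟨j, rfl⟩
      have hj := j.isLt
      refine ⟨?_, ?_⟩
      · simp only [Fin.ext_iff, Fin.coe_castSucc, Fin.val_succ, Fin.val_last]
        omega
      · simp only [Fin.ext_iff, Fin.coe_castSucc, Fin.val_succ, Fin.val_zero]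
        omega
  have e0 : ((0 : Fin (k+1)).succ.castSucc : Fin (k+3)) = 1 := Fin.ext (by simp)
  have es : ∀ j : Fin k, ((j.succ).succ.castSucc : Fin (k+3)) = (j.castSucc).succ.succ :=
    fun j => Fin.ext (by simp)
  have hprod : ∏ i ∈ ((Finset.univ.erase (0 : Fin (k+3))).erase (Fin.last (k+2))),
      eLpNorm (w i) q μ
      = eLpNorm (w 1) q μ * ∏ j : Fin k, eLpNorm (v j.castSucc) q μ := by
    rw [hset, Finset.prod_image (by
      intro a _ b _ h
      have := congrArg Fin.val h
      simp only [Fin.coe_castSucc, Fin.val_succ] at this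
      exact Fin.ext (by omega))]
    simp only [Fin.prod_univ_succ, e0, es, hvdef]
  -- index identities for the last factor
  have hlastK : (fun x => ∫ y, L (Fin.last k) x y * v (Fin.last k) y ∂μ)
      = fun x => ∫ y, K (Fin.last (k+1)) x y * w (Fin.last (k+2)) y ∂μ := by
    rw [hLdef, hvdef]
    simp [Fin.succ_last]
  -- final assembly
  calc ENNReal.ofReal |∫ y, G y ∂(Measure.pi fun _ : Fin (k+3) => μ)|
      = ENNReal.ofReal |∫ ys, G' ys ∂(Measure.pi fun _ : Fin (k+2) => μ)| := by rw [hred]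
    _ ≤ C ^ k * eLpNorm f0 t μ *
          eLpNorm (fun x => ∫ y, L (Fin.last k) x y * v (Fin.last k) y ∂μ)
            (ENNReal.ofReal r) μ *
          ∏ j : Fin k, eLpNorm (v j.castSucc) q μ := hcore
    _ ≤ C ^ k * (eLpNorm Tw (ENNReal.ofReal r) μ * eLpNorm (w 1) q μ) *
          eLpNorm (fun x => ∫ y, L (Fin.last k) x y * v (Fin.last k) y ∂μ)
            (ENNReal.ofReal r) μ *
          ∏ j : Fin k, eLpNorm (v j.castSucc) q μ :=
        mul_le_mul' (mul_le_mul' (mul_le_mul' le_rfl hf0le) le_rfl) le_rfl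
    _ = C ^ k * eLpNorm Tw (ENNReal.ofReal r) μ *
          eLpNorm (fun x => ∫ y, K (Fin.last (k+1)) x y * w (Fin.last (k+2)) y ∂μ)
            (ENNReal.ofReal r) μ *
          (eLpNorm (w 1) q μ * ∏ j : Fin k, eLpNorm (v j.castSucc) q μ) := by
        rw [hlastK]; ring
    _ = C ^ k *
          eLpNorm Tw (ENNReal.ofReal r) μ *
          eLpNorm (fun x => ∫ y, K (Fin.last (k+1)) x y * w (Fin.last (k+2)) y ∂μ)
            (ENNReal.ofReal r) μ *
          ∏ i ∈ (Finset.univ.erase 0).erase (Fin.last (k+2)), eLpNorm (w i) q μ := by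
        rw [hprod]
end

section
/- Let μ be a σ-finite measure, w a measurable weight function bounded away from 0 and ∞, and let Π_w and Π denote the weighted projections in L_2(μ) onto a fixed closed subspace L relative to the weight functions w and 1 respectively; let M_w denote multiplication by w. Then for any conjugate exponents r^{-1} + s^{-1} = 1 and p^{-1} + q^{-1} = 1 and any g ∈ L_2(μ), ‖(Π_w − Π M_w) g‖_r ≤ ‖Π‖_s · ‖Π_w g‖_{rq} · ‖w − 1‖_{rp}, provided Π is bounded as an operator on L_s(μ) with norm ‖Π‖_s. -/
open MeasureTheory ENNReal

lemma ofReal_norm_eq_coe_nnnorm (a : ℝ) : ENNReal.ofReal ‖a‖ = (‖a‖₊ : ℝ≥0∞) := ofReal_norm a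

lemma eLpNorm_eq_lintegral_rpow_nnnorm {X : Type*} [MeasurableSpace X] {μ : Measure X}
    {f : X → ℝ} {p : ℝ≥0∞} (hp0 : p ≠ 0) (hpt : p ≠ ∞) :
    eLpNorm f p μ = (∫⁻ x, (‖f x‖₊ : ℝ≥0∞) ^ p.toReal ∂μ) ^ (1 / p.toReal) :=
  eLpNorm_eq_lintegral_rpow_enorm_toReal hp0 hpt

/-- Auxiliary duality lemma: if the pairing of `f` against every nice test function `φ`
is bounded by `B * ‖φ‖_s`, then `‖f‖_r ≤ B`, where `r, s` are conjugate exponents. -/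
lemma aux_duality_bound {X : Type*} [MeasurableSpace X] {μ : Measure X} [SigmaFinite μ]
    {f : X → ℝ} (hf : Measurable f) {r s : ℝ} (hr : 1 < r) (hrs : 1 / r + 1 / s = 1)
    (B : ℝ≥0∞)
    (H : ∀ φ : X → ℝ, Measurable φ → (∀ t : ℝ≥0∞, MemLp φ t μ) →
      ENNReal.ofReal (∫ x, f x * φ x ∂μ) ≤ B * eLpNorm φ (ENNReal.ofReal s) μ) :
    eLpNorm f (ENNReal.ofReal r) μ ≤ B := by
  have hr0 : (0:ℝ) < r := zero_lt_one.trans hr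
  have h1r : 1 / r < 1 := by
    rw [div_lt_one hr0]; exact hr
  have h1rpos : 0 < 1 / r := by positivity
  have hsinv : 1 / s = 1 - 1 / r := by linarith
  have hs0 : (0:ℝ) < s := by
    have : 0 < 1 / s := by rw [hsinv]; linarith
    exact (one_div_pos).mp this
  have hs1 : 1 < s := by
    have h : 1 / s < 1 := by rw [hsinv]; linarith
    rw [div_lt_one hs0] at h; exact h
  have hkey : (r - 1) * s = r := by
    have hrne : r ≠ 0 := hr0.ne'
    have hsne : s ≠ 0 := hs0.ne'
    field_simp at hrs
    nlinarith [hrs]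
  -- exhaustion sets
  set E : ℕ → Set X := fun n => spanningSets μ n ∩ {x | |f x| ≤ (n:ℝ)} with hE
  have hEmeas : ∀ n, MeasurableSet (E n) := fun n =>
    (measurableSet_spanningSets μ n).inter (measurableSet_le hf.abs measurable_const)
  have hEfin : ∀ n, μ (E n) < ∞ := fun n =>
    lt_of_le_of_lt (measure_mono Set.inter_subset_left) (measure_spanningSets_lt_top μ n)
  have hEmono : Monotone E := by
    intro m n hmn
    refine Set.inter_subset_inter (monotone_spanningSets μ hmn) ?_
    intro x hx
    simp only [Set.mem_setOf_eq] at hx ⊢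
    exact hx.trans (by exact_mod_cast Nat.cast_le.mpr hmn)
  have hEunion : ∀ x, ∃ n, x ∈ E n := by
    intro x
    obtain ⟨m, hm⟩ : ∃ m, x ∈ spanningSets μ m := by
      have : x ∈ ⋃ i, spanningSets μ i := by rw [iUnion_spanningSets]; trivial
      exact Set.mem_iUnion.mp this
    refine ⟨max m ⌈|f x|⌉₊, monotone_spanningSets μ (le_max_left _ _) hm, ?_⟩
    have h1 : |f x| ≤ (⌈|f x|⌉₊ : ℝ) := Nat.le_ceil _
    have h2 : ((⌈|f x|⌉₊ : ℕ) : ℝ) ≤ ((max m ⌈|f x|⌉₊ : ℕ) : ℝ) := by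
      exact_mod_cast Nat.cast_le.mpr (le_max_right _ _)
    exact le_trans h1 h2
  set F : X → ℝ≥0∞ := fun x => (‖f x‖₊ : ℝ≥0∞) ^ r with hF
  have hFmeas : Measurable F := (hf.nnnorm.coe_nnreal_ennreal).pow measurable_const
  set A : ℕ → ℝ≥0∞ := fun n => ∫⁻ x, (E n).indicator F x ∂μ with hA
  have hAfin : ∀ n, A n < ∞ := by
    intro n
    have hbd : ∀ x, (E n).indicator F x ≤ (E n).indicator (fun _ => ENNReal.ofReal ((n:ℝ) ^ r)) x := by
      intro x
      by_cases hx : x ∈ E n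
      · rw [Set.indicator_of_mem hx, Set.indicator_of_mem hx]
        have hfx : |f x| ≤ (n:ℝ) := hx.2
        have : (‖f x‖₊ : ℝ≥0∞) ≤ ENNReal.ofReal (n:ℝ) := by
          rw [← ofReal_norm_eq_coe_nnnorm, Real.norm_eq_abs]
          exact ENNReal.ofReal_le_ofReal hfx
        calc (‖f x‖₊ : ℝ≥0∞) ^ r ≤ (ENNReal.ofReal (n:ℝ)) ^ r := ENNReal.rpow_le_rpow this hr0.le
          _ = ENNReal.ofReal ((n:ℝ) ^ r) := ENNReal.ofReal_rpow_of_nonneg (Nat.cast_nonneg n) hr0.le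
      · rw [Set.indicator_of_notMem hx, Set.indicator_of_notMem hx]
    calc A n ≤ ∫⁻ x, (E n).indicator (fun _ => ENNReal.ofReal ((n:ℝ) ^ r)) x ∂μ :=
          lintegral_mono hbd
      _ = ENNReal.ofReal ((n:ℝ) ^ r) * μ (E n) := lintegral_indicator_const (hEmeas n) _
      _ < ∞ := ENNReal.mul_lt_top ENNReal.ofReal_lt_top (hEfin n)
  -- the test functions
  have hmain : ∀ n, A n ≤ B * (A n) ^ (1/s) := by
    intro n
    set φ : X → ℝ := (E n).indicator (fun x => f x * |f x| ^ (r - 2)) with hφ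
    have hφmeas : Measurable φ :=
      (hf.mul ((hf.abs).pow measurable_const)).indicator (hEmeas n)
    have habs : ∀ x, |f x * |f x| ^ (r - 2)| = |f x| ^ (r - 1) := by
      intro x
      rcases eq_or_ne (f x) 0 with h0 | h0
      · rw [h0]
        simp [Real.zero_rpow (by linarith : r - 1 ≠ 0)]
      · have hpos : 0 < |f x| := abs_pos.mpr h0
        rw [abs_mul, abs_of_nonneg (Real.rpow_nonneg (abs_nonneg _) _)]
        have h2 : |f x| ^ (r - 1) = |f x| ^ (1:ℝ) * |f x| ^ (r - 2) := by
          rw [← Real.rpow_add hpos]; congr 1; ring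
        rw [h2, Real.rpow_one]
    have hmul : ∀ x, f x * (f x * |f x| ^ (r - 2)) = |f x| ^ r := by
      intro x
      rcases eq_or_ne (f x) 0 with h0 | h0
      · rw [h0]
        simp [Real.zero_rpow hr0.ne']
      · have hpos : 0 < |f x| := abs_pos.mpr h0
        have h1 : f x * (f x * |f x| ^ (r - 2)) = (|f x| * |f x|) * |f x| ^ (r - 2) := by
          rw [abs_mul_abs_self]; ring
        have h2 : |f x| ^ r = |f x| ^ (1:ℝ) * (|f x| ^ (1:ℝ) * |f x| ^ (r - 2)) := by
          rw [← Real.rpow_add hpos, ← Real.rpow_add hpos]; congr 1; ring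
        rw [h1, h2, Real.rpow_one]; ring
    have hφmem : ∀ t : ℝ≥0∞, MemLp φ t μ := by
      intro t
      refine MemLp.mono (memLp_indicator_const t (hEmeas n) ((n:ℝ) ^ (r-1))
        (Or.inr (hEfin n).ne)) hφmeas.aestronglyMeasurable (ae_of_all _ fun x => ?_)
      by_cases hx : x ∈ E n
      · rw [hφ]
        rw [Set.indicator_of_mem hx, Set.indicator_of_mem hx]
        rw [Real.norm_eq_abs, Real.norm_eq_abs, habs x]
        rw [abs_of_nonneg (Real.rpow_nonneg (Nat.cast_nonneg n) _)]
        exact Real.rpow_le_rpow (abs_nonneg _) hx.2 (by linarith)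
      · rw [hφ]
        rw [Set.indicator_of_notMem hx, Set.indicator_of_notMem hx]
    have hφint : ∀ x, f x * φ x = (E n).indicator (fun x => |f x| ^ r) x := by
      intro x
      by_cases hx : x ∈ E n
      · rw [hφ, Set.indicator_of_mem hx, Set.indicator_of_mem hx, hmul]
      · rw [hφ, Set.indicator_of_notMem hx, Set.indicator_of_notMem hx, mul_zero]
    have hind_eq : ∀ x, ENNReal.ofReal ((E n).indicator (fun x => |f x| ^ r) x)
        = (E n).indicator F x := by
      intro x
      by_cases hx : x ∈ E n
      · rw [Set.indicator_of_mem hx, Set.indicator_of_mem hx, hF]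
        rw [← ENNReal.ofReal_rpow_of_nonneg (abs_nonneg _) hr0.le]
        rw [← Real.norm_eq_abs, ofReal_norm_eq_coe_nnnorm]
      · rw [Set.indicator_of_notMem hx, Set.indicator_of_notMem hx, ENNReal.ofReal_zero]
    have hintval : ∫ x, f x * φ x ∂μ = (A n).toReal := by
      have h1 : ∫ x, f x * φ x ∂μ = ∫ x, (E n).indicator (fun x => |f x| ^ r) x ∂μ := by
        exact integral_congr_ae (ae_of_all _ hφint)
      have h2 : (0:X → ℝ) ≤ᵐ[μ] fun x => (E n).indicator (fun x => |f x| ^ r) x := by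
        refine ae_of_all _ fun x => ?_
        exact Set.indicator_nonneg (fun y _ => Real.rpow_nonneg (abs_nonneg _) _) x
      have h3 : AEStronglyMeasurable (fun x => (E n).indicator (fun x => |f x| ^ r) x) μ :=
        (((hf.abs).pow measurable_const).indicator (hEmeas n)).aestronglyMeasurable
      rw [h1, integral_eq_lintegral_of_nonneg_ae h2 h3]
      congr 1
      rw [hA]
      exact lintegral_congr fun x => hind_eq x
    have hsnorm : eLpNorm φ (ENNReal.ofReal s) μ = (A n) ^ (1/s) := by
      have hs_ne0 : ENNReal.ofReal s ≠ 0 := (ENNReal.ofReal_pos.mpr hs0).ne'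
      rw [eLpNorm_eq_lintegral_rpow_nnnorm hs_ne0 ENNReal.ofReal_ne_top,
        ENNReal.toReal_ofReal hs0.le]
      congr 1
      rw [hA]
      refine lintegral_congr fun x => ?_
      by_cases hx : x ∈ E n
      · have e1 : (‖φ x‖₊ : ℝ≥0∞) = ENNReal.ofReal (|f x| ^ (r - 1)) := by
          rw [← ofReal_norm_eq_coe_nnnorm, Real.norm_eq_abs, hφ, Set.indicator_of_mem hx, habs x]
        rw [Set.indicator_of_mem hx, e1,
          ENNReal.ofReal_rpow_of_nonneg (Real.rpow_nonneg (abs_nonneg _) _) hs0.le,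
          ← Real.rpow_mul (abs_nonneg _), hkey]
        show ENNReal.ofReal (|f x| ^ r) = (‖f x‖₊ : ℝ≥0∞) ^ r
        rw [← ofReal_norm_eq_coe_nnnorm, Real.norm_eq_abs,
          ENNReal.ofReal_rpow_of_nonneg (abs_nonneg _) hr0.le]
      · rw [Set.indicator_of_notMem hx, hφ, Set.indicator_of_notMem hx]
        rw [nnnorm_zero]
        simp [ENNReal.zero_rpow_of_pos hs0]
    have := H φ hφmeas hφmem
    rw [hintval, hsnorm, ENNReal.ofReal_toReal (hAfin n).ne] at this
    exact this
  have hstep : ∀ n, A n ≤ B ^ r := by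
    intro n
    rcases eq_or_ne (A n) 0 with h0 | h0
    · rw [h0]; exact zero_le
    have hfin := (hAfin n).ne
    have hsplit : A n = A n ^ (1/r) * A n ^ (1/s) := by
      rw [← ENNReal.rpow_add _ _ h0 hfin, hrs, ENNReal.rpow_one]
    have h1 : A n ^ (1/r) * A n ^ (1/s) ≤ B * A n ^ (1/s) := by
      rw [← hsplit]; exact hmain n
    have hc0 : A n ^ (1/s) ≠ 0 := by
      simp only [ne_eq, ENNReal.rpow_eq_zero_iff, not_or]
      constructor
      · rintro ⟨h, -⟩; exact h0 h
      · rintro ⟨h, -⟩; exact hfin h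
    have hctop : A n ^ (1/s) ≠ ∞ := by
      simp only [ne_eq, ENNReal.rpow_eq_top_iff, not_or]
      constructor
      · rintro ⟨h, hlt⟩
        have : (0:ℝ) < 1/s := by positivity
        linarith
      · rintro ⟨h, -⟩; exact hfin h
    have h2 : A n ^ (1/r) ≤ B := (ENNReal.mul_le_mul_iff_left hc0 hctop).mp h1
    calc A n = (A n ^ (1/r)) ^ r := by
          rw [← ENNReal.rpow_mul, one_div, inv_mul_cancel₀ hr0.ne', ENNReal.rpow_one]
      _ ≤ B ^ r := ENNReal.rpow_le_rpow h2 hr0.le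
  have hlim : ∫⁻ x, F x ∂μ = ⨆ n, A n := by
    have hmono : Monotone (fun n => (E n).indicator F) := by
      intro m n hmn
      exact Set.indicator_le_indicator_of_subset (hEmono hmn) (fun _ => zero_le)
    have hsup : ∀ x, ⨆ n, (E n).indicator F x = F x := by
      intro x
      refine le_antisymm (iSup_le fun n => Set.indicator_le_self _ _ x) ?_
      obtain ⟨n, hn⟩ := hEunion x
      refine le_iSup_of_le n ?_
      rw [Set.indicator_of_mem hn]
    rw [hA]
    rw [← lintegral_iSup (fun n => hFmeas.indicator (hEmeas n)) hmono]
    exact lintegral_congr fun x => (hsup x).symm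
  have hfinal : ∫⁻ x, F x ∂μ ≤ B ^ r := by
    rw [hlim]; exact iSup_le hstep
  have hr_ne0 : ENNReal.ofReal r ≠ 0 := (ENNReal.ofReal_pos.mpr hr0).ne'
  rw [eLpNorm_eq_lintegral_rpow_nnnorm hr_ne0 ENNReal.ofReal_ne_top,
    ENNReal.toReal_ofReal hr0.le]
  calc (∫⁻ x, (‖f x‖₊ : ℝ≥0∞) ^ r ∂μ) ^ (1/r) ≤ (B ^ r) ^ (1/r) :=
        ENNReal.rpow_le_rpow hfinal (by positivity)
    _ = B := by rw [← ENNReal.rpow_mul, mul_one_div, div_self hr0.ne', ENNReal.rpow_one]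

/-- **Lemma (difference of weighted and unweighted projections, part (i)).**
Let `Pw` and `P` be the weighted projections in `L₂(μ)` onto a closed subspace `L`
relative to the weights `w` and `1`, and `M_w` multiplication by `w`. For conjugate pairs
`r⁻¹ + s⁻¹ = 1` and `p⁻¹ + q⁻¹ = 1`, if `P` is bounded on `L_s(μ)` with norm at most `Cs`,
then `‖(Pw − P M_w) g‖_r ≤ Cs · ‖Pw g‖_{rq} · ‖w − 1‖_{rp}` for all `g ∈ L₂(μ)`. -/
theorem difference_of_projections_i
    {X : Type*} [MeasurableSpace X] (μ : Measure X) [SigmaFinite μ]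
    (w : X → ℝ) (hwm : Measurable w)
    (hw : ∃ c C : ℝ, 0 < c ∧ ∀ x, c ≤ w x ∧ w x ≤ C)
    (L : Submodule ℝ (X → ℝ)) (hL : ∀ l ∈ L, MemLp l 2 μ)
    (Pw P : (X → ℝ) → (X → ℝ))
    (hPwL : ∀ g, MemLp g 2 μ → Pw g ∈ L)
    (hPworth : ∀ g, MemLp g 2 μ → ∀ l ∈ L, ∫ x, (g x - Pw g x) * l x * w x ∂μ = 0)
    (hPL : ∀ g, MemLp g 2 μ → P g ∈ L)
    (hPorth : ∀ g, MemLp g 2 μ → ∀ l ∈ L, ∫ x, (g x - P g x) * l x ∂μ = 0)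
    (r s p q : ℝ) (hr : 1 < r) (hrs : 1 / r + 1 / s = 1)
    (hp : 1 < p) (hpq : 1 / p + 1 / q = 1)
    (Cs : ℝ≥0∞)
    (hPnorm : ∀ h, MemLp h (ENNReal.ofReal s) μ →
      eLpNorm (P h) (ENNReal.ofReal s) μ ≤ Cs * eLpNorm h (ENNReal.ofReal s) μ)
    (g : X → ℝ) (hg : MemLp g 2 μ) :
    eLpNorm (fun x => Pw g x - P (fun y => w y * g y) x) (ENNReal.ofReal r) μ
      ≤ Cs * eLpNorm (Pw g) (ENNReal.ofReal (r * q)) μ *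
          eLpNorm (fun x => w x - 1) (ENNReal.ofReal (r * p)) μ := by
  obtain ⟨c, C, hc, hwb⟩ := hw
  have hr0 : (0:ℝ) < r := zero_lt_one.trans hr
  have hp0 : (0:ℝ) < p := zero_lt_one.trans hp
  have h1r : 1 / r < 1 := by rw [div_lt_one hr0]; exact hr
  have hsinv : 1 / s = 1 - 1 / r := by linarith
  have hs0 : (0:ℝ) < s := by
    have h : 0 < 1 / s := by rw [hsinv]; linarith
    exact (one_div_pos).mp h
  have h1p : 1 / p < 1 := by rw [div_lt_one hp0]; exact hp
  have hqinv : 1 / q = 1 - 1 / p := by linarith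
  have hq0 : (0:ℝ) < q := by
    have h : 0 < 1 / q := by rw [hqinv]; linarith
    exact (one_div_pos).mp h
  -- boundedness of w
  have hwabs : ∀ x, |w x| ≤ |C| := by
    intro x
    rcases hwb x with ⟨h1, h2⟩
    rw [abs_le]
    refine ⟨?_, h2.trans (le_abs_self C)⟩
    have := neg_abs_le C
    nlinarith [le_abs_self C, abs_nonneg C]
  have hwtop : MemLp w ∞ μ := memLp_top_of_bound hwm.aestronglyMeasurable |C|
    (ae_of_all _ fun x => by rw [Real.norm_eq_abs]; exact hwabs x)
  have hw1top : MemLp (fun x => 1 - w x) ∞ μ :=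
    memLp_top_of_bound ((measurable_const.sub hwm).aestronglyMeasurable) (1 + |C|)
      (ae_of_all _ fun x => by
        calc ‖(1:ℝ) - w x‖ ≤ ‖(1:ℝ)‖ + ‖w x‖ := norm_sub_le _ _
          _ ≤ 1 + |C| := by rw [Real.norm_eq_abs, Real.norm_eq_abs]; simp [hwabs x])
  -- integrability of products of L² functions
  have int2 : ∀ a b : X → ℝ, MemLp a 2 μ → MemLp b 2 μ →
      Integrable (fun x => a x * b x) μ := by
    intro a b ha hb
    have h := MemLp.smul (r := 1) hb ha (hpqr := ⟨by rw [inv_one, ← one_div, ENNReal.add_halves]⟩)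
    rw [memLp_one_iff_integrable] at h
    exact h
  -- membership of various products
  have hwg2 : MemLp (fun x => w x * g x) 2 μ := by
    have h := MemLp.smul (r := 2) (p := ∞) hg hwtop
    exact h
  have hPgL : Pw g ∈ L := hPwL g hg
  have hPg2 : MemLp (Pw g) 2 μ := hL _ hPgL
  have hPWgL : P (fun y => w y * g y) ∈ L := hPL _ hwg2
  have hPWg2 : MemLp (P (fun y => w y * g y)) 2 μ := hL _ hPWgL
  have hfL : (fun x => Pw g x - P (fun y => w y * g y) x) ∈ L := L.sub_mem hPgL hPWgL
  have hf2 : MemLp (fun x => Pw g x - P (fun y => w y * g y) x) 2 μ := hL _ hfL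
  have hu2 : MemLp (fun x => (1 - w x) * Pw g x) 2 μ := by
    have h := MemLp.smul (r := 2) (p := ∞) hPg2 hw1top
    exact h
  have hwPg2 : MemLp (fun x => w x * Pw g x) 2 μ := by
    have h := MemLp.smul (r := 2) (p := ∞) hPg2 hwtop
    exact h
  -- key identity : the difference pairs like u = (1-w)·Pw g against L
  have hkeyid : ∀ l ∈ L, ∫ x, (Pw g x - P (fun y => w y * g y) x) * l x ∂μ
      = ∫ x, (1 - w x) * Pw g x * l x ∂μ := by
    intro l hl
    have hl2 := hL l hl
    have iPgl : Integrable (fun x => Pw g x * l x) μ := int2 _ _ hPg2 hl2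
    have iPWgl : Integrable (fun x => P (fun y => w y * g y) x * l x) μ := int2 _ _ hPWg2 hl2
    have iwgl : Integrable (fun x => (w x * g x) * l x) μ := int2 _ _ hwg2 hl2
    have iwPgl : Integrable (fun x => (w x * Pw g x) * l x) μ := int2 _ _ hwPg2 hl2
    have E1 : ∫ x, (w x * g x) * l x ∂μ = ∫ x, (w x * Pw g x) * l x ∂μ := by
      have h0 := hPworth g hg l hl
      have h0' : ∫ x, ((w x * g x) * l x - (w x * Pw g x) * l x) ∂μ = 0 := by
        rw [← h0]
        exact integral_congr_ae (ae_of_all _ fun x => by beta_reduce; ring)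
      rw [integral_sub iwgl iwPgl] at h0'
      linarith
    have E2 : ∫ x, (w x * g x) * l x ∂μ = ∫ x, P (fun y => w y * g y) x * l x ∂μ := by
      have h0 := hPorth _ hwg2 l hl
      have h0' : ∫ x, ((w x * g x) * l x - P (fun y => w y * g y) x * l x) ∂μ = 0 := by
        rw [← h0]
        exact integral_congr_ae (ae_of_all _ fun x => by beta_reduce; ring)
      rw [integral_sub iwgl iPWgl] at h0'
      linarith
    have lhs : ∫ x, (Pw g x - P (fun y => w y * g y) x) * l x ∂μ
        = ∫ x, Pw g x * l x ∂μ - ∫ x, P (fun y => w y * g y) x * l x ∂μ := by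
      rw [← integral_sub iPgl iPWgl]
      exact integral_congr_ae (ae_of_all _ fun x => by ring)
    have rhs : ∫ x, (1 - w x) * Pw g x * l x ∂μ
        = ∫ x, Pw g x * l x ∂μ - ∫ x, (w x * Pw g x) * l x ∂μ := by
      rw [← integral_sub iPgl iwPgl]
      exact integral_congr_ae (ae_of_all _ fun x => by ring)
    rw [lhs, rhs, ← E2, E1]
  -- measurable representative
  have hfa := hf2.aestronglyMeasurable
  set f' : X → ℝ := hfa.mk _ with hf'def
  have hf'meas : Measurable f' := hfa.stronglyMeasurable_mk.measurable
  have hff' : (fun x => Pw g x - P (fun y => w y * g y) x) =ᵐ[μ] f' := hfa.ae_eq_mk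
  -- main duality bound
  have hmain : eLpNorm f' (ENNReal.ofReal r) μ
      ≤ Cs * eLpNorm (fun x => (1 - w x) * Pw g x) (ENNReal.ofReal r) μ := by
    apply aux_duality_bound hf'meas hr hrs
    intro φ hφm hφall
    have hφ2 := hφall 2
    have hφs := hφall (ENNReal.ofReal s)
    have hPφL := hPL φ hφ2
    have hPφ2 := hL _ hPφL
    have e0 : ∫ x, f' x * φ x ∂μ
        = ∫ x, (Pw g x - P (fun y => w y * g y) x) * φ x ∂μ :=
      integral_congr_ae (by filter_upwards [hff'.symm] with x hx; rw [hx])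
    have e1 : ∫ x, (Pw g x - P (fun y => w y * g y) x) * φ x ∂μ
        = ∫ x, (Pw g x - P (fun y => w y * g y) x) * P φ x ∂μ := by
      have h0 := hPorth φ hφ2 _ hfL
      have iφf : Integrable
          (fun x => φ x * (Pw g x - P (fun y => w y * g y) x)) μ := int2 _ _ hφ2 hf2
      have iPφf : Integrable
          (fun x => P φ x * (Pw g x - P (fun y => w y * g y) x)) μ := int2 _ _ hPφ2 hf2
      have h0' : ∫ x, (φ x * (Pw g x - P (fun y => w y * g y) x)
          - P φ x * (Pw g x - P (fun y => w y * g y) x)) ∂μ = 0 := by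
        rw [← h0]
        exact integral_congr_ae (ae_of_all _ fun x => by beta_reduce; ring)
      rw [integral_sub iφf iPφf] at h0'
      calc ∫ x, (Pw g x - P (fun y => w y * g y) x) * φ x ∂μ
          = ∫ x, φ x * (Pw g x - P (fun y => w y * g y) x) ∂μ :=
            integral_congr_ae (ae_of_all _ fun x => by ring)
        _ = ∫ x, P φ x * (Pw g x - P (fun y => w y * g y) x) ∂μ := by linarith
        _ = ∫ x, (Pw g x - P (fun y => w y * g y) x) * P φ x ∂μ :=
            integral_congr_ae (ae_of_all _ fun x => by ring)
    have e2 := hkeyid (P φ) hPφL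
    have hconj : Real.HolderConjugate r s :=
      Real.holderConjugate_iff.mpr ⟨hr, by rw [← one_div, ← one_div]; exact hrs⟩
    have hHolder : (∫⁻ x, ENNReal.ofReal ‖(1 - w x) * Pw g x * P φ x‖ ∂μ)
        ≤ eLpNorm (fun x => (1 - w x) * Pw g x) (ENNReal.ofReal r) μ
          * eLpNorm (P φ) (ENNReal.ofReal s) μ := by
      have hH := ENNReal.lintegral_mul_le_Lp_mul_Lq μ hconj
        (hu2.aestronglyMeasurable.enorm) (hPφ2.aestronglyMeasurable.enorm)
      rw [eLpNorm_eq_lintegral_rpow_nnnorm (ENNReal.ofReal_pos.mpr hr0).ne'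
          ENNReal.ofReal_ne_top,
        eLpNorm_eq_lintegral_rpow_nnnorm (ENNReal.ofReal_pos.mpr hs0).ne'
          ENNReal.ofReal_ne_top,
        ENNReal.toReal_ofReal hr0.le, ENNReal.toReal_ofReal hs0.le]
      refine le_trans (le_of_eq ?_) hH
      refine lintegral_congr fun x => ?_
      rw [Pi.mul_apply]
      rw [ofReal_norm_eq_coe_nnnorm]
      rw [show ((1:ℝ) - w x) * Pw g x * P φ x = ((1 - w x) * Pw g x) * P φ x by ring]
      rw [nnnorm_mul, ENNReal.coe_mul]
      rfl
    calc ENNReal.ofReal (∫ x, f' x * φ x ∂μ)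
        = ENNReal.ofReal (∫ x, (1 - w x) * Pw g x * P φ x ∂μ) := by rw [e0, e1, e2]
      _ ≤ ENNReal.ofReal ‖∫ x, (1 - w x) * Pw g x * P φ x ∂μ‖ :=
          ENNReal.ofReal_le_ofReal (le_abs_self _)
      _ ≤ ENNReal.ofReal ((∫⁻ x, ENNReal.ofReal ‖(1 - w x) * Pw g x * P φ x‖ ∂μ).toReal) :=
          ENNReal.ofReal_le_ofReal (norm_integral_le_lintegral_norm _)
      _ ≤ ∫⁻ x, ENNReal.ofReal ‖(1 - w x) * Pw g x * P φ x‖ ∂μ := ENNReal.ofReal_toReal_le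
      _ ≤ eLpNorm (fun x => (1 - w x) * Pw g x) (ENNReal.ofReal r) μ
          * eLpNorm (P φ) (ENNReal.ofReal s) μ := hHolder
      _ ≤ eLpNorm (fun x => (1 - w x) * Pw g x) (ENNReal.ofReal r) μ
          * (Cs * eLpNorm φ (ENNReal.ofReal s) μ) := mul_le_mul_right (hPnorm φ hφs) _
      _ = (Cs * eLpNorm (fun x => (1 - w x) * Pw g x) (ENNReal.ofReal r) μ)
          * eLpNorm φ (ENNReal.ofReal s) μ := by ring
  -- Hölder for u = (1-w)·Pw g
  have hrq0 : (0:ℝ) < r * q := by positivity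
  have hrp0 : (0:ℝ) < r * p := by positivity
  have hreal : r⁻¹ = (r*q)⁻¹ + (r*p)⁻¹ := by
    have hpne : p ≠ 0 := hp0.ne'
    have hqne : q ≠ 0 := hq0.ne'
    have hrne : r ≠ 0 := hr0.ne'
    have h : (r*q)⁻¹ + (r*p)⁻¹ = r⁻¹ * (q⁻¹ + p⁻¹) := by
      rw [mul_inv, mul_inv]; ring
    have h2 : q⁻¹ + p⁻¹ = 1 := by
      rw [← one_div, ← one_div]; linarith [hpq]
    rw [h, h2, mul_one]
  have hexp : 1/(ENNReal.ofReal r) = 1/(ENNReal.ofReal (r*q)) + 1/(ENNReal.ofReal (r*p)) := by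
    rw [one_div, one_div, one_div, ← ENNReal.ofReal_inv_of_pos hr0,
      ← ENNReal.ofReal_inv_of_pos hrq0, ← ENNReal.ofReal_inv_of_pos hrp0,
      ← ENNReal.ofReal_add (by positivity) (by positivity)]
    exact congrArg _ hreal
  have hH2 := eLpNorm_le_eLpNorm_mul_eLpNorm'_of_norm (μ := μ)
    (p := ENNReal.ofReal (r*q)) (q := ENNReal.ofReal (r*p)) (r := ENNReal.ofReal r)
    (f := Pw g) (g := fun x => w x - 1)
    (hPg2.aestronglyMeasurable)
    ((hwm.sub measurable_const).aestronglyMeasurable) (fun (a c : ℝ) => -(c * a)) 1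
    (ae_of_all _ fun x => by
      rw [norm_neg, norm_mul, NNReal.coe_one, one_mul]; exact le_of_eq (mul_comm _ _))
    (hpqr := ⟨by simpa only [one_div] using hexp.symm⟩)
  have hcongr : eLpNorm (fun x => (1 - w x) * Pw g x) (ENNReal.ofReal r) μ
      = eLpNorm (fun x => -((w x - 1) * Pw g x)) (ENNReal.ofReal r) μ :=
    eLpNorm_congr_ae (ae_of_all _ fun x => by ring)
  calc eLpNorm (fun x => Pw g x - P (fun y => w y * g y) x) (ENNReal.ofReal r) μ
      = eLpNorm f' (ENNReal.ofReal r) μ := eLpNorm_congr_ae hff'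
    _ ≤ Cs * eLpNorm (fun x => (1 - w x) * Pw g x) (ENNReal.ofReal r) μ := hmain
    _ ≤ Cs * (eLpNorm (Pw g) (ENNReal.ofReal (r * q)) μ
        * eLpNorm (fun x => w x - 1) (ENNReal.ofReal (r * p)) μ) := by
        refine mul_le_mul_right ?_ _
        rw [hcongr]
        simpa only [ENNReal.coe_one, one_mul] using hH2
    _ = Cs * eLpNorm (Pw g) (ENNReal.ofReal (r * q)) μ *
        eLpNorm (fun x => w x - 1) (ENNReal.ofReal (r * p)) μ := (mul_assoc _ _ _).symm
end

section
/- Let μ be a σ-finite measure, w a measurable weight function bounded away from 0 and ∞, and let Π_w and Π denote the weighted projections in L_2(μ) onto a fixed closed subspace L relative to the weight functions w and 1 respectively. Then for any conjugate exponents r^{-1} + s^{-1} = 1 and p^{-1} + q^{-1} = 1 and any g ∈ L_2(μ), ‖(Π_w − Π) g‖_r ≤ ‖Π‖_s · ‖(I − Π_w) g‖_{rq} · ‖w − 1‖_{rp}, provided Π is bounded as an operator on L_s(μ) with norm ‖Π‖_s. -/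
open MeasureTheory ENNReal

private lemma int_mul_of_L2' {X : Type*} [MeasurableSpace X] {μ : Measure X}
    {a b : X → ℝ} (ha : MemLp a 2 μ) (hb : MemLp b 2 μ) :
    Integrable (fun x => a x * b x) μ := by
  have h : MemLp (a • b) 1 μ := by
    exact hb.smul ha
  rw [memLp_one_iff_integrable] at h
  exact h

/-- **Lemma (difference of weighted and unweighted projections, part (ii)).**
Let `Pw` and `P` be the weighted projections in `L₂(μ)` onto a closed subspace `L`
relative to the weights `w` and `1`. For conjugate pairs
`r⁻¹ + s⁻¹ = 1` and `p⁻¹ + q⁻¹ = 1`, if `P` is bounded on `L_s(μ)` with norm at most `Cs`,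
then `‖(Pw − P) g‖_r ≤ Cs · ‖(I − Pw) g‖_{rq} · ‖w − 1‖_{rp}` for all `g ∈ L₂(μ)`. -/
theorem difference_of_projections_ii
    {X : Type*} [MeasurableSpace X] (μ : Measure X) [SigmaFinite μ]
    (w : X → ℝ) (hwm : Measurable w)
    (hw : ∃ c C : ℝ, 0 < c ∧ ∀ x, c ≤ w x ∧ w x ≤ C)
    (L : Submodule ℝ (X → ℝ)) (hL : ∀ l ∈ L, MemLp l 2 μ)
    (Pw P : (X → ℝ) → (X → ℝ))
    (hPwL : ∀ g, MemLp g 2 μ → Pw g ∈ L)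
    (hPworth : ∀ g, MemLp g 2 μ → ∀ l ∈ L, ∫ x, (g x - Pw g x) * l x * w x ∂μ = 0)
    (hPL : ∀ g, MemLp g 2 μ → P g ∈ L)
    (hPorth : ∀ g, MemLp g 2 μ → ∀ l ∈ L, ∫ x, (g x - P g x) * l x ∂μ = 0)
    (r s p q : ℝ) (hr : 1 < r) (hrs : 1 / r + 1 / s = 1)
    (hp : 1 < p) (hpq : 1 / p + 1 / q = 1)
    (Cs : ℝ≥0∞)
    (hPnorm : ∀ h, MemLp h (ENNReal.ofReal s) μ →
      eLpNorm (P h) (ENNReal.ofReal s) μ ≤ Cs * eLpNorm h (ENNReal.ofReal s) μ)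
    (g : X → ℝ) (hg : MemLp g 2 μ) :
    eLpNorm (fun x => Pw g x - P g x) (ENNReal.ofReal r) μ
      ≤ Cs * eLpNorm (fun x => g x - Pw g x) (ENNReal.ofReal (r * q)) μ *
          eLpNorm (fun x => w x - 1) (ENNReal.ofReal (r * p)) μ := by
  classical
  obtain ⟨c, C, hc, hwb⟩ := hw
  -- exponent arithmetic
  have hr0 : (0:ℝ) < r := lt_trans one_pos hr
  have hrinv : 1 / r < 1 := by rw [div_lt_one hr0]; exact hr
  have hsinv : 0 < 1 / s := by linarith
  have hs0 : (0:ℝ) < s := by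
    by_contra h
    push_neg at h
    have : 1 / s ≤ 0 := one_div_nonpos.mpr h
    linarith
  have hp0 : (0:ℝ) < p := lt_trans one_pos hp
  have hpinv : 1 / p < 1 := by rw [div_lt_one hp0]; exact hp
  have hqinv : 0 < 1 / q := by linarith
  have hq0 : (0:ℝ) < q := by
    by_contra h
    push_neg at h
    have : 1 / q ≤ 0 := one_div_nonpos.mpr h
    linarith
  have hrne : r ≠ 0 := hr0.ne'
  have hrm1 : r - 1 ≠ 0 := sub_ne_zero.mpr hr.ne'
  have hsne : s ≠ 0 := hs0.ne'
  have hseq : (r - 1) * s = r := by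
    have hmul : s + r = r * s := by
      field_simp at hrs
      linarith
    nlinarith
  have hconj2r : 1 / (r * q) + 1 / (r * p) = 1 / r := by
    have h1 : 1 / (r * q) + 1 / (r * p) = (1 / r) * (1 / q + 1 / p) := by
      field_simp
    rw [h1]
    have : 1 / q + 1 / p = 1 := by linarith
    rw [this, mul_one]
  have hofdiv : ∀ a : ℝ, 0 < a → 1 / ENNReal.ofReal a = ENNReal.ofReal (1 / a) := by
    intro a ha
    rw [one_div, one_div, ← ENNReal.ofReal_inv_of_pos ha]
  have hconj1 : 1 / ENNReal.ofReal r + 1 / ENNReal.ofReal s = 1 := by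
    rw [hofdiv r hr0, hofdiv s hs0, ← ENNReal.ofReal_add (by positivity) (by positivity),
      hrs, ENNReal.ofReal_one]
  have hconj2 : 1 / ENNReal.ofReal r
      = 1 / ENNReal.ofReal (r * q) + 1 / ENNReal.ofReal (r * p) := by
    rw [hofdiv r hr0, hofdiv (r * q) (by positivity), hofdiv (r * p) (by positivity),
      ← ENNReal.ofReal_add (by positivity) (by positivity), hconj2r]
  -- memberships
  have hPwgL := hPwL g hg
  have hPgL := hPL g hg
  have hPwg2 : MemLp (Pw g) 2 μ := hL _ hPwgL
  have hPg2 : MemLp (P g) 2 μ := hL _ hPgL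
  have dL : (fun x => Pw g x - P g x) ∈ L := L.sub_mem hPwgL hPgL
  set d : X → ℝ := fun x => Pw g x - P g x with hd
  have d2 : MemLp d 2 μ := hL _ dL
  have u2 : MemLp (fun x => g x - Pw g x) 2 μ := hg.sub hPwg2
  -- measurable representative
  have hdm := d2.aestronglyMeasurable
  set dm : X → ℝ := hdm.mk d with hdmdef
  have hdm_ae : d =ᵐ[μ] dm := hdm.ae_eq_mk
  have hdmM : Measurable dm := hdm.stronglyMeasurable_mk.measurable
  -- truncations
  set A : ℕ → Set X := spanningSets μ with hA
  set e : ℕ → X → ℝ := fun n => (A n).indicator (fun x => min |dm x| n) with he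
  have he_nonneg : ∀ n x, 0 ≤ e n x := by
    intro n x
    simp only [he]
    exact Set.indicator_nonneg (fun y _ => le_min (abs_nonneg _) (Nat.cast_nonneg _)) x
  have he_le_abs : ∀ n x, e n x ≤ |dm x| := by
    intro n x
    simp only [he]
    by_cases hx : x ∈ A n
    · rw [Set.indicator_of_mem hx]; exact min_le_left _ _
    · rw [Set.indicator_of_notMem hx]; exact abs_nonneg _
  have he_le_n : ∀ n x, e n x ≤ (n : ℝ) := by
    intro n x
    simp only [he]
    by_cases hx : x ∈ A n
    · rw [Set.indicator_of_mem hx]; exact min_le_right _ _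
    · rw [Set.indicator_of_notMem hx]; exact Nat.cast_nonneg _
  have he_meas : ∀ n, Measurable (e n) := by
    intro n
    exact (hdmM.abs.min measurable_const).indicator (measurableSet_spanningSets μ n)
  have he_mono : ∀ x, Monotone fun n => e n x := by
    intro x n m hnm
    simp only [he]
    by_cases hx : x ∈ A n
    · rw [Set.indicator_of_mem hx, Set.indicator_of_mem (monotone_spanningSets μ hnm hx)]
      exact min_le_min le_rfl (Nat.cast_le.mpr hnm)
    · rw [Set.indicator_of_notMem hx]
      exact Set.indicator_nonneg (fun y _ => le_min (abs_nonneg _) (Nat.cast_nonneg _)) x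
  -- sign
  set sgn : X → ℝ := fun x => if dm x < 0 then -1 else 1 with hsgn
  have hsgn_meas : Measurable sgn :=
    Measurable.ite (measurableSet_lt hdmM measurable_const) measurable_const measurable_const
  have hsgn_mul : ∀ x, sgn x * dm x = |dm x| := by
    intro x
    simp only [hsgn]
    by_cases h : dm x < 0
    · rw [if_pos h, abs_of_neg h]; ring
    · rw [if_neg h, abs_of_nonneg (not_lt.mp h)]; ring
  have hsgn_abs : ∀ x, |sgn x| = 1 := by
    intro x
    simp only [hsgn]
    by_cases h : dm x < 0 <;> simp [h]
  -- test functions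
  set f : ℕ → X → ℝ := fun n x => sgn x * (e n x) ^ (r - 1) with hfdef
  have hf_meas : ∀ n, Measurable (f n) := by
    intro n
    exact hsgn_meas.mul ((he_meas n).pow_const _)
  have hf_mem : ∀ (n : ℕ) (t : ℝ≥0∞), MemLp (f n) t μ := by
    intro n t
    have hind : MemLp ((A n).indicator fun _ => ((n : ℝ)) ^ (r - 1)) t μ :=
      memLp_indicator_const t (measurableSet_spanningSets μ n) _
        (Or.inr (measure_spanningSets_lt_top μ n).ne)
    refine MemLp.of_le hind (hf_meas n).aestronglyMeasurable
      (Filter.Eventually.of_forall fun x => ?_)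
    simp only [hfdef]
    rw [Real.norm_eq_abs, abs_mul, hsgn_abs, one_mul,
      abs_of_nonneg (Real.rpow_nonneg (he_nonneg n x) _)]
    by_cases hx : x ∈ A n
    · rw [Set.indicator_of_mem hx, Real.norm_eq_abs]
      refine le_trans (Real.rpow_le_rpow (he_nonneg n x) (he_le_n n x) (by linarith))
        (le_abs_self _)
    · have h0 : e n x = 0 := by simp only [he]; exact Set.indicator_of_notMem hx _
      rw [h0, Real.zero_rpow hrm1]
      exact norm_nonneg _
  -- abbreviations
  set rq' := ENNReal.ofReal (r * q) with hrq'
  set rp' := ENNReal.ofReal (r * p) with hrp'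
  set s' := ENNReal.ofReal s with hs'
  set r' := ENNReal.ofReal r with hr'
  set K := Cs * eLpNorm (fun x => g x - Pw g x) rq' μ * eLpNorm (fun x => w x - 1) rp' μ
    with hKdef
  have key : ∀ n : ℕ, (∫⁻ x, ENNReal.ofReal ((e n x) ^ r) ∂μ) ≤ K ^ r := by
    intro n
    set F := f n with hF
    have hF2 : MemLp F 2 μ := hf_mem n 2
    have hFs : MemLp F s' μ := hf_mem n s'
    have hPFL := hPL F hF2
    have hPF2 : MemLp (P F) 2 μ := hL _ hPFL
    -- integrability facts
    have iFd : Integrable (fun x => F x * d x) μ := int_mul_of_L2' hF2 d2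
    have iPFd : Integrable (fun x => P F x * d x) μ := int_mul_of_L2' hPF2 d2
    have iDF : Integrable (fun x => d x * F x) μ := int_mul_of_L2' d2 hF2
    have iWg : Integrable (fun x => (Pw g x - g x) * P F x) μ :=
      int_mul_of_L2' (hPwg2.sub hg) hPF2
    have iG : Integrable (fun x => (g x - P g x) * P F x) μ :=
      int_mul_of_L2' (hg.sub hPg2) hPF2
    have hbw1 : ∀ᵐ x ∂μ, ‖1 - w x‖ ≤ 1 + C := by
      refine Filter.Eventually.of_forall fun x => ?_
      have h1 := (hwb x).1
      have h2 := (hwb x).2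
      rw [Real.norm_eq_abs, abs_le]
      constructor <;> linarith
    have hbw2 : ∀ᵐ x ∂μ, ‖w x‖ ≤ C := by
      refine Filter.Eventually.of_forall fun x => ?_
      have h1 := (hwb x).1
      have h2 := (hwb x).2
      rw [Real.norm_eq_abs, abs_le]
      constructor <;> linarith
    have i1 : Integrable (fun x => (Pw g x - g x) * P F x * (1 - w x)) μ := by
      have h := Integrable.bdd_mul (c := 1 + C) iWg
        (measurable_const.sub hwm).aestronglyMeasurable hbw1
      exact h.congr (Filter.Eventually.of_forall fun x => by simp only [Pi.sub_apply]; ring)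
    have i2 : Integrable (fun x => (Pw g x - g x) * P F x * w x) μ := by
      have h := Integrable.bdd_mul (c := C) iWg hwm.aestronglyMeasurable hbw2
      exact h.congr (Filter.Eventually.of_forall fun x => by ring)
    -- orthogonality relations
    have o1 : ∫ x, (F x - P F x) * d x ∂μ = 0 := hPorth F hF2 _ dL
    have o2 : ∫ x, (g x - P g x) * P F x ∂μ = 0 := hPorth g hg _ hPFL
    have o3 : ∫ x, (g x - Pw g x) * P F x * w x ∂μ = 0 := hPworth g hg _ hPFL
    -- integral identities
    have step1 : ∫ x, d x * F x ∂μ = ∫ x, P F x * d x ∂μ := by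
      have h1 : ∫ x, (F x - P F x) * d x ∂μ
          = ∫ x, F x * d x ∂μ - ∫ x, P F x * d x ∂μ := by
        rw [← integral_sub iFd iPFd]
        exact integral_congr_ae (Filter.Eventually.of_forall fun x => by ring)
      have h2 : ∫ x, d x * F x ∂μ = ∫ x, F x * d x ∂μ :=
        integral_congr_ae (Filter.Eventually.of_forall fun x => by ring)
      rw [o1] at h1
      linarith
    have step2 : ∫ x, P F x * d x ∂μ = ∫ x, (Pw g x - g x) * P F x ∂μ := by
      have h1 : ∫ x, P F x * d x ∂μ
          = ∫ x, ((Pw g x - g x) * P F x + (g x - P g x) * P F x) ∂μ := by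
        refine integral_congr_ae (Filter.Eventually.of_forall fun x => ?_)
        simp only [hd]
        ring
      rw [h1, integral_add iWg iG, o2, add_zero]
    have step3 : ∫ x, (Pw g x - g x) * P F x ∂μ
        = ∫ x, (Pw g x - g x) * P F x * (1 - w x) ∂μ := by
      have h1 : ∫ x, (Pw g x - g x) * P F x ∂μ
          = ∫ x, ((Pw g x - g x) * P F x * (1 - w x)
              + (Pw g x - g x) * P F x * w x) ∂μ :=
        integral_congr_ae (Filter.Eventually.of_forall fun x => by ring)
      have h2 : ∫ x, (Pw g x - g x) * P F x * w x ∂μ = 0 := by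
        have h3 : ∫ x, (Pw g x - g x) * P F x * w x ∂μ
            = - ∫ x, (g x - Pw g x) * P F x * w x ∂μ := by
          rw [← integral_neg]
          exact integral_congr_ae (Filter.Eventually.of_forall fun x => by ring)
        rw [h3, o3, neg_zero]
      rw [h1, integral_add i1 i2, h2, add_zero]
    -- lower bound on the integral
    have iEn : Integrable (fun x => (e n x) ^ r) μ := by
      have hind : Integrable ((A n).indicator fun _ => ((n : ℝ)) ^ r) μ :=
        memLp_one_iff_integrable.mp
          (memLp_indicator_const 1 (measurableSet_spanningSets μ n) _
            (Or.inr (measure_spanningSets_lt_top μ n).ne))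
      refine Integrable.mono' hind ((he_meas n).pow_const r).aestronglyMeasurable
        (Filter.Eventually.of_forall fun x => ?_)
      rw [Real.norm_eq_abs, abs_of_nonneg (Real.rpow_nonneg (he_nonneg n x) _)]
      by_cases hx : x ∈ A n
      · rw [Set.indicator_of_mem hx]
        exact Real.rpow_le_rpow (he_nonneg n x) (he_le_n n x) hr0.le
      · have h0 : e n x = 0 := by
          simp only [he]
          exact Set.indicator_of_notMem hx _
        rw [Set.indicator_of_notMem hx, h0, Real.zero_rpow hrne]
    have hEnJ : ∫ x, (e n x) ^ r ∂μ ≤ ∫ x, d x * F x ∂μ := by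
      refine integral_mono_ae iEn iDF ?_
      filter_upwards [hdm_ae] with x hx
      have h1 : d x * F x = |dm x| * (e n x) ^ (r - 1) := by
        simp only [hF, hfdef]
        rw [hx]
        calc dm x * (sgn x * (e n x) ^ (r - 1))
            = (sgn x * dm x) * (e n x) ^ (r - 1) := by ring
        _ = |dm x| * (e n x) ^ (r - 1) := by rw [hsgn_mul]
      rw [h1]
      rcases eq_or_lt_of_le (he_nonneg n x) with h0 | h0
      · rw [← h0, Real.zero_rpow hrne, Real.zero_rpow hrm1, mul_zero]
      · have h2 : (e n x) ^ r = e n x * (e n x) ^ (r - 1) := by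
          rw [show r = 1 + (r - 1) by ring, Real.rpow_add h0, Real.rpow_one]
          ring_nf
        rw [h2]
        exact mul_le_mul_of_nonneg_right (he_le_abs n x)
          (Real.rpow_nonneg (he_nonneg n x) _)
    set In := ∫⁻ x, ENNReal.ofReal ((e n x) ^ r) ∂μ with hIn
    have hIn_eq : In = ENNReal.ofReal (∫ x, (e n x) ^ r ∂μ) :=
      (ofReal_integral_eq_lintegral_ofReal iEn
        (Filter.Eventually.of_forall fun x => Real.rpow_nonneg (he_nonneg n x) _)).symm
    have hIn_fin : In ≠ ∞ := by rw [hIn_eq]; exact ENNReal.ofReal_ne_top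
    -- Hölder chain
    have iv : Integrable (fun x => ((g x - Pw g x) * (1 - w x)) * P F x) μ :=
      i1.neg.congr (Filter.Eventually.of_forall fun x => by simp; ring)
    have hJv : ∫ x, d x * F x ∂μ
        = - ∫ x, ((g x - Pw g x) * (1 - w x)) * P F x ∂μ := by
      rw [step1, step2, step3, ← integral_neg]
      exact integral_congr_ae (Filter.Eventually.of_forall fun x => by ring)
    have hEnv : ∫ x, (e n x) ^ r ∂μ
        ≤ ∫ x, ‖((g x - Pw g x) * (1 - w x)) * P F x‖ ∂μ := by
      calc ∫ x, (e n x) ^ r ∂μ ≤ ∫ x, d x * F x ∂μ := hEnJ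
      _ = - ∫ x, ((g x - Pw g x) * (1 - w x)) * P F x ∂μ := hJv
      _ ≤ |∫ x, ((g x - Pw g x) * (1 - w x)) * P F x ∂μ| := neg_le_abs _
      _ ≤ ∫ x, ‖((g x - Pw g x) * (1 - w x)) * P F x‖ ∂μ := by
          rw [← Real.norm_eq_abs]
          exact norm_integral_le_integral_norm _
    have hInv : In ≤ eLpNorm (fun x => ((g x - Pw g x) * (1 - w x)) * P F x) 1 μ := by
      rw [hIn_eq, eLpNorm_one_eq_lintegral_enorm,
        ← ofReal_integral_norm_eq_lintegral_enorm iv]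
      exact ENNReal.ofReal_le_ofReal hEnv
    have holder1 : eLpNorm (fun x => ((g x - Pw g x) * (1 - w x)) * P F x) 1 μ
        ≤ eLpNorm (fun x => (g x - Pw g x) * (1 - w x)) r' μ * eLpNorm (P F) s' μ := by
      haveI : ENNReal.HolderTriple r' s' 1 := ⟨by simpa only [one_div, inv_one] using hconj1⟩
      have hh := eLpNorm_le_eLpNorm_mul_eLpNorm_of_nnnorm (p := r') (q := s') (r := 1) (μ := μ)
        (f := fun x => (g x - Pw g x) * (1 - w x)) (g := P F)
        (u2.aestronglyMeasurable.mul (measurable_const.sub hwm).aestronglyMeasurable)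
        hPF2.aestronglyMeasurable (fun a b => a * b) 1
        (Filter.Eventually.of_forall fun x => by rw [one_mul]; exact le_of_eq (nnnorm_mul _ _))
      rw [ENNReal.coe_one, one_mul] at hh
      exact hh
    have holder2 : eLpNorm (fun x => (g x - Pw g x) * (1 - w x)) r' μ
        ≤ eLpNorm (fun x => g x - Pw g x) rq' μ * eLpNorm (fun x => 1 - w x) rp' μ := by
      haveI : ENNReal.HolderTriple rq' rp' r' := ⟨by simpa only [one_div] using hconj2.symm⟩
      have hh := eLpNorm_le_eLpNorm_mul_eLpNorm_of_nnnorm (p := rq') (q := rp') (r := r') (μ := μ)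
        (f := fun x => g x - Pw g x) (g := fun x => 1 - w x) u2.aestronglyMeasurable
        (measurable_const.sub hwm).aestronglyMeasurable (fun a b => a * b) 1
        (Filter.Eventually.of_forall fun x => by rw [one_mul]; exact le_of_eq (nnnorm_mul _ _))
      rw [ENNReal.coe_one, one_mul] at hh
      exact hh
    have hwflip : eLpNorm (fun x => 1 - w x) rp' μ
        = eLpNorm (fun x => w x - 1) rp' μ := by
      have hneg : (fun x => (1 : ℝ) - w x) = -(fun x => w x - 1) := by
        funext x
        simp only [Pi.neg_apply]
        ring
      rw [hneg, eLpNorm_neg]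
    have hPFs : eLpNorm (P F) s' μ ≤ Cs * eLpNorm F s' μ := hPnorm F hFs
    have hFs_eq : eLpNorm F s' μ = In ^ (1 / s) := by
      rw [eLpNorm_eq_lintegral_rpow_enorm_toReal
        (by rw [hs']; exact (ENNReal.ofReal_pos.mpr hs0).ne' : s' ≠ 0)
        (by rw [hs']; exact ENNReal.ofReal_ne_top : s' ≠ ∞), hs',
        ENNReal.toReal_ofReal hs0.le, hIn]
      congr 1
      refine lintegral_congr fun x => ?_
      have habs : ‖F x‖ = (e n x) ^ (r - 1) := by
        simp only [hF, hfdef]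
        rw [Real.norm_eq_abs, abs_mul, hsgn_abs, one_mul,
          abs_of_nonneg (Real.rpow_nonneg (he_nonneg n x) _)]
      calc ((‖F x‖₊ : ℝ≥0∞)) ^ s
          = (ENNReal.ofReal ((e n x) ^ (r - 1))) ^ s := by
            rw [← enorm_eq_nnnorm, ← ofReal_norm, habs]
      _ = ENNReal.ofReal (((e n x) ^ (r - 1)) ^ s) :=
            ENNReal.ofReal_rpow_of_nonneg (Real.rpow_nonneg (he_nonneg n x) _) hs0.le
      _ = ENNReal.ofReal ((e n x) ^ r) := by
            rw [← Real.rpow_mul (he_nonneg n x), hseq]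
    have main : In ≤ K * In ^ (1 / s) := by
      calc In ≤ eLpNorm (fun x => ((g x - Pw g x) * (1 - w x)) * P F x) 1 μ := hInv
      _ ≤ eLpNorm (fun x => (g x - Pw g x) * (1 - w x)) r' μ * eLpNorm (P F) s' μ :=
          holder1
      _ ≤ (eLpNorm (fun x => g x - Pw g x) rq' μ * eLpNorm (fun x => w x - 1) rp' μ)
            * (Cs * In ^ (1 / s)) := by
          refine mul_le_mul' (le_trans holder2 ?_) (le_trans hPFs ?_)
          · rw [hwflip]
          · rw [hFs_eq]
      _ = K * In ^ (1 / s) := by rw [hKdef]; ring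
    rcases eq_or_ne In 0 with h0 | h0
    · rw [h0]
      exact zero_le
    · have hIs0 : In ^ (1 / s) ≠ 0 := by
        simp [ENNReal.rpow_eq_zero_iff, h0, hIn_fin]
      have hIst : In ^ (1 / s) ≠ ∞ :=
        ENNReal.rpow_ne_top_of_nonneg (by positivity) hIn_fin
      have hstep : In ^ (1 / r) * In ^ (1 / s) ≤ K * In ^ (1 / s) := by
        rw [← ENNReal.rpow_add _ _ h0 hIn_fin, hrs, ENNReal.rpow_one]
        exact main
      have hfin : In ^ (1 / r) ≤ K := (ENNReal.mul_le_mul_iff_left hIs0 hIst).mp hstep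
      calc In = (In ^ (1 / r)) ^ r := by
            rw [← ENNReal.rpow_mul, one_div_mul_cancel hrne, ENNReal.rpow_one]
      _ ≤ K ^ r := ENNReal.rpow_le_rpow hfin hr0.le
  -- monotone convergence
  have hmeasφ : ∀ n : ℕ, Measurable fun x => ENNReal.ofReal ((e n x) ^ r) :=
    fun n => ((he_meas n).pow_const r).ennreal_ofReal
  have hmonoφ : Monotone fun (n : ℕ) (x : X) => ENNReal.ofReal ((e n x) ^ r) := by
    intro n m hnm x
    exact ENNReal.ofReal_le_ofReal
      (Real.rpow_le_rpow (he_nonneg n x) (he_mono x hnm) hr0.le)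
  have hptsup : ∀ x, (⨆ n, ENNReal.ofReal ((e n x) ^ r))
      = ((‖dm x‖₊ : ℝ≥0∞)) ^ r := by
    intro x
    have hcoe : ((‖dm x‖₊ : ℝ≥0∞)) ^ r = ENNReal.ofReal (|dm x| ^ r) := by
      rw [← enorm_eq_nnnorm, ← ofReal_norm, Real.norm_eq_abs,
        ENNReal.ofReal_rpow_of_nonneg (abs_nonneg _) hr0.le]
    rw [hcoe]
    apply le_antisymm
    · refine iSup_le fun n => ENNReal.ofReal_le_ofReal ?_
      exact Real.rpow_le_rpow (he_nonneg n x) (he_le_abs n x) hr0.le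
    · obtain ⟨n0, hn0⟩ : ∃ n0, x ∈ A n0 := by
        have hx : x ∈ ⋃ i, A i := by
          rw [hA, iUnion_spanningSets]
          trivial
        exact Set.mem_iUnion.mp hx
    
      set m := max n0 ⌈|dm x|⌉₊ with hm
      have hxm : x ∈ A m := monotone_spanningSets μ (le_max_left _ _) hn0
      have hem : e m x = |dm x| := by
        simp only [he]
        rw [Set.indicator_of_mem hxm]
        refine min_eq_left ?_
        calc |dm x| ≤ (⌈|dm x|⌉₊ : ℝ) := Nat.le_ceil _
        _ ≤ (m : ℝ) := Nat.cast_le.mpr (le_max_right _ _)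
      refine le_trans (le_of_eq ?_) (le_iSup _ m)
      rw [hem]
  have hsup : ∫⁻ x, ((‖dm x‖₊ : ℝ≥0∞)) ^ r ∂μ
      = ⨆ n, ∫⁻ x, ENNReal.ofReal ((e n x) ^ r) ∂μ := by
    rw [← lintegral_iSup hmeasφ hmonoφ]
    exact lintegral_congr fun x => (hptsup x).symm
  have hKbound : ∫⁻ x, ((‖dm x‖₊ : ℝ≥0∞)) ^ r ∂μ ≤ K ^ r := by
    rw [hsup]
    exact iSup_le key
  have hr'0 : r' ≠ 0 := by rw [hr']; exact (ENNReal.ofReal_pos.mpr hr0).ne'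
  have hr't : r' ≠ ∞ := by rw [hr']; exact ENNReal.ofReal_ne_top
  calc eLpNorm d r' μ = eLpNorm dm r' μ := eLpNorm_congr_ae hdm_ae
  _ = (∫⁻ x, ((‖dm x‖₊ : ℝ≥0∞)) ^ r ∂μ) ^ (1 / r) := by
      rw [eLpNorm_eq_lintegral_rpow_enorm_toReal hr'0 hr't, hr', ENNReal.toReal_ofReal hr0.le]
      simp only [enorm_eq_nnnorm]
  _ ≤ (K ^ r) ^ (1 / r) := ENNReal.rpow_le_rpow hKbound (by positivity)
  _ = K := by
      rw [← ENNReal.rpow_mul, mul_one_div, div_self hrne, ENNReal.rpow_one]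
end

section
/- Let μ be a σ-finite measure, w a measurable weight function bounded away from 0 and ∞, and let Π_w and Π denote the weighted projections in L_2(μ) onto a fixed closed subspace L relative to the weight functions w and 1 respectively; let M_w denote multiplication by w. Then for any conjugate exponents r^{-1} + s^{-1} = 1 and any g ∈ L_2(μ), ‖Π M_w g‖_r ≤ ‖Π‖_s · ‖Π_w g‖_r · (2 + ‖w‖_∞), provided Π is bounded as an operator on L_s(μ) with norm ‖Π‖_s. -/
open MeasureTheory ENNReal

private lemma memLp2_integrable_mul {X : Type*} [MeasurableSpace X] {μ : Measure X}
    {f g : X → ℝ} (hf : MemLp f 2 μ) (hg : MemLp g 2 μ) :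
    Integrable (fun x => f x * g x) μ := by
  have h : MemLp (f • g) 1 μ := hg.smul hf (hpqr := ⟨by rw [ENNReal.inv_two_add_inv_two, inv_one]⟩)
  exact memLp_one_iff_integrable.mp h

private lemma ofReal_integral_mul_le {X : Type*} [MeasurableSpace X] {μ : Measure X} {r s : ℝ}
    (hconj : r.HolderConjugate s) {a b : X → ℝ} (ha : MemLp a 2 μ) (hb : MemLp b 2 μ) :
    ENNReal.ofReal (∫ x, a x * b x ∂μ)
      ≤ eLpNorm a (ENNReal.ofReal r) μ * eLpNorm b (ENNReal.ofReal s) μ := by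
  have hint := memLp2_integrable_mul ha hb
  have h1 : ∫ x, a x * b x ∂μ ≤ ∫ x, |a x * b x| ∂μ :=
    integral_mono hint hint.abs fun x => le_abs_self _
  have h2 : ENNReal.ofReal (∫ x, |a x * b x| ∂μ) = ∫⁻ x, ENNReal.ofReal |a x * b x| ∂μ :=
    ofReal_integral_eq_lintegral_ofReal hint.abs
      (Filter.Eventually.of_forall fun x => abs_nonneg _)
  have h3 : ∫⁻ x, ENNReal.ofReal |a x * b x| ∂μ
      = ∫⁻ x, (‖a x‖₊ : ℝ≥0∞) * (‖b x‖₊ : ℝ≥0∞) ∂μ := by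
    refine lintegral_congr fun x => ?_
    rw [abs_mul, ENNReal.ofReal_mul (abs_nonneg _), ← enorm_eq_nnnorm, ← enorm_eq_nnnorm, Real.enorm_eq_ofReal_abs,
      Real.enorm_eq_ofReal_abs]
  have h4 := ENNReal.lintegral_mul_le_Lp_mul_Lq μ hconj
    ha.1.nnnorm.aemeasurable.coe_nnreal_ennreal hb.1.nnnorm.aemeasurable.coe_nnreal_ennreal
  have hr0 : r ≠ 0 := hconj.ne_zero
  have hs0 : s ≠ 0 := hconj.symm.ne_zero
  have hra : (ENNReal.ofReal r) ≠ 0 := by simp [ENNReal.ofReal_eq_zero, hconj.pos.not_ge]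
  have hsa : (ENNReal.ofReal s) ≠ 0 := by simp [ENNReal.ofReal_eq_zero, hconj.symm.pos.not_ge]
  rw [eLpNorm_eq_lintegral_rpow_enorm_toReal hra ENNReal.ofReal_ne_top,
    eLpNorm_eq_lintegral_rpow_enorm_toReal hsa ENNReal.ofReal_ne_top,
    ENNReal.toReal_ofReal hconj.nonneg, ENNReal.toReal_ofReal hconj.symm.nonneg]
  calc ENNReal.ofReal (∫ x, a x * b x ∂μ)
      ≤ ENNReal.ofReal (∫ x, |a x * b x| ∂μ) := ENNReal.ofReal_le_ofReal h1
    _ = ∫⁻ x, (‖a x‖₊ : ℝ≥0∞) * (‖b x‖₊ : ℝ≥0∞) ∂μ := by rw [h2, h3]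
    _ ≤ _ := h4

private lemma aux_dual {X : Type*} [MeasurableSpace X] {μ : Measure X}
    {r s : ℝ} (hr : 1 < r) (hrs : 1 / r + 1 / s = 1)
    {f : X → ℝ} (hf2 : MemLp f 2 μ) (B : ℝ≥0∞)
    (hbound : ∀ φ : X → ℝ, MemLp φ 2 μ → MemLp φ (ENNReal.ofReal s) μ →
      ENNReal.ofReal (∫ x, f x * φ x ∂μ) ≤ B * eLpNorm φ (ENNReal.ofReal s) μ) :
    eLpNorm f (ENNReal.ofReal r) μ ≤ B := by
  have hconj : r.HolderConjugate s := Real.holderConjugate_iff.mpr ⟨hr, by simpa [one_div] using hrs⟩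
  have hr0 : (0:ℝ) < r := hconj.pos
  have hs0 : (0:ℝ) < s := hconj.symm.pos
  have hrs_mul : (r - 1) * s = r := hconj.sub_one_mul_conj
  obtain ⟨f', hf'sm, hff'⟩ := hf2.1
  have hf'm : Measurable f' := hf'sm.measurable
  have hf'2 : MemLp f' 2 μ := hf2.ae_eq hff'
  set E : ℕ → Set X := fun n => {x | 1 / (n + 1 : ℝ) ≤ |f' x|} with hE
  have hEm : ∀ n, MeasurableSet (E n) := fun n =>
    measurableSet_le measurable_const hf'm.abs
  have hEfin : ∀ n, μ (E n) < ∞ := by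
    intro n
    have hn : (0:ℝ) < 1 / (n+1) := by positivity
    have h2 := hf'2.meas_ge_lt_top' (by norm_num) (by norm_num)
      (ε := ENNReal.ofReal (1/(n+1))) (by simp only [ne_eq, ENNReal.ofReal_eq_zero, not_le]; positivity)
    refine lt_of_le_of_lt (measure_mono ?_) h2
    intro x hx
    simp only [Set.mem_setOf_eq] at hx ⊢
    rw [← enorm_eq_nnnorm, Real.enorm_eq_ofReal_abs]
    exact ENNReal.ofReal_le_ofReal hx
  set m : ℕ → X → ℝ := fun n x => min |f' x| (n + 1) with hm
  have hm_nonneg : ∀ n x, 0 ≤ m n x := fun n x => le_min (abs_nonneg _) (by positivity)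
  have hm_pos : ∀ n x, x ∈ E n → 0 < m n x := by
    intro n x hx
    have : (0:ℝ) < 1 / (n+1) := by positivity
    exact lt_min (lt_of_lt_of_le this hx) (by positivity)
  set ψ : ℕ → X → ℝ := fun n => (E n).indicator
      (fun x => (if 0 ≤ f' x then (1:ℝ) else -1) * m n x ^ (r - 1)) with hψ
  have hψm : ∀ n, Measurable (ψ n) := by
    intro n
    refine Measurable.indicator (Measurable.mul ?_ ?_) (hEm n)
    · exact Measurable.ite (measurableSet_le measurable_const hf'm)
        measurable_const measurable_const
    · exact (hf'm.abs.min measurable_const).pow measurable_const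
  have hψ_abs : ∀ n x, x ∈ E n → |ψ n x| = m n x ^ (r - 1) := by
    intro n x hx
    simp only [hψ, Set.indicator_of_mem hx, abs_mul]
    rw [abs_of_nonneg (Real.rpow_nonneg (hm_nonneg n x) _)]
    split <;> simp
  have hψ_bdd : ∀ n x, ‖ψ n x‖ ≤ ‖(E n).indicator (fun _ => ((n:ℝ)+1) ^ (r-1)) x‖ := by
    intro n x
    by_cases hx : x ∈ E n
    · rw [Real.norm_eq_abs, hψ_abs n x hx, Set.indicator_of_mem hx, Real.norm_eq_abs,
        abs_of_nonneg (Real.rpow_nonneg (by positivity) _)]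
      exact Real.rpow_le_rpow (hm_nonneg n x) (min_le_right _ _) (by linarith)
    · simp [hψ, Set.indicator_of_notMem hx]
  have hψLp : ∀ (p : ℝ≥0∞) (n : ℕ), MemLp (ψ n) p μ := by
    intro p n
    exact MemLp.of_le (memLp_indicator_const p (hEm n) _ (Or.inr (hEfin n).ne))
      (hψm n).aestronglyMeasurable (Filter.Eventually.of_forall (hψ_bdd n))
  set G : ℕ → X → ℝ≥0∞ := fun n => (E n).indicator
      (fun x => ENNReal.ofReal (m n x) ^ r) with hG
  set A : ℕ → ℝ≥0∞ := fun n => ∫⁻ x, G n x ∂μ with hA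
  have hfψ_eq : ∀ n x, x ∈ E n → f' x * ψ n x = |f' x| * m n x ^ (r-1) := by
    intro n x hx
    simp only [hψ, Set.indicator_of_mem hx, ← mul_assoc]
    congr 1
    split
    · rw [mul_one, abs_of_nonneg (by assumption)]
    · rw [mul_neg_one, abs_of_neg (by linarith [not_le.mp (by assumption)])]
  have hfψ_nonneg : ∀ n x, 0 ≤ f' x * ψ n x := by
    intro n x
    by_cases hx : x ∈ E n
    · rw [hfψ_eq n x hx]
      exact mul_nonneg (abs_nonneg _) (Real.rpow_nonneg (hm_nonneg n x) _)
    · simp [hψ, Set.indicator_of_notMem hx]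
  have hint_f'ψ : ∀ n, Integrable (fun x => f' x * ψ n x) μ :=
    fun n => memLp2_integrable_mul hf'2 (hψLp 2 n)
  have key1 : ∀ n, A n ≤ ENNReal.ofReal (∫ x, f' x * ψ n x ∂μ) := by
    intro n
    rw [ofReal_integral_eq_lintegral_ofReal (hint_f'ψ n)
      (Filter.Eventually.of_forall (hfψ_nonneg n))]
    refine lintegral_mono fun x => ?_
    by_cases hx : x ∈ E n
    · rw [hG]
      simp only [Set.indicator_of_mem hx]
      rw [ENNReal.ofReal_rpow_of_nonneg (hm_nonneg n x) hr0.le]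
      apply ENNReal.ofReal_le_ofReal
      rw [hfψ_eq n x hx]
      have hpos := hm_pos n x hx
      calc m n x ^ r = m n x ^ (1 + (r-1)) := by norm_num
        _ = m n x ^ (1:ℝ) * m n x ^ (r-1) := Real.rpow_add hpos 1 (r-1)
        _ = m n x * m n x ^ (r-1) := by rw [Real.rpow_one]
        _ ≤ |f' x| * m n x ^ (r-1) := by
            exact mul_le_mul_of_nonneg_right (min_le_left _ _)
              (Real.rpow_nonneg (hm_nonneg n x) _)
    · simp [hG, Set.indicator_of_notMem hx]
  have hsa : (ENNReal.ofReal s) ≠ 0 := by simp [ENNReal.ofReal_eq_zero, hs0.not_ge]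
  have key2 : ∀ n, eLpNorm (ψ n) (ENNReal.ofReal s) μ = A n ^ (1/s) := by
    intro n
    rw [eLpNorm_eq_lintegral_rpow_enorm_toReal hsa ENNReal.ofReal_ne_top,
      ENNReal.toReal_ofReal hs0.le, hA]
    congr 1
    refine lintegral_congr fun x => ?_
    by_cases hx : x ∈ E n
    · rw [Real.enorm_eq_ofReal_abs, hψ_abs n x hx,
        ENNReal.ofReal_rpow_of_nonneg (Real.rpow_nonneg (hm_nonneg n x) _) hs0.le,
        ← Real.rpow_mul (hm_nonneg n x), hrs_mul, hG]
      simp only [Set.indicator_of_mem hx]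
      rw [ENNReal.ofReal_rpow_of_nonneg (hm_nonneg n x) hr0.le]
    · simp [hψ, hG, Set.indicator_of_notMem hx, ENNReal.zero_rpow_of_pos hs0]
  have key3 : ∀ n, A n ≠ ∞ := by
    intro n
    have hle : A n ≤ ENNReal.ofReal ((n:ℝ)+1) ^ r * μ (E n) := by
      rw [hA, ← lintegral_indicator_const (hEm n)]
      refine lintegral_mono fun x => ?_
      by_cases hx : x ∈ E n
      · rw [hG]
        simp only [Set.indicator_of_mem hx]
        exact ENNReal.rpow_le_rpow
          (ENNReal.ofReal_le_ofReal (min_le_right _ _)) hr0.le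
      · simp [hG, Set.indicator_of_notMem hx]
    exact (hle.trans_lt (ENNReal.mul_lt_top
      (ENNReal.rpow_lt_top_of_nonneg hr0.le ENNReal.ofReal_ne_top) (hEfin n))).ne
  have key4 : ∀ n, A n ^ (1/r) ≤ B := by
    intro n
    have hb : A n ≤ B * A n ^ (1/s) := by
      calc A n ≤ ENNReal.ofReal (∫ x, f' x * ψ n x ∂μ) := key1 n
        _ = ENNReal.ofReal (∫ x, f x * ψ n x ∂μ) := by
            congr 1
            refine integral_congr_ae ?_
            filter_upwards [hff'] with x hx
            rw [hx]
        _ ≤ B * eLpNorm (ψ n) (ENNReal.ofReal s) μ :=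
            hbound _ (hψLp 2 n) (hψLp _ n)
        _ = B * A n ^ (1/s) := by rw [key2 n]
    by_cases hA0 : A n = 0
    · rw [hA0, ENNReal.zero_rpow_of_pos (by positivity)]
      exact zero_le
    · have h1 : A n = A n ^ ((1:ℝ)/r) * A n ^ ((1:ℝ)/s) := by
        rw [← ENNReal.rpow_add _ _ hA0 (key3 n), hrs, ENNReal.rpow_one]
      have hApow_ne0 : A n ^ ((1:ℝ)/s) ≠ 0 := by
        simp only [ne_eq, ENNReal.rpow_eq_zero_iff, not_or]
        constructor
        · rintro ⟨h, -⟩; exact hA0 h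
        · rintro ⟨h, -⟩; exact key3 n h
      have hApow_top : A n ^ ((1:ℝ)/s) ≠ ∞ :=
        ENNReal.rpow_ne_top_of_nonneg (by positivity) (key3 n)
      nth_rewrite 1 [h1] at hb
      exact (ENNReal.mul_le_mul_iff_left hApow_ne0 hApow_top).mp hb
  have hGm : ∀ n, Measurable (G n) := by
    intro n
    exact (((hf'm.abs.min measurable_const).ennreal_ofReal).pow measurable_const).indicator (hEm n)
  have hGmono : Monotone G := by
    intro n k hnk x
    by_cases hx : x ∈ E n
    · have hxk : x ∈ E k := by
        refine le_trans (le_trans ?_ hx : (1:ℝ)/(k+1) ≤ |f' x|) le_rfl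
        apply one_div_le_one_div_of_le (by positivity)
        exact_mod_cast by exact_mod_cast add_le_add_left (Nat.cast_le.mpr hnk) 1
      rw [hG]
      simp only [Set.indicator_of_mem hx, Set.indicator_of_mem hxk]
      refine ENNReal.rpow_le_rpow (ENNReal.ofReal_le_ofReal ?_) hr0.le
      exact min_le_min le_rfl (by exact_mod_cast add_le_add_left (Nat.cast_le.mpr hnk) 1)
    · simp [hG, Set.indicator_of_notMem hx]
  have hGsup : ∀ x, (⨆ n, G n x) = (‖f' x‖₊ : ℝ≥0∞) ^ r := by
    intro x
    rw [← enorm_eq_nnnorm, Real.enorm_eq_ofReal_abs]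
    apply le_antisymm
    · refine iSup_le fun n => ?_
      by_cases hx : x ∈ E n
      · rw [hG]
        simp only [Set.indicator_of_mem hx]
        exact ENNReal.rpow_le_rpow (ENNReal.ofReal_le_ofReal (min_le_left _ _)) hr0.le
      · simp [hG, Set.indicator_of_notMem hx]
    · by_cases h0 : |f' x| = 0
      · simp [h0, ENNReal.zero_rpow_of_pos hr0]
      · have hpos : 0 < |f' x| := lt_of_le_of_ne (abs_nonneg _) (Ne.symm h0)
        obtain ⟨n, hn⟩ := exists_nat_ge (max (1/|f' x|) |f' x|)
        have hx : x ∈ E n := by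
          simp only [hE, Set.mem_setOf_eq]
          rw [div_le_iff₀ (by positivity)]
          have h1 : 1/|f' x| ≤ n + 1 := le_trans (le_trans (le_max_left _ _) hn) (by linarith)
          rw [div_le_iff₀ hpos] at h1
          linarith
        have hmx : m n x = |f' x| :=
          min_eq_left (le_trans (le_trans (le_max_right _ _) hn) (by linarith))
        have : (ENNReal.ofReal |f' x|) ^ r = G n x := by
          rw [hG]
          simp only [Set.indicator_of_mem hx, hmx]
        rw [this]
        exact le_iSup (fun k => G k x) n
  have hra : (ENNReal.ofReal r) ≠ 0 := by simp [ENNReal.ofReal_eq_zero, hr0.not_ge]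
  rw [eLpNorm_congr_ae hff', eLpNorm_eq_lintegral_rpow_enorm_toReal hra ENNReal.ofReal_ne_top,
    ENNReal.toReal_ofReal hr0.le]
  have hlin : ∫⁻ x, (‖f' x‖₊ : ℝ≥0∞) ^ r ∂μ = ⨆ n, A n := by
    rw [← lintegral_iSup hGm hGmono]
    exact lintegral_congr fun x => (hGsup x).symm
  simp_rw [enorm_eq_nnnorm]
  rw [hlin]
  have hsup : (⨆ n, A n) ≤ B ^ r := by
    refine iSup_le fun n => ?_
    have h5 := ENNReal.rpow_le_rpow (key4 n) hr0.le
    rwa [← ENNReal.rpow_mul, one_div_mul_cancel hr0.ne', ENNReal.rpow_one] at h5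
  calc (⨆ n, A n) ^ (1/r) ≤ (B ^ r) ^ (1/r) := ENNReal.rpow_le_rpow hsup (by positivity)
    _ = B := by rw [← ENNReal.rpow_mul, mul_one_div, div_self hr0.ne', ENNReal.rpow_one]

/-- **Lemma (difference of weighted and unweighted projections, part (iv)).**
Let `Pw` and `P` be the weighted projections in `L₂(μ)` onto a closed subspace `L`
relative to the weights `w` and `1`, and `M_w` multiplication by `w`. For a conjugate pair
`r⁻¹ + s⁻¹ = 1`, if `P` is bounded on `L_s(μ)` with norm at most `Cs`, then
`‖P M_w g‖_r ≤ Cs · ‖Pw g‖_r · (2 + ‖w‖_∞)` for all `g ∈ L₂(μ)`. -/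
theorem difference_of_projections_iv
    {X : Type*} [MeasurableSpace X] (μ : Measure X) [SigmaFinite μ]
    (w : X → ℝ) (hwm : Measurable w)
    (hw : ∃ c C : ℝ, 0 < c ∧ ∀ x, c ≤ w x ∧ w x ≤ C)
    (L : Submodule ℝ (X → ℝ)) (hL : ∀ l ∈ L, MemLp l 2 μ)
    (Pw P : (X → ℝ) → (X → ℝ))
    (hPwL : ∀ g, MemLp g 2 μ → Pw g ∈ L)
    (hPworth : ∀ g, MemLp g 2 μ → ∀ l ∈ L, ∫ x, (g x - Pw g x) * l x * w x ∂μ = 0)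
    (hPL : ∀ g, MemLp g 2 μ → P g ∈ L)
    (hPorth : ∀ g, MemLp g 2 μ → ∀ l ∈ L, ∫ x, (g x - P g x) * l x ∂μ = 0)
    (r s : ℝ) (hr : 1 < r) (hrs : 1 / r + 1 / s = 1)
    (Cs : ℝ≥0∞)
    (hPnorm : ∀ h, MemLp h (ENNReal.ofReal s) μ →
      eLpNorm (P h) (ENNReal.ofReal s) μ ≤ Cs * eLpNorm h (ENNReal.ofReal s) μ)
    (g : X → ℝ) (hg : MemLp g 2 μ) :
    eLpNorm (P (fun y => w y * g y)) (ENNReal.ofReal r) μ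
      ≤ Cs * eLpNorm (Pw g) (ENNReal.ofReal r) μ * (2 + eLpNorm w ⊤ μ) := by
  obtain ⟨c, C, hc, hwc⟩ := hw
  have hconj : r.HolderConjugate s := Real.holderConjugate_iff.mpr ⟨hr, by simpa [one_div] using hrs⟩
  -- multiplication by `w` preserves `L²`
  have hwb : ∀ (u : X → ℝ), MemLp u 2 μ → MemLp (fun y => w y * u y) 2 μ := by
    intro u hu
    refine MemLp.of_le (hu.const_mul (max C 1)) (hwm.aestronglyMeasurable.mul hu.1)
      (Filter.Eventually.of_forall fun x => ?_)
    have h1 : |w x| ≤ max C 1 := by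
      rw [abs_of_nonneg (hc.le.trans (hwc x).1)]
      exact le_max_of_le_left (hwc x).2
    rw [Real.norm_eq_abs, Real.norm_eq_abs, abs_mul, abs_mul]
    exact mul_le_mul_of_nonneg_right (h1.trans (le_abs_self _)) (abs_nonneg _)
  have hwg2 : MemLp (fun y => w y * g y) 2 μ := hwb g hg
  have hPwg2 : MemLp (Pw g) 2 μ := hL _ (hPwL g hg)
  set h : X → ℝ := fun y => w y * Pw g y with hdef
  have hh2 : MemLp h 2 μ := hwb _ hPwg2
  set F := P (fun y => w y * g y) with hFdef
  have hFL : F ∈ L := hPL _ hwg2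
  have hF2 : MemLp F 2 μ := hL _ hFL
  have main : eLpNorm F (ENNReal.ofReal r) μ
      ≤ Cs * eLpNorm h (ENNReal.ofReal r) μ := by
    refine aux_dual hr hrs hF2 _ ?_
    intro φ hφ2 hφs
    have hPφL : P φ ∈ L := hPL φ hφ2
    have hPφ2 : MemLp (P φ) 2 μ := hL _ hPφL
    -- step 1 : ∫ F φ = ∫ F (P φ)
    have e1 : ∫ x, F x * φ x ∂μ = ∫ x, F x * P φ x ∂μ := by
      have h0 := hPorth φ hφ2 F hFL
      have hrw : (fun x => (φ x - P φ x) * F x)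
          = fun x => φ x * F x - P φ x * F x := funext fun x => by ring
      rw [hrw, integral_sub (memLp2_integrable_mul hφ2 hF2)
        (memLp2_integrable_mul hPφ2 hF2)] at h0
      have h2 := sub_eq_zero.mp h0
      calc ∫ x, F x * φ x ∂μ = ∫ x, φ x * F x ∂μ := by
            exact integral_congr_ae (Filter.Eventually.of_forall fun x => mul_comm _ _)
        _ = ∫ x, P φ x * F x ∂μ := h2
        _ = ∫ x, F x * P φ x ∂μ :=
            integral_congr_ae (Filter.Eventually.of_forall fun x => mul_comm _ _)
    -- step 2 : ∫ (w g) (P φ) = ∫ F (P φ)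
    have e2 : ∫ x, w x * g x * P φ x ∂μ = ∫ x, F x * P φ x ∂μ := by
      have h0 := hPorth _ hwg2 (P φ) hPφL
      have hrw : (fun x => (w x * g x - F x) * P φ x)
          = fun x => w x * g x * P φ x - F x * P φ x := funext fun x => by ring
      rw [hrw, integral_sub (memLp2_integrable_mul hwg2 hPφ2)
        (memLp2_integrable_mul hF2 hPφ2)] at h0
      exact sub_eq_zero.mp h0
    -- step 3 : ∫ (w g) (P φ) = ∫ h (P φ)
    have e3 : ∫ x, w x * g x * P φ x ∂μ = ∫ x, h x * P φ x ∂μ := by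
      have h0 := hPworth g hg (P φ) hPφL
      have hrw : (fun x => (g x - Pw g x) * P φ x * w x)
          = fun x => w x * g x * P φ x - h x * P φ x := funext fun x => by
            simp only [hdef]; ring
      rw [hrw, integral_sub (memLp2_integrable_mul hwg2 hPφ2)
        (memLp2_integrable_mul hh2 hPφ2)] at h0
      exact sub_eq_zero.mp h0
    have e4 : ∫ x, F x * φ x ∂μ = ∫ x, h x * P φ x ∂μ := by
      rw [e1, ← e2, e3]
    calc ENNReal.ofReal (∫ x, F x * φ x ∂μ)
        = ENNReal.ofReal (∫ x, h x * P φ x ∂μ) := by rw [e4]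
      _ ≤ eLpNorm h (ENNReal.ofReal r) μ * eLpNorm (P φ) (ENNReal.ofReal s) μ :=
          ofReal_integral_mul_le hconj hh2 hPφ2
      _ ≤ eLpNorm h (ENNReal.ofReal r) μ * (Cs * eLpNorm φ (ENNReal.ofReal s) μ) :=
          mul_le_mul_right (hPnorm φ hφs) _
      _ = Cs * eLpNorm h (ENNReal.ofReal r) μ * eLpNorm φ (ENNReal.ofReal s) μ := by
          ring
  have hwtop : eLpNorm h (ENNReal.ofReal r) μ
      ≤ eLpNorm w ⊤ μ * eLpNorm (Pw g) (ENNReal.ofReal r) μ := by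
    simpa using eLpNorm_le_eLpNorm_top_mul_eLpNorm (ENNReal.ofReal r) w hPwg2.1
      (fun a b => a * b) 1
      (Filter.Eventually.of_forall fun x => le_of_eq (by rw [one_mul, nnnorm_mul]))
  calc eLpNorm F (ENNReal.ofReal r) μ ≤ Cs * eLpNorm h (ENNReal.ofReal r) μ := main
    _ ≤ Cs * (eLpNorm w ⊤ μ * eLpNorm (Pw g) (ENNReal.ofReal r) μ) :=
        mul_le_mul_right hwtop _
    _ = Cs * eLpNorm (Pw g) (ENNReal.ofReal r) μ * eLpNorm w ⊤ μ := by ring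
    _ ≤ Cs * eLpNorm (Pw g) (ENNReal.ofReal r) μ * (2 + eLpNorm w ⊤ μ) :=
        mul_le_mul_right le_add_self _
end

section
/- Let X_1,…,X_n be i.i.d. with law P on a measurable space (X,A), let m ≤ n, and let f, g: X^m → ℝ be symmetric measurable functions in L_2(P^m) that are degenerate relative to P. Then E[U_n f] = 0 and E[(U_n f)(U_n g)] = (1/binom(n,m)) · E[f(X_1,…,X_m) g(X_1,…,X_m)]; in particular Var(U_n f) = (1/binom(n,m)) · E[f(X_1,…,X_m)²]. -/
open MeasureTheory

/-- The `U`-statistic of order `m` of a sample of size `n`. -/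
noncomputable def Ustat {X : Type*} (n m : ℕ) (f : (Fin m → X) → ℝ)
    (x : Fin n → X) : ℝ :=
  (((n - m).factorial : ℝ) / (n.factorial : ℝ)) *
    ∑ ι : Fin m ↪ Fin n, f (fun i => x (ι i))

section auxU

variable {X : Type*} [MeasurableSpace X]

lemma auxU_measurePreserving (P : Measure X) [IsProbabilityMeasure P] {m n : ℕ}
    (ι : Fin m ↪ Fin n) :
    MeasurePreserving (fun x : Fin n → X => fun i => x (ι i))
      (Measure.pi fun _ : Fin n => P) (Measure.pi fun _ : Fin m => P) := by
  classical
  have hmeas : Measurable fun x : Fin n → X => fun i => x (ι i) :=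
    measurable_pi_lambda _ fun i => measurable_pi_apply _
  refine ⟨hmeas, ?_⟩
  have key : (Measure.pi fun _ : Fin m => P)
      = Measure.map (fun x : Fin n → X => fun i => x (ι i)) (Measure.pi fun _ : Fin n => P) := by
    refine Measure.pi_eq fun s hs => ?_
    set s' : Fin n → Set X := fun j => if h : ∃ i, ι i = j then s h.choose else Set.univ
      with hs'def
    have hs' : ∀ i, s' (ι i) = s i := by
      intro i
      have h : ∃ i', ι i' = ι i := ⟨i, rfl⟩
      have hc : h.choose = i := ι.injective h.choose_spec
      simp only [hs'def, dif_pos h, hc]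
    have hpre : (fun x : Fin n → X => fun i => x (ι i)) ⁻¹' Set.pi Set.univ s
        = Set.pi Set.univ s' := by
      ext x
      simp only [Set.mem_preimage, Set.mem_pi, Set.mem_univ, true_implies]
      constructor
      · intro h j
        by_cases hj : ∃ i, ι i = j
        · have := h hj.choose
          rw [hj.choose_spec] at this
          simpa only [hs'def, dif_pos hj] using this
        · simp [hs'def, dif_neg hj]
      · intro h i
        have := h (ι i)
        rwa [hs'] at this
    rw [Measure.map_apply hmeas (MeasurableSet.univ_pi hs), hpre, Measure.pi_pi]
    rw [← Finset.prod_subset (Finset.subset_univ (Finset.univ.map ι))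
      (by intro j _ hj
          have hj' : ¬ ∃ i, ι i = j := by simpa using hj
          simp [hs'def, dif_neg hj'])]
    rw [Finset.prod_map]
    simp only [Function.Embedding.coeFn_mk, hs']
  exact key.symm

lemma auxU_integral_zero (P : Measure X) [IsProbabilityMeasure P] {k : ℕ} (j : Fin (k + 1))
    (F : (Fin (k + 1) → X) → ℝ)
    (hF : Integrable F (Measure.pi fun _ : Fin (k + 1) => P))
    (hdeg : ∀ᵐ x ∂(Measure.pi fun _ : Fin (k + 1) => P),
      ∫ y, F (Function.update x j y) ∂P = 0) :
    ∫ x, F x ∂(Measure.pi fun _ : Fin (k + 1) => P) = 0 := by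
  set μk : Measure (Fin k → X) := Measure.pi fun _ => P with hμk
  set μ : Measure (Fin (k + 1) → X) := Measure.pi fun _ => P with hμ
  set e := MeasurableEquiv.piFinSuccAbove (fun _ : Fin (k + 1) => X) j with he
  have hmp : MeasurePreserving e μ (P.prod μk) :=
    measurePreserving_piFinSuccAbove (fun _ => P) j
  have hsymm : ∀ p : X × (Fin k → X), e.symm p = j.insertNth p.1 p.2 := fun p => rfl
  have h1 : ∫ x, F x ∂μ = ∫ p, F (e.symm p) ∂(P.prod μk) :=
    ((MeasurePreserving.symm e hmp).integral_comp e.symm.measurableEmbedding F).symm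
  have hFint : Integrable (fun p => F (e.symm p)) (P.prod μk) :=
    ((MeasurePreserving.symm e hmp).integrable_comp hF.aestronglyMeasurable).mpr hF
  rw [h1, integral_prod_symm _ hFint]
  have h2 : ∀ᵐ p ∂(P.prod μk), ∫ y, F (Function.update (e.symm p) j y) ∂P = 0 := by
    refine ae_of_ae_map (p := fun x => ∫ y, F (Function.update x j y) ∂P = 0)
      e.symm.measurable.aemeasurable ?_
    rwa [(MeasurePreserving.symm e hmp).map_eq]
  have h3 : ∀ᵐ p : X × (Fin k → X) ∂(P.prod μk),
      ∫ y, F (e.symm (y, p.2)) ∂P = 0 := by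
    filter_upwards [h2] with p hp
    have : ∀ y, Function.update (e.symm p) j y = e.symm (y, p.2) := by
      intro y
      rw [hsymm, hsymm]
      exact Fin.update_insertNth (α := fun _ => X) j p.1 y p.2
    simpa only [this] using hp
  have h4 : ∀ᵐ z ∂μk, ∫ y, F (e.symm (y, z)) ∂P = 0 := by
    have hae := Measure.ae_ae_of_ae_prod h3
    have hne : (ae P).NeBot := ae_neBot.2 (IsProbabilityMeasure.ne_zero P)
    obtain ⟨y, hy⟩ := hae.exists
    exact hy
  calc ∫ z, ∫ y, F (e.symm (y, z)) ∂P ∂μk = ∫ z, (0 : ℝ) ∂μk := integral_congr_ae h4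
    _ = 0 := integral_zero _ _

lemma auxU_exists_perm {m n : ℕ} (ι κ : Fin m ↪ Fin n) (h : Set.range ι = Set.range κ) :
    ∃ σ : Equiv.Perm (Fin m), ∀ i, ι (σ i) = κ i := by
  refine ⟨(Equiv.ofInjective κ κ.injective).trans
    ((Equiv.setCongr h.symm).trans (Equiv.ofInjective ι ι.injective).symm), fun i => ?_⟩
  simp only [Equiv.trans_apply, Equiv.setCongr_apply]
  exact Equiv.apply_ofInjective_symm ι.injective _

lemma auxU_card {m n : ℕ} {ι : Fin m ↪ Fin n}
    [DecidablePred fun κ : Fin m ↪ Fin n => Set.range κ = Set.range ι] :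
    (Finset.univ.filter fun κ : Fin m ↪ Fin n => Set.range κ = Set.range ι).card
      = m.factorial := by
  classical
  have himg : (Finset.univ.filter fun κ : Fin m ↪ Fin n => Set.range κ = Set.range ι)
      = Finset.univ.image (fun σ : Equiv.Perm (Fin m) => σ.toEmbedding.trans ι) := by
    ext κ
    simp only [Finset.mem_filter, Finset.mem_univ, true_and, Finset.mem_image]
    constructor
    · intro h
      obtain ⟨σ, hσ⟩ := auxU_exists_perm ι κ h.symm
      exact ⟨σ, Function.Embedding.ext hσ⟩
    · rintro ⟨σ, rfl⟩
      have : ⇑(σ.toEmbedding.trans ι) = ⇑ι ∘ ⇑σ := rfl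
      rw [this, Set.range_comp, Equiv.range_eq_univ, Set.image_univ]
  rw [himg, Finset.card_image_of_injective _ (fun σ σ' hσ => Equiv.ext fun i => by
    have := DFunLike.congr_fun hσ i
    simp only [Function.Embedding.trans_apply, Equiv.coe_toEmbedding] at this
    exact ι.injective this)]
  simp [Fintype.card_perm]

lemma auxU_memLp (P : Measure X) [IsProbabilityMeasure P] {m n : ℕ} (ι : Fin m ↪ Fin n)
    {f : (Fin m → X) → ℝ} (hf2 : MemLp f 2 (Measure.pi fun _ : Fin m => P)) :
    MemLp (fun x : Fin n → X => f (fun i => x (ι i))) 2 (Measure.pi fun _ : Fin n => P) :=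
  hf2.comp_measurePreserving (auxU_measurePreserving P ι)

lemma auxU_int_mul (P : Measure X) [IsProbabilityMeasure P] {m n : ℕ}
    (ι κ : Fin m ↪ Fin n) {f g : (Fin m → X) → ℝ}
    (hf2 : MemLp f 2 (Measure.pi fun _ : Fin m => P))
    (hg2 : MemLp g 2 (Measure.pi fun _ : Fin m => P)) :
    Integrable (fun x : Fin n → X => f (fun i => x (ι i)) * g (fun i => x (κ i)))
      (Measure.pi fun _ : Fin n => P) := by
  have h1 := auxU_memLp P ι hf2
  have h2 := auxU_memLp P κ hg2
  have h3 := h2.smul (φ := fun x : Fin n → X => f (fun i => x (ι i))) (r := 1)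
    h1 (hpqr := ⟨by simp only [inv_one]; rw [ENNReal.inv_two_add_inv_two]⟩)
  rw [← memLp_one_iff_integrable]
  exact h3

lemma auxU_integral_eq (P : Measure X) [IsProbabilityMeasure P] {m n : ℕ}
    (ι κ : Fin m ↪ Fin n) (h : Set.range ι = Set.range κ)
    {f g : (Fin m → X) → ℝ} (hfm : Measurable f) (hgm : Measurable g)
    (hgsym : ∀ σ : Equiv.Perm (Fin m), ∀ x, g (x ∘ σ) = g x) :
    ∫ x, f (fun i => x (ι i)) * g (fun i => x (κ i)) ∂(Measure.pi fun _ : Fin n => P)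
      = ∫ y, f y * g y ∂(Measure.pi fun _ : Fin m => P) := by
  obtain ⟨σ, hσ⟩ := auxU_exists_perm ι κ h
  have hpt : ∀ x : Fin n → X, g (fun i => x (κ i)) = g (fun i => x (ι i)) := by
    intro x
    rw [← hgsym σ (fun i => x (ι i))]
    congr 1
    funext i
    simp [Function.comp, hσ i]
  simp_rw [hpt]
  have hmp := auxU_measurePreserving P ι
  rw [← hmp.map_eq, integral_map hmp.measurable.aemeasurable
    (by rw [hmp.map_eq]; exact (hfm.mul hgm).aestronglyMeasurable)]

lemma auxU_integral_ne (P : Measure X) [IsProbabilityMeasure P] {m n' : ℕ}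
    (ι κ : Fin m ↪ Fin (n' + 1)) (j : Fin (n' + 1)) (i₀ : Fin m)
    (hji : ι i₀ = j) (hjκ : j ∉ Set.range κ)
    {f g : (Fin m → X) → ℝ}
    (hf2 : MemLp f 2 (Measure.pi fun _ : Fin m => P))
    (hg2 : MemLp g 2 (Measure.pi fun _ : Fin m => P))
    (hfdeg : ∀ᵐ x ∂(Measure.pi fun _ : Fin m => P),
      ∫ y, f (Function.update x i₀ y) ∂P = 0) :
    ∫ x, f (fun i => x (ι i)) * g (fun i => x (κ i))
      ∂(Measure.pi fun _ : Fin (n' + 1) => P) = 0 := by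
  refine auxU_integral_zero P j _ (auxU_int_mul P ι κ hf2 hg2) ?_
  have hmp := auxU_measurePreserving P ι
  have hae : ∀ᵐ x ∂(Measure.pi fun _ : Fin (n' + 1) => P),
      ∫ y, f (Function.update (fun i => x (ι i)) i₀ y) ∂P = 0 := by
    refine ae_of_ae_map (p := fun z => ∫ y, f (Function.update z i₀ y) ∂P = 0)
      hmp.measurable.aemeasurable ?_
    rwa [hmp.map_eq]
  filter_upwards [hae] with x hx
  have h1 : ∀ y : X, (fun i => Function.update x j y (ι i))
      = Function.update (fun i => x (ι i)) i₀ y := by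
    intro y; funext i
    by_cases hi : i = i₀
    · subst hi; rw [hji]; simp
    · have hne : ι i ≠ j := by
        rw [← hji]; exact fun hc => hi (ι.injective hc)
      simp [Function.update_of_ne hne, Function.update_of_ne hi]
  have h2 : ∀ y : X, (fun i => Function.update x j y (κ i)) = fun i => x (κ i) := by
    intro y; funext i
    have hne : κ i ≠ j := fun hc => hjκ ⟨i, hc⟩
    simp [Function.update_of_ne hne]
  calc ∫ y, f (fun i => Function.update x j y (ι i)) * g (fun i => Function.update x j y (κ i)) ∂P
      = ∫ y, f (Function.update (fun i => x (ι i)) i₀ y) * g (fun i => x (κ i)) ∂P := by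
        simp_rw [h1, h2]
    _ = (∫ y, f (Function.update (fun i => x (ι i)) i₀ y) ∂P) * g (fun i => x (κ i)) :=
        integral_mul_const _ _
    _ = 0 := by rw [hx, zero_mul]

end auxU

lemma auxU_scalar (m n : ℕ) (hmn : m ≤ n) (V : ℝ) :
    ((n - m).factorial : ℝ) / (n.factorial : ℝ) * (((n - m).factorial : ℝ) / (n.factorial : ℝ)) *
      ((n.descFactorial m : ℝ) * ((m.factorial : ℝ) * V))
      = 1 / (n.choose m : ℝ) * V := by
  have h1 : ((n - m).factorial : ℝ) * (n.descFactorial m : ℝ) = (n.factorial : ℝ) := by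
    exact_mod_cast congrArg (Nat.cast : ℕ → ℝ) (Nat.factorial_mul_descFactorial hmn)
  have h2 : ((n.choose m : ℝ)) * (m.factorial : ℝ) * ((n - m).factorial : ℝ)
      = (n.factorial : ℝ) := by
    exact_mod_cast congrArg (Nat.cast : ℕ → ℝ) (Nat.choose_mul_factorial_mul_factorial hmn)
  have hb : (n.factorial : ℝ) ≠ 0 := Nat.cast_ne_zero.mpr (Nat.factorial_ne_zero _)
  have hc0 : ((n.choose m : ℝ)) ≠ 0 := Nat.cast_ne_zero.mpr (Nat.choose_pos hmn).ne'
  field_simp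
  linear_combination (((n - m).factorial : ℝ) * (m.factorial : ℝ) * V * (n.choose m : ℝ)) * h1
    + ((n.factorial : ℝ) * V) * h2
/-- **Lemma (moments of degenerate U-statistics of equal order).**
If `f, g : X^m → ℝ` are symmetric, `P`-degenerate and square integrable, then
`E[U_n f] = 0`, `E[(U_n f)(U_n g)] = binom(n,m)⁻¹ E[f·g]`, and in particular
`Var(U_n f) = binom(n,m)⁻¹ E[f²]`. -/
theorem degenerate_ustat_moments
    {X : Type*} [MeasurableSpace X] (P : Measure X) [IsProbabilityMeasure P]
    (m n : ℕ) (hm : 1 ≤ m) (hmn : m ≤ n)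
    (f g : (Fin m → X) → ℝ) (hfm : Measurable f) (hgm : Measurable g)
    (hf2 : MemLp f 2 (Measure.pi fun _ : Fin m => P))
    (hg2 : MemLp g 2 (Measure.pi fun _ : Fin m => P))
    (hfsym : ∀ σ : Equiv.Perm (Fin m), ∀ x, f (x ∘ σ) = f x)
    (hgsym : ∀ σ : Equiv.Perm (Fin m), ∀ x, g (x ∘ σ) = g x)
    (hfdeg : ∀ i : Fin m, ∀ᵐ x ∂(Measure.pi fun _ : Fin m => P),
      ∫ y, f (Function.update x i y) ∂P = 0)
    (hgdeg : ∀ i : Fin m, ∀ᵐ x ∂(Measure.pi fun _ : Fin m => P),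
      ∫ y, g (Function.update x i y) ∂P = 0) :
    (∫ x : Fin n → X, Ustat n m f x ∂(Measure.pi fun _ => P)) = 0 ∧
    (∫ x : Fin n → X, Ustat n m f x * Ustat n m g x ∂(Measure.pi fun _ => P))
        = (1 / (n.choose m : ℝ)) *
            ∫ y : Fin m → X, f y * g y ∂(Measure.pi fun _ : Fin m => P) ∧
    (∫ x : Fin n → X, (Ustat n m f x) ^ 2 ∂(Measure.pi fun _ => P))
        - (∫ x : Fin n → X, Ustat n m f x ∂(Measure.pi fun _ => P)) ^ 2
        = (1 / (n.choose m : ℝ)) *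
            ∫ y : Fin m → X, (f y) ^ 2 ∂(Measure.pi fun _ : Fin m => P) := by
  classical
  obtain ⟨m', rfl⟩ : ∃ m', m = m' + 1 := ⟨m - 1, by omega⟩
  obtain ⟨n', rfl⟩ : ∃ n', n = n' + 1 := ⟨n - 1, by omega⟩
  set μn : Measure (Fin (n' + 1) → X) := Measure.pi fun _ => P with hμn
  set μm : Measure (Fin (m' + 1) → X) := Measure.pi fun _ => P with hμm
  set c : ℝ := (((n' + 1) - (m' + 1)).factorial : ℝ) / (((n' + 1)).factorial : ℝ) with hc
  -- mean zero
  have hmean : (∫ x : Fin (n' + 1) → X, Ustat (n' + 1) (m' + 1) f x ∂μn) = 0 := by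
    have hzero : ∀ ι : Fin (m' + 1) ↪ Fin (n' + 1),
        ∫ x : Fin (n' + 1) → X, f (fun i => x (ι i)) ∂μn = 0 := by
      intro ι
      have hmp := auxU_measurePreserving P (X := X) ι
      have h0 : ∫ y, f y ∂μm = 0 :=
        auxU_integral_zero P 0 f (hf2.integrable one_le_two) (hfdeg 0)
      have hcomp : (∫ x : Fin (n' + 1) → X, f (fun i => x (ι i)) ∂μn)
          = ∫ y, f y ∂μm := by
        rw [hμm, hμn, ← hmp.map_eq, integral_map hmp.measurable.aemeasurable
          (by rw [hmp.map_eq]; exact hf2.aestronglyMeasurable)]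
      rw [hcomp]
      exact h0
    have hint : ∀ ι : Fin (m' + 1) ↪ Fin (n' + 1),
        Integrable (fun x : Fin (n' + 1) → X => f fun i => x (ι i)) μn :=
      fun ι => (auxU_memLp P ι hf2).integrable one_le_two
    simp only [Ustat, ← hc]
    rw [integral_const_mul, integral_finset_sum _ (fun ι _ => hint ι)]
    simp [hzero]
  -- second moments, for arbitrary symmetric square-integrable measurable g
  have h2nd : ∀ g : (Fin (m' + 1) → X) → ℝ, Measurable g → MemLp g 2 μm →
      (∀ σ : Equiv.Perm (Fin (m' + 1)), ∀ x, g (x ∘ σ) = g x) →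
      (∫ x : Fin (n' + 1) → X,
          Ustat (n' + 1) (m' + 1) f x * Ustat (n' + 1) (m' + 1) g x ∂μn)
        = (1 / ((n' + 1).choose (m' + 1) : ℝ)) * ∫ y, f y * g y ∂μm := by
    intro g hgm hg2 hgsym
    set V : ℝ := ∫ y, f y * g y ∂μm with hV
    have hkey : ∀ ι κ : Fin (m' + 1) ↪ Fin (n' + 1),
        ∫ x, f (fun i => x (ι i)) * g (fun i => x (κ i)) ∂μn
          = if Set.range κ = Set.range ι then V else 0 := by
      intro ι κ
      by_cases h : Set.range κ = Set.range ι
      · rw [if_pos h]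
        exact auxU_integral_eq P ι κ h.symm hfm hgm hgsym
      · rw [if_neg h]
        have hrange : ∀ ρ : Fin (m' + 1) ↪ Fin (n' + 1),
            (↑(Finset.univ.image ⇑ρ) : Set (Fin (n' + 1))) = Set.range ⇑ρ := by
          intro ρ; simp [Finset.coe_image]
        have hns : ¬ Finset.univ.image ⇑ι ⊆ Finset.univ.image ⇑κ := by
          intro hsub
          apply h
          have hcard : (Finset.univ.image ⇑κ).card ≤ (Finset.univ.image ⇑ι).card := by
            rw [Finset.card_image_of_injective _ ι.injective,
              Finset.card_image_of_injective _ κ.injective]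
          have heq := Finset.eq_of_subset_of_card_le hsub hcard
          rw [← hrange ι, ← hrange κ, heq]
        obtain ⟨j, hj1, hj2⟩ := Finset.not_subset.mp hns
        obtain ⟨i₀, _, hi₀⟩ := Finset.mem_image.mp hj1
        have hjκ : j ∉ Set.range ⇑κ := by
          rintro ⟨i, hi⟩
          exact hj2 (Finset.mem_image.mpr ⟨i, Finset.mem_univ i, hi⟩)
        exact auxU_integral_ne P ι κ j i₀ hi₀ hjκ hf2 hg2 (hfdeg i₀)
    have hintmul : ∀ ι κ : Fin (m' + 1) ↪ Fin (n' + 1),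
        Integrable (fun x : Fin (n' + 1) → X =>
          f (fun i => x (ι i)) * g (fun i => x (κ i))) μn :=
      fun ι κ => auxU_int_mul P ι κ hf2 hg2
    have hUU : (∫ x : Fin (n' + 1) → X,
        Ustat (n' + 1) (m' + 1) f x * Ustat (n' + 1) (m' + 1) g x ∂μn)
        = c * c * ∑ ι : Fin (m' + 1) ↪ Fin (n' + 1), ∑ κ : Fin (m' + 1) ↪ Fin (n' + 1),
            ∫ x, f (fun i => x (ι i)) * g (fun i => x (κ i)) ∂μn := by
      simp only [Ustat, ← hc]
      have hx : ∀ x : Fin (n' + 1) → X,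
          (c * ∑ ι : Fin (m' + 1) ↪ Fin (n' + 1), f fun i => x (ι i)) *
            (c * ∑ κ : Fin (m' + 1) ↪ Fin (n' + 1), g fun i => x (κ i))
          = c * c * ∑ ι : Fin (m' + 1) ↪ Fin (n' + 1), ∑ κ : Fin (m' + 1) ↪ Fin (n' + 1),
              (f fun i => x (ι i)) * (g fun i => x (κ i)) := by
        intro x
        calc (c * ∑ ι : Fin (m' + 1) ↪ Fin (n' + 1), f fun i => x (ι i)) *
              (c * ∑ κ : Fin (m' + 1) ↪ Fin (n' + 1), g fun i => x (κ i))
            = c * c * ((∑ ι : Fin (m' + 1) ↪ Fin (n' + 1), f fun i => x (ι i)) *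
              (∑ κ : Fin (m' + 1) ↪ Fin (n' + 1), g fun i => x (κ i))) := by ring
          _ = _ := by rw [Finset.sum_mul_sum]
      simp_rw [hx]
      rw [integral_const_mul, integral_finset_sum _ (fun ι _ =>
        integrable_finset_sum _ (fun κ _ => hintmul ι κ))]
      congr 1
      exact Finset.sum_congr rfl fun ι _ => integral_finset_sum _ (fun κ _ => hintmul ι κ)
    rw [hUU]
    simp only [hkey]
    have hinner : ∀ ι : Fin (m' + 1) ↪ Fin (n' + 1),
        (∑ κ : Fin (m' + 1) ↪ Fin (n' + 1),
          if Set.range ⇑κ = Set.range ⇑ι then V else 0)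
        = ((m' + 1).factorial : ℝ) * V := by
      intro ι
      rw [Finset.sum_ite, Finset.sum_const, Finset.sum_const_zero, add_zero,
        auxU_card, nsmul_eq_mul]
    simp_rw [hinner]
    rw [Finset.sum_const, Finset.card_univ, Fintype.card_embedding_eq, nsmul_eq_mul]
    simp only [Fintype.card_fin]
    rw [hc]
    exact auxU_scalar (m' + 1) (n' + 1) hmn V
  refine ⟨hmean, h2nd g hgm hg2 hgsym, ?_⟩
  rw [hmean]
  simp_rw [pow_two]
  rw [h2nd f hfm hf2 hfsym]
  ring
end

section
/- Let X_1,…,X_n be i.i.d. with law P on a measurable space (X,A), let m ≠ m' with m, m' ≤ n, and let f: X^m → ℝ and g: X^{m'} → ℝ be symmetric measurable functions in L_2(P^m) and L_2(P^{m'}) respectively, each degenerate relative to P. Then E[(U_n f)(U_n g)] = 0; that is, degenerate U-statistics of distinct orders are uncorrelated. -/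
open MeasureTheory

section aux

variable {X : Type*} [MeasurableSpace X] (P : Measure X) [IsProbabilityMeasure P]

/-- Composing with an injection between finite index types preserves the product of
copies of a probability measure. -/
lemma measurePreserving_comp_emb {K L : Type*} [Fintype K] [Fintype L] (ι : K ↪ L) :
    MeasurePreserving (fun x : L → X => fun i => x (ι i))
      (Measure.pi fun _ : L => P) (Measure.pi fun _ : K => P) := by
  classical
  have hmeas : Measurable (fun x : L → X => fun i => x (ι i)) :=
    measurable_pi_lambda _ fun i => measurable_pi_apply _
  refine ⟨hmeas, (Measure.pi_eq fun s hs => ?_).symm⟩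
  rw [Measure.map_apply hmeas (MeasurableSet.univ_pi hs)]
  set t : L → Set X := fun j => if h : ∃ i, ι i = j then s h.choose else Set.univ with ht
  have htι : ∀ i : K, t (ι i) = s i := by
    intro i
    have he : ∃ i', ι i' = ι i := ⟨i, rfl⟩
    have hch : he.choose = i := ι.injective he.choose_spec
    simp only [ht, dif_pos he, hch]
  have hpre : (fun x : L → X => fun i => x (ι i)) ⁻¹' Set.pi Set.univ s
      = Set.pi Set.univ t := by
    ext x
    simp only [Set.mem_preimage, Set.mem_univ_pi]
    constructor
    · intro hx j
      by_cases h : ∃ i, ι i = j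
      · obtain ⟨i, rfl⟩ := h
        rw [htι]; exact hx i
      · simp only [ht, dif_neg h]; trivial
    · intro hx i
      have := hx (ι i)
      rwa [htι] at this
  rw [hpre, Measure.pi_pi]
  have h1 : ∀ j ∈ Finset.univ, j ∉ Finset.univ.image ι → P (t j) = 1 := by
    intro j _ hj
    have h : ¬ ∃ i, ι i = j := by
      rintro ⟨i, rfl⟩; exact hj (Finset.mem_image_of_mem _ (Finset.mem_univ i))
    simp [ht, dif_neg h]
  calc ∏ j, P (t j) = ∏ j ∈ Finset.univ.image ι, P (t j) :=
        (Finset.prod_subset (Finset.subset_univ _) h1).symm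
    _ = ∏ i, P (t (ι i)) := Finset.prod_image (fun a _ b _ h => ι.injective h)
    _ = ∏ i, P (s i) := by simp [htι]

/-- Updating one coordinate of an i.i.d. sample by an independent copy preserves
the product measure. -/
lemma measurePreserving_update_pi {n : ℕ} (j : Fin n) :
    MeasurePreserving (fun p : X × (Fin n → X) => Function.update p.2 j p.1)
      (P.prod (Measure.pi fun _ : Fin n => P)) (Measure.pi fun _ : Fin n => P) := by
  classical
  have hmeas : Measurable (fun p : X × (Fin n → X) => Function.update p.2 j p.1) :=
    measurable_update'.comp measurable_swap
  refine ⟨hmeas, (Measure.pi_eq fun s hs => ?_).symm⟩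
  rw [Measure.map_apply hmeas (MeasurableSet.univ_pi hs)]
  have hpre : (fun p : X × (Fin n → X) => Function.update p.2 j p.1) ⁻¹' Set.pi Set.univ s
      = s j ×ˢ Set.pi Set.univ (Function.update s j Set.univ) := by
    ext ⟨y, x⟩
    simp only [Set.mem_preimage, Set.mem_univ_pi, Set.mem_prod]
    constructor
    · intro h
      refine ⟨by simpa using h j, fun i => ?_⟩
      rcases eq_or_ne i j with rfl | hij
      · simp
      · simpa [Function.update_of_ne hij] using h i
    · rintro ⟨hy, hx⟩ i
      rcases eq_or_ne i j with rfl | hij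
      · simpa using hy
      · have := hx i
        simpa [Function.update_of_ne hij] using this
  rw [hpre, Measure.prod_prod, Measure.pi_pi]
  have hupd : ∀ i, P (Function.update s j Set.univ i)
      = Function.update (fun i => P (s i)) j 1 i := by
    intro i
    rcases eq_or_ne i j with rfl | hij
    · simp
    · simp [Function.update_of_ne hij]
  rw [Finset.prod_congr rfl (fun i _ => hupd i),
    Finset.prod_update_of_mem (Finset.mem_univ j), one_mul,
    Finset.sdiff_singleton_eq_erase,
    ← Finset.mul_prod_erase Finset.univ _ (Finset.mem_univ j)]

/-- A single term in the expansion of the product of two degenerate U-statistics of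
distinct orders has zero expectation. -/
lemma integral_term_zero {n m m' : ℕ} (hlt : m' < m)
    (f : (Fin m → X) → ℝ) (g : (Fin m' → X) → ℝ)
    (hf2 : MemLp f 2 (Measure.pi fun _ : Fin m => P))
    (hg2 : MemLp g 2 (Measure.pi fun _ : Fin m' => P))
    (hfdeg : ∀ i : Fin m, ∀ᵐ x ∂(Measure.pi fun _ : Fin m => P),
      ∫ y, f (Function.update x i y) ∂P = 0)
    (ι : Fin m ↪ Fin n) (κ : Fin m' ↪ Fin n) :
    ∫ x : Fin n → X, f (fun i => x (ι i)) * g (fun i => x (κ i))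
      ∂(Measure.pi fun _ : Fin n => P) = 0 := by
  classical
  -- find a coordinate used by `f` but not by `g`
  have hex : ∃ i : Fin m, ∀ k : Fin m', κ k ≠ ι i := by
    by_contra h
    push_neg at h
    have hsub : (Finset.univ.image ι) ⊆ (Finset.univ.image κ) := by
      intro j hj
      obtain ⟨i, _, rfl⟩ := Finset.mem_image.mp hj
      obtain ⟨k, hk⟩ := h i
      exact Finset.mem_image.mpr ⟨k, Finset.mem_univ k, hk⟩
    have hcard := Finset.card_le_card hsub
    rw [Finset.card_image_of_injective _ ι.injective,
      Finset.card_image_of_injective _ κ.injective, Finset.card_univ, Finset.card_univ,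
      Fintype.card_fin, Fintype.card_fin] at hcard
    omega
  obtain ⟨i, hi⟩ := hex
  set μn := (Measure.pi fun _ : Fin n => P) with hμn
  set F : (Fin n → X) → ℝ := fun x => f (fun k => x (ι k)) with hF
  set G : (Fin n → X) → ℝ := fun x => g (fun k => x (κ k)) with hG
  show ∫ x : Fin n → X, F x * G x ∂μn = 0
  have hmpι := measurePreserving_comp_emb P ι
  have hmpκ := measurePreserving_comp_emb P κ
  rw [← hμn] at hmpι hmpκ
  have hF2 : MemLp F 2 μn := hf2.comp_measurePreserving hmpι
  have hG2 : MemLp G 2 μn := hg2.comp_measurePreserving hmpκ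
  have hInt : Integrable (fun x => F x * G x) μn := by
    have h1 : MemLp (F • G) 1 μn := hG2.smul hF2 (hpqr := ⟨by norm_num [ENNReal.inv_two_add_inv_two]⟩)
    have h2 := memLp_one_iff_integrable.mp h1
    simpa [Pi.smul_apply', smul_eq_mul, Pi.mul_def] using h2
  have hmpu := measurePreserving_update_pi P (ι i)
  rw [← hμn] at hmpu
  have hIntu : Integrable
      (fun p : X × (Fin n → X) =>
        F (Function.update p.2 (ι i) p.1) * G (Function.update p.2 (ι i) p.1))
      (P.prod μn) := by
    have := (memLp_one_iff_integrable.mpr hInt).comp_measurePreserving hmpu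
    exact memLp_one_iff_integrable.mp this
  have step1 : ∫ x, F x * G x ∂μn
      = ∫ p : X × (Fin n → X),
          F (Function.update p.2 (ι i) p.1) * G (Function.update p.2 (ι i) p.1)
          ∂(P.prod μn) := by
    conv_lhs => rw [← hmpu.map_eq]
    rw [integral_map hmpu.measurable.aemeasurable
      (hmpu.map_eq.symm ▸ hInt.aestronglyMeasurable)]
  have step2 : ∫ p : X × (Fin n → X),
        F (Function.update p.2 (ι i) p.1) * G (Function.update p.2 (ι i) p.1)
        ∂(P.prod μn)
      = ∫ x, ∫ y, F (Function.update x (ι i) y) * G (Function.update x (ι i) y) ∂P ∂μn :=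
    integral_prod_symm _ hIntu
  have key : ∀ᵐ x ∂μn,
      ∫ y, F (Function.update x (ι i) y) * G (Function.update x (ι i) y) ∂P = 0 := by
    have hae := hmpι.quasiMeasurePreserving.ae (hfdeg i)
    filter_upwards [hae] with x hx
    have hGconst : ∀ y, G (Function.update x (ι i) y) = G x := by
      intro y
      simp only [hG]
      congr 1
      funext k
      exact Function.update_of_ne (hi k) y x
    have hFup : ∀ y, F (Function.update x (ι i) y)
        = f (Function.update (fun k => x (ι k)) i y) := by
      intro y
      simp only [hF]
      congr 1
      funext k
      rcases eq_or_ne k i with rfl | hk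
      · simp
      · rw [Function.update_of_ne hk, Function.update_of_ne (fun h => hk (ι.injective h))]
    simp_rw [hGconst, hFup]
    rw [integral_mul_const, hx, zero_mul]
  rw [step1, step2, integral_congr_ae key, integral_zero]

end aux

/-- **Lemma (degenerate U-statistics of distinct orders are uncorrelated).**
If `f : X^m → ℝ` and `g : X^{m'} → ℝ` with `m ≠ m'` are symmetric, `P`-degenerate and
square integrable, then `E[(U_n f)(U_n g)] = 0`. -/
theorem degenerate_ustat_distinct_orders_uncorrelated
    {X : Type*} [MeasurableSpace X] (P : Measure X) [IsProbabilityMeasure P]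
    (m m' n : ℕ) (hmm' : m ≠ m') (hmn : m ≤ n) (hm'n : m' ≤ n)
    (f : (Fin m → X) → ℝ) (g : (Fin m' → X) → ℝ)
    (hfm : Measurable f) (hgm : Measurable g)
    (hf2 : MemLp f 2 (Measure.pi fun _ : Fin m => P))
    (hg2 : MemLp g 2 (Measure.pi fun _ : Fin m' => P))
    (hfsym : ∀ σ : Equiv.Perm (Fin m), ∀ x, f (x ∘ σ) = f x)
    (hgsym : ∀ σ : Equiv.Perm (Fin m'), ∀ x, g (x ∘ σ) = g x)
    (hfdeg : ∀ i : Fin m, ∀ᵐ x ∂(Measure.pi fun _ : Fin m => P),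
      ∫ y, f (Function.update x i y) ∂P = 0)
    (hgdeg : ∀ i : Fin m', ∀ᵐ x ∂(Measure.pi fun _ : Fin m' => P),
      ∫ y, g (Function.update x i y) ∂P = 0) :
    ∫ x : Fin n → X, Ustat n m f x * Ustat n m' g x ∂(Measure.pi fun _ => P) = 0 := by
  classical
  set μn := (Measure.pi fun _ : Fin n => P) with hμn
  have hterm : ∀ (ι : Fin m ↪ Fin n) (κ : Fin m' ↪ Fin n),
      ∫ x : Fin n → X, f (fun i => x (ι i)) * g (fun i => x (κ i)) ∂μn = 0 := by
    intro ι κ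
    rcases lt_or_gt_of_ne hmm' with h | h
    · have h0 := integral_term_zero P h g f hg2 hf2 hgdeg κ ι
      calc ∫ x : Fin n → X, f (fun i => x (ι i)) * g (fun i => x (κ i)) ∂μn
          = ∫ x : Fin n → X, g (fun i => x (κ i)) * f (fun i => x (ι i)) ∂μn := by
            simp_rw [mul_comm]
        _ = 0 := h0
    · exact integral_term_zero P h f g hf2 hg2 hfdeg ι κ
  have hint : ∀ (ι : Fin m ↪ Fin n) (κ : Fin m' ↪ Fin n),
      Integrable (fun x : Fin n → X => f (fun i => x (ι i)) * g (fun i => x (κ i))) μn := by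
    intro ι κ
    have hF2 := hf2.comp_measurePreserving (measurePreserving_comp_emb P ι)
    have hG2 := hg2.comp_measurePreserving (measurePreserving_comp_emb P κ)
    have h1 := hG2.smul hF2 (r := 1) (hpqr := ⟨by norm_num [ENNReal.inv_two_add_inv_two]⟩)
    have h2 := memLp_one_iff_integrable.mp h1
    simpa [Function.comp, Pi.smul_apply', smul_eq_mul, Pi.mul_def] using h2
  simp only [Ustat]
  simp_rw [mul_mul_mul_comm, Finset.sum_mul_sum]
  rw [integral_const_mul]
  rw [integral_finset_sum _ (fun ι _ => integrable_finset_sum _ (fun κ _ => hint ι κ))]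
  rw [Finset.sum_eq_zero fun ι _ => ?_, mul_zero]
  rw [integral_finset_sum _ (fun κ _ => hint ι κ)]
  exact Finset.sum_eq_zero fun κ _ => hterm ι κ
end

section
/- In the missing data model, let â and b̂ be bounded measurable functions on Z. Then the first-order bias identity (double robustness) holds: E[ A·â(Z)·(Y − b̂(Z)) + b̂(Z) ] − E[ b(Z) ] = − E[ ((â − a)(b̂ − b)/a)(Z) ] = − ∫ (â − a)(b̂ − b) · g dν. -/
open MeasureTheory

private lemma abs_mul_le' {x y cx cy : ℝ} (hx : |x| ≤ cx) (hy : |y| ≤ cy) :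
    |x * y| ≤ cx * cy := by
  rw [abs_mul]
  exact mul_le_mul hx hy (abs_nonneg _) ((abs_nonneg x).trans hx)

private lemma int_of_bdd {Ω : Type*} [MeasurableSpace Ω] {P : Measure Ω} [IsFiniteMeasure P]
    {h : Ω → ℝ} (hm : Measurable h) {C : ℝ} (hb : ∀ ω, |h ω| ≤ C) : Integrable h P :=
  ⟨hm.aestronglyMeasurable,
    HasFiniteIntegral.of_bounded (C := C) (ae_of_all _ fun ω => by
      simpa [Real.norm_eq_abs] using hb ω)⟩

private lemma pullout_integral {Ω : Type*} {m m0 : MeasurableSpace Ω} (hm : m ≤ m0)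
    (P : Measure Ω) [IsProbabilityMeasure P]
    (h g k : Ω → ℝ) (hh : StronglyMeasurable[m] h)
    (hhg : Integrable (fun ω => h ω * g ω) P) (hg : Integrable g P)
    (hcond : P[g|m] =ᵐ[P] k) :
    ∫ ω, h ω * g ω ∂P = ∫ ω, h ω * k ω ∂P := by
  have h1 : P[fun ω => h ω * g ω|m] =ᵐ[P] fun ω => h ω * k ω := by
    have h2 := condExp_mul_of_stronglyMeasurable_left hh (show Integrable (h * g) P from hhg) hg
    filter_upwards [h2, hcond] with ω h2 h3
    simpa [h3, Pi.mul_def] using h2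
  calc ∫ ω, h ω * g ω ∂P = ∫ ω, (P[fun ω => h ω * g ω|m]) ω ∂P :=
        (integral_condExp hm).symm
    _ = ∫ ω, h ω * k ω ∂P := integral_congr_ae h1

/-- **Lemma (first-order bias / double robustness in the missing data model).**
In the missing data model — `Z` has density `f` w.r.t. `ν`, `A, Y ∈ {0,1}` are
conditionally independent given `Z` with `P(A=1|Z) = 1/a(Z)` and `P(Y=1|Z) = b(Z)` —
for bounded measurable `ahat, bhat`:
`E[A·ahat(Z)(Y − bhat(Z)) + bhat(Z)] − E[b(Z)]
  = −E[((ahat−a)(bhat−b)/a)(Z)] = −∫ (ahat−a)(bhat−b) g dν` with `g = f/a`. -/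
theorem missing_data_double_robustness
    {Ω 𝒵 : Type*} [MeasurableSpace Ω] [MeasurableSpace 𝒵]
    (P : Measure Ω) [IsProbabilityMeasure P]
    (ν : Measure 𝒵) [SigmaFinite ν]
    (Z : Ω → 𝒵) (A Y : Ω → ℝ)
    (hZ : Measurable Z) (hAm : Measurable A) (hYm : Measurable Y)
    (hA01 : ∀ ω, A ω = 0 ∨ A ω = 1) (hY01 : ∀ ω, Y ω = 0 ∨ Y ω = 1)
    (a b f : 𝒵 → ℝ) (ham : Measurable a) (hbm : Measurable b) (hfm : Measurable f)
    (hf0 : ∀ z, 0 ≤ f z)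
    (ε : ℝ) (hε : 0 < ε)
    (ha : ∀ z, ε ≤ 1 / a z ∧ 1 / a z ≤ 1 - ε)
    (hb : ∀ z, ε ≤ b z ∧ b z ≤ 1 - ε)
    (hlaw : Measure.map Z P = ν.withDensity fun z => ENNReal.ofReal (f z))
    (hcondA : P[A|MeasurableSpace.comap Z inferInstance]
        =ᵐ[P] fun ω => 1 / a (Z ω))
    (hcondY : P[Y|MeasurableSpace.comap Z inferInstance]
        =ᵐ[P] fun ω => b (Z ω))
    (hcondAY : P[fun ω => A ω * Y ω|MeasurableSpace.comap Z inferInstance]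
        =ᵐ[P] fun ω => b (Z ω) / a (Z ω))
    (ahat bhat : 𝒵 → ℝ) (hahatm : Measurable ahat) (hbhatm : Measurable bhat)
    (M : ℝ) (hahatb : ∀ z, |ahat z| ≤ M) (hbhatb : ∀ z, |bhat z| ≤ M) :
    ((∫ ω, (A ω * ahat (Z ω) * (Y ω - bhat (Z ω)) + bhat (Z ω)) ∂P)
        - ∫ ω, b (Z ω) ∂P
      = - ∫ ω, (ahat (Z ω) - a (Z ω)) * (bhat (Z ω) - b (Z ω)) / a (Z ω) ∂P)
    ∧ ((∫ ω, (A ω * ahat (Z ω) * (Y ω - bhat (Z ω)) + bhat (Z ω)) ∂P)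
        - ∫ ω, b (Z ω) ∂P
      = - ∫ z, (ahat z - a z) * (bhat z - b z) * (f z / a z) ∂ν) := by
  -- basic positivity / bounds
  have hapos : ∀ z, 0 < a z := by
    intro z
    by_contra hle
    push_neg at hle
    have : 1 / a z ≤ 0 := one_div_nonpos.mpr hle
    linarith [(ha z).1]
  have hane : ∀ z, a z ≠ 0 := fun z => (hapos z).ne'
  have hainv1 : ∀ z, 1 / a z * a z = 1 := fun z => one_div_mul_cancel (hane z)
  have haub : ∀ z, |a z| ≤ 1 / ε := by
    intro z
    rw [abs_of_pos (hapos z), le_div_iff₀ hε]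
    nlinarith [(ha z).1, hainv1 z, hapos z]
  have hbb : ∀ z, |b z| ≤ 1 := by
    intro z
    rw [abs_le]
    constructor <;> nlinarith [(hb z).1, (hb z).2]
  have hinvab : ∀ z, |1 / a z| ≤ 1 := by
    intro z
    rw [abs_le]
    constructor <;> nlinarith [(ha z).1, (ha z).2]
  have hAb : ∀ ω, |A ω| ≤ 1 := by
    intro ω; rcases hA01 ω with h | h <;> simp [h]
  have hYb : ∀ ω, |Y ω| ≤ 1 := by
    intro ω; rcases hY01 ω with h | h <;> simp [h]
  have hbab : ∀ z, |b z / a z| ≤ 1 := by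
    intro z
    rw [div_eq_mul_one_div]
    simpa using abs_mul_le' (hbb z) (hinvab z)
  have hM0 : 0 ≤ M := by
    have : Nonempty Ω := P.nonempty_of_neZero
    exact (abs_nonneg _).trans (hahatb (Z (Classical.arbitrary Ω)))
  -- measurability setup
  have hm : MeasurableSpace.comap Z inferInstance ≤ ‹MeasurableSpace Ω› :=
    measurable_iff_comap_le.mp hZ
  have hZm : Measurable[MeasurableSpace.comap Z inferInstance] Z :=
    measurable_iff_comap_le.mpr le_rfl
  have sm1 : StronglyMeasurable[MeasurableSpace.comap Z inferInstance] fun ω => ahat (Z ω) :=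
    (Measurable.stronglyMeasurable (hahatm.comp hZm))
  have sm2 : StronglyMeasurable[MeasurableSpace.comap Z inferInstance]
      fun ω => ahat (Z ω) * bhat (Z ω) :=
    (Measurable.stronglyMeasurable ((hahatm.comp hZm).mul (hbhatm.comp hZm)))
  -- integrability of all pieces
  have i1 : Integrable (fun ω => ahat (Z ω) * (A ω * Y ω)) P :=
    int_of_bdd ((hahatm.comp hZ).mul (hAm.mul hYm))
      (fun ω => abs_mul_le' (hahatb _) (abs_mul_le' (hAb ω) (hYb ω)))
  have iAY : Integrable (fun ω => A ω * Y ω) P :=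
    int_of_bdd (hAm.mul hYm) (fun ω => by simpa using abs_mul_le' (hAb ω) (hYb ω))
  have i2 : Integrable (fun ω => ahat (Z ω) * bhat (Z ω) * A ω) P :=
    int_of_bdd (((hahatm.comp hZ).mul (hbhatm.comp hZ)).mul hAm)
      (fun ω => by simpa using abs_mul_le' (abs_mul_le' (hahatb _) (hbhatb _)) (hAb ω))
  have iA : Integrable A P := int_of_bdd hAm hAb
  have i3 : Integrable (fun ω => bhat (Z ω)) P :=
    int_of_bdd (hbhatm.comp hZ) (fun ω => hbhatb _)
  have i4 : Integrable (fun ω => ahat (Z ω) * (b (Z ω) / a (Z ω))) P :=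
    int_of_bdd ((hahatm.comp hZ).mul ((hbm.comp hZ).div (ham.comp hZ)))
      (fun ω => by simpa using abs_mul_le' (hahatb _) (hbab _))
  have i5 : Integrable (fun ω => ahat (Z ω) * bhat (Z ω) * (1 / a (Z ω))) P :=
    int_of_bdd (((hahatm.comp hZ).mul (hbhatm.comp hZ)).mul
        ((measurable_const.div (ham.comp hZ))))
      (fun ω => by simpa using abs_mul_le' (abs_mul_le' (hahatb _) (hbhatb _)) (hinvab _))
  have i6 : Integrable (fun ω => b (Z ω)) P :=
    int_of_bdd (hbm.comp hZ) (fun ω => hbb _)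
  have hqmeas : Measurable fun z => (ahat z - a z) * (bhat z - b z) / a z :=
    ((hahatm.sub ham).mul (hbhatm.sub hbm)).div ham
  have hqb : ∀ z, |(ahat z - a z) * (bhat z - b z) / a z| ≤ (M + 1 / ε) * (M + 1) * 1 := by
    intro z
    rw [div_eq_mul_one_div]
    refine abs_mul_le' (abs_mul_le' ?_ ?_) (hinvab z)
    · exact (abs_sub _ _).trans (add_le_add (hahatb z) (haub z))
    · exact (abs_sub _ _).trans (add_le_add (hbhatb z) (hbb z))
  have iq : Integrable (fun ω => (ahat (Z ω) - a (Z ω)) * (bhat (Z ω) - b (Z ω)) / a (Z ω)) P :=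
    int_of_bdd (hqmeas.comp hZ) (fun ω => hqb _)
  -- pull-out via conditional expectations
  have e1 : ∫ ω, ahat (Z ω) * (A ω * Y ω) ∂P
      = ∫ ω, ahat (Z ω) * (b (Z ω) / a (Z ω)) ∂P :=
    pullout_integral hm P _ _ _ sm1 i1 iAY hcondAY
  have e2 : ∫ ω, ahat (Z ω) * bhat (Z ω) * A ω ∂P
      = ∫ ω, ahat (Z ω) * bhat (Z ω) * (1 / a (Z ω)) ∂P :=
    pullout_integral hm P _ _ _ sm2 i2 iA hcondA
  -- expand the main integral
  have expand : (∫ ω, (A ω * ahat (Z ω) * (Y ω - bhat (Z ω)) + bhat (Z ω)) ∂P)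
      = (∫ ω, ahat (Z ω) * (A ω * Y ω) ∂P)
        - (∫ ω, ahat (Z ω) * bhat (Z ω) * A ω ∂P)
        + ∫ ω, bhat (Z ω) ∂P := by
    calc ∫ ω, (A ω * ahat (Z ω) * (Y ω - bhat (Z ω)) + bhat (Z ω)) ∂P
        = ∫ ω, (ahat (Z ω) * (A ω * Y ω) - ahat (Z ω) * bhat (Z ω) * A ω) + bhat (Z ω) ∂P := by
          congr 1; funext ω; ring
      _ = (∫ ω, ahat (Z ω) * (A ω * Y ω) - ahat (Z ω) * bhat (Z ω) * A ω ∂P)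
            + ∫ ω, bhat (Z ω) ∂P := integral_add (i1.sub i2) i3
      _ = (∫ ω, ahat (Z ω) * (A ω * Y ω) ∂P)
            - (∫ ω, ahat (Z ω) * bhat (Z ω) * A ω ∂P) + ∫ ω, bhat (Z ω) ∂P := by
          rw [integral_sub i1 i2]
  have key : (∫ ω, (A ω * ahat (Z ω) * (Y ω - bhat (Z ω)) + bhat (Z ω)) ∂P)
      - ∫ ω, b (Z ω) ∂P
      = - ∫ ω, (ahat (Z ω) - a (Z ω)) * (bhat (Z ω) - b (Z ω)) / a (Z ω) ∂P := by
    rw [expand, e1, e2, ← integral_neg]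
    calc (∫ ω, ahat (Z ω) * (b (Z ω) / a (Z ω)) ∂P)
          - (∫ ω, ahat (Z ω) * bhat (Z ω) * (1 / a (Z ω)) ∂P)
          + (∫ ω, bhat (Z ω) ∂P) - ∫ ω, b (Z ω) ∂P
        = (∫ ω, ahat (Z ω) * (b (Z ω) / a (Z ω))
              - ahat (Z ω) * bhat (Z ω) * (1 / a (Z ω)) ∂P)
            + (∫ ω, bhat (Z ω) ∂P) - ∫ ω, b (Z ω) ∂P := by
          rw [integral_sub i4 i5]
      _ = (∫ ω, (ahat (Z ω) * (b (Z ω) / a (Z ω))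
              - ahat (Z ω) * bhat (Z ω) * (1 / a (Z ω))) + bhat (Z ω) ∂P)
            - ∫ ω, b (Z ω) ∂P := by
          congr 1
          exact (integral_add (i4.sub i5) i3).symm
      _ = ∫ ω, ((ahat (Z ω) * (b (Z ω) / a (Z ω))
              - ahat (Z ω) * bhat (Z ω) * (1 / a (Z ω))) + bhat (Z ω)) - b (Z ω) ∂P :=
          (integral_sub ((i4.sub i5).add i3) i6).symm
      _ = ∫ ω, -((ahat (Z ω) - a (Z ω)) * (bhat (Z ω) - b (Z ω)) / a (Z ω)) ∂P := by
          congr 1; funext ω; field_simp [hane (Z ω)]; ring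
  refine ⟨key, key.trans ?_⟩
  congr 1
  calc ∫ ω, (ahat (Z ω) - a (Z ω)) * (bhat (Z ω) - b (Z ω)) / a (Z ω) ∂P
      = ∫ z, (ahat z - a z) * (bhat z - b z) / a z ∂(Measure.map Z P) :=
        (integral_map hZ.aemeasurable hqmeas.aestronglyMeasurable).symm
    _ = ∫ z, (ahat z - a z) * (bhat z - b z) / a z
          ∂(ν.withDensity fun z => ((f z).toNNReal : ENNReal)) := by
        rw [hlaw]; rfl
    _ = ∫ z, (f z).toNNReal • ((ahat z - a z) * (bhat z - b z) / a z) ∂ν :=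
        integral_withDensity_eq_integral_smul hfm.real_toNNReal _
    _ = ∫ z, (ahat z - a z) * (bhat z - b z) * (f z / a z) ∂ν := by
        congr 1
        funext z
        rw [NNReal.smul_def, Real.coe_toNNReal _ (hf0 z), smul_eq_mul]
        ring
end
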